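/- arXiv:0906.1754 — 13 statements merged into one kernel-verified Lean document; each statement's English description precedes it below -/
import Mathlib

section
/- Suppose γ₁ and γ₂ both solve the ODE γ'(x) = (γ(x) + γ(x)² − P(x))/(x·γ(x)) on (0,x*], both are negative there, both tend to 0 as x → 0⁺, and both satisfy γᵢ(x) ≥ γ_c⁺(x) := (√(1+4P(x)) − 1)/2 for all x ∈ (0,x*], where P satisfies P(0)=0, P'(0)<0, P concave on [0,x*], and P(x) > −1/4 on [0,x*]. Then γ₁(x*) = γ₂(x*) implies γ₁ = γ₂; moreover if γ₁(x*) ≠ γ₂(x*) then |γ₁(x)−γ₂(x)| ≥ |γ₁(x*)−γ₂(x*)|·(x/x*)·exp(∫ₓ^{x*} |P'(0)|/γ_c⁺(z)² dz), which diverges as x → 0⁺, a contradiction; hence there is at most one solution of the ODE on (0,x*] with limit 0 at x=0. -/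
open Set Filter

/-- uniqueness of the asymptotically free solution. If `γ₁` and `γ₂`
both solve the Dyson–Schwinger ODE on `(0,x*]`, are negative there, tend to `0`
as `x → 0⁺`, and lie above the nullcline `γ_c⁺(x) = (√(1+4P x) − 1)/2`, then
they coincide on `(0,x*]`: there is at most one such solution. -/
theorem qcd_asymptotically_free_unique
    (P : ℝ → ℝ) (xstar : ℝ) (hxstar : 0 < xstar)
    (hP0 : P 0 = 0)
    (hP'0 : deriv P 0 < 0)
    (hconc : ∀ x ∈ Icc (0 : ℝ) xstar, deriv (deriv P) x ≤ 0)
    (hPgt : ∀ x ∈ Icc (0 : ℝ) xstar, -(1 / 4 : ℝ) < P x)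
    (γ₁ γ₂ : ℝ → ℝ)
    (hode₁ : ∀ x ∈ Ioc (0 : ℝ) xstar,
      HasDerivAt γ₁ ((γ₁ x + γ₁ x ^ 2 - P x) / (x * γ₁ x)) x)
    (hode₂ : ∀ x ∈ Ioc (0 : ℝ) xstar,
      HasDerivAt γ₂ ((γ₂ x + γ₂ x ^ 2 - P x) / (x * γ₂ x)) x)
    (hneg₁ : ∀ x ∈ Ioc (0 : ℝ) xstar, γ₁ x < 0)
    (hneg₂ : ∀ x ∈ Ioc (0 : ℝ) xstar, γ₂ x < 0)
    (hlim₁ : Tendsto γ₁ (nhdsWithin 0 (Ioi 0)) (nhds 0))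
    (hlim₂ : Tendsto γ₂ (nhdsWithin 0 (Ioi 0)) (nhds 0))
    (habove₁ : ∀ x ∈ Ioc (0 : ℝ) xstar, (Real.sqrt (1 + 4 * P x) - 1) / 2 ≤ γ₁ x)
    (habove₂ : ∀ x ∈ Ioc (0 : ℝ) xstar, (Real.sqrt (1 + 4 * P x) - 1) / 2 ≤ γ₂ x) :
    EqOn γ₁ γ₂ (Ioc (0 : ℝ) xstar) := by
  set F : ℝ → ℝ := fun t => (γ₁ t - γ₂ t) ^ 2 with hFdef
  have key : ∀ x ∈ Ioc (0:ℝ) xstar,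
      HasDerivAt F
        (2 * (γ₁ x - γ₂ x) ^ 2 * ((γ₁ x * γ₂ x + P x) / (x * (γ₁ x * γ₂ x)))) x ∧
      2 * (γ₁ x - γ₂ x) ^ 2 * ((γ₁ x * γ₂ x + P x) / (x * (γ₁ x * γ₂ x))) ≤ 0 := by
    intro x hx
    have hx0 : 0 < x := hx.1
    have ha : γ₁ x < 0 := hneg₁ x hx
    have hb : γ₂ x < 0 := hneg₂ x hx
    have hxI : x ∈ Icc (0:ℝ) xstar := ⟨hx0.le, hx.2⟩
    have hp4 : (0:ℝ) < 1 + 4 * P x := by have := hPgt x hxI; linarith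
    set s := Real.sqrt (1 + 4 * P x) with hs
    have hs0 : 0 ≤ s := Real.sqrt_nonneg _
    have hs2 : s ^ 2 = 1 + 4 * P x := Real.sq_sqrt hp4.le
    set c := (s - 1) / 2 with hc
    have hca : c ≤ γ₁ x := habove₁ x hx
    have hcb : c ≤ γ₂ x := habove₂ x hx
    have hcneg : c < 0 := lt_of_le_of_lt hca ha
    have hs1 : s < 1 := by
      rw [hc] at hcneg; linarith
    have hss : s ^ 2 ≤ s := by nlinarith
    have hcq : c ^ 2 + c = P x := by
      rw [hc]; linear_combination hs2 / 4
    have hc2p : c ^ 2 + P x ≤ 0 := by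
      have h1 : c ^ 2 = P x - c := by linarith
      rw [h1, hc]; linarith
    have hab : γ₁ x * γ₂ x ≤ c ^ 2 := by
      nlinarith [mul_le_mul (show -γ₁ x ≤ -c by linarith)
        (show -γ₂ x ≤ -c by linarith) (by linarith) (by linarith)]
    have habp : γ₁ x * γ₂ x + P x ≤ 0 := by linarith
    have hden : 0 < x * (γ₁ x * γ₂ x) :=
      mul_pos hx0 (mul_pos_of_neg_of_neg ha hb)
    constructor
    · have h1 := (hode₁ x hx).sub (hode₂ x hx)
      have h2 := h1.pow 2
      convert h2 using 1 <;> try rfl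
      have hxne : x ≠ 0 := ne_of_gt hx0
      have hane : γ₁ x ≠ 0 := ne_of_lt ha
      have hbne : γ₂ x ≠ 0 := ne_of_lt hb
      simp only [Pi.sub_apply]; push_cast; norm_num
      field_simp
      ring
    · exact mul_nonpos_of_nonneg_of_nonpos (by positivity)
        (div_nonpos_of_nonpos_of_nonneg habp hden.le)
  have hcont : ContinuousOn F (Ioc 0 xstar) := fun x hx =>
    ((key x hx).1.continuousAt).continuousWithinAt
  have hdiff : DifferentiableOn ℝ F (interior (Ioc 0 xstar)) := by
    rw [interior_Ioc]
    intro x hx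
    exact ((key x ⟨hx.1, hx.2.le⟩).1.differentiableAt).differentiableWithinAt
  have hanti : AntitoneOn F (Ioc 0 xstar) := by
    apply antitoneOn_of_deriv_nonpos (convex_Ioc _ _) hcont hdiff
    intro x hx
    rw [interior_Ioc] at hx
    have h := key x ⟨hx.1, hx.2.le⟩
    rw [h.1.deriv]
    exact h.2
  have hlim : Tendsto F (nhdsWithin 0 (Ioi 0)) (nhds 0) := by
    have h := (hlim₁.sub hlim₂).pow 2
    simpa using h
  intro y hy
  have hFy : F y ≤ 0 := by
    refine ge_of_tendsto hlim ?_
    filter_upwards [Ioo_mem_nhdsGT_of_mem (show (0:ℝ) ∈ Ico (0:ℝ) y from ⟨le_refl _, hy.1⟩)]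
      with x hx
    exact hanti ⟨hx.1, hx.2.le.trans hy.2⟩ hy hx.2.le
  have h0 : (γ₁ y - γ₂ y) ^ 2 = 0 := le_antisymm hFy (sq_nonneg _)
  have h1 : γ₁ y - γ₂ y = 0 := by
    exact pow_eq_zero_iff (two_ne_zero) |>.mp h0
  linarith
end

section
/- Let γ₁ solve γ'(x) = (γ(x)+γ(x)²−P(x))/(x γ(x)) on an interval with γ₁(x*) = γ₀ and let γ₂ be any C¹ function on the same interval with γ₂ nonvanishing. Define R[γ₂](x) = γ₂'(x) − (γ₂(x)+γ₂(x)²−P(x))/(x γ₂(x)) and K(y,x) = (x/y)·exp(−∫ₓ^y P(z)/(z γ₁(z) γ₂(z)) dz). Then for all x, x₀ in the interval: γ₁(x) − γ₂(x) = (γ₁(x₀) − γ₂(x₀))·K(x₀,x) + ∫ₓ^{x₀} R[γ₂](y)·K(y,x) dy. -/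
open Set intervalIntegral

/-- variation-of-constants identity. If `γ₁` solves the ODE on an
interval `[a,b] ⊂ (0,∞)` and `γ₂` is any nonvanishing `C¹` function there, then
with `R[γ₂](x) = γ₂'(x) − (γ₂+γ₂²−P)/(xγ₂)` and
`K(y,x) = (x/y)·exp(−∫ₓ^y P(z)/(z γ₁ z γ₂ z) dz)`, for all `x, x₀ ∈ [a,b]`:
`γ₁ x − γ₂ x = (γ₁ x₀ − γ₂ x₀)·K(x₀,x) + ∫ₓ^{x₀} R[γ₂](y)·K(y,x) dy`. -/
theorem qcd_variation_of_constants
    (P : ℝ → ℝ) (hPcont : Continuous P)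
    (a b : ℝ) (ha : 0 < a) (hab : a ≤ b)
    (γ₁ γ₂ : ℝ → ℝ)
    (hode₁ : ∀ x ∈ Icc a b,
      HasDerivAt γ₁ ((γ₁ x + γ₁ x ^ 2 - P x) / (x * γ₁ x)) x)
    (hγ₁ne : ∀ x ∈ Icc a b, γ₁ x ≠ 0)
    (hγ₂C1 : ContDiffOn ℝ 1 γ₂ (Icc a b))
    (hγ₂ne : ∀ x ∈ Icc a b, γ₂ x ≠ 0) :
    ∀ x ∈ Icc a b, ∀ x₀ ∈ Icc a b,
      γ₁ x - γ₂ x =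
        (γ₁ x₀ - γ₂ x₀) *
          ((x / x₀) * Real.exp (-(∫ z in x..x₀, P z / (z * γ₁ z * γ₂ z)))) +
        ∫ y in x..x₀,
          (deriv γ₂ y - (γ₂ y + γ₂ y ^ 2 - P y) / (y * γ₂ y)) *
            ((x / y) * Real.exp (-(∫ z in x..y, P z / (z * γ₁ z * γ₂ z)))) := by
  rcases eq_or_lt_of_le hab with rfl | hlt
  · intro x hx x₀ hx₀
    obtain rfl : x = x₀ := le_antisymm (hx.2.trans hx₀.1) (hx₀.2.trans hx.1)
    have hx0 : x ≠ 0 := (ha.trans_le hx.1).ne'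
    simp [div_self hx0]
  intro x hx x₀ hx₀
  have hpos : ∀ t ∈ Icc a b, (0:ℝ) < t := fun t ht => ha.trans_le ht.1
  have hc1 : ContinuousOn γ₁ (Icc a b) := fun t ht =>
    ((hode₁ t ht).continuousAt).continuousWithinAt
  have hc2 : ContinuousOn γ₂ (Icc a b) := hγ₂C1.continuousOn
  set q : ℝ → ℝ := fun z => P z / (z * γ₁ z * γ₂ z) with hq_def
  have hqc : ContinuousOn q (Icc a b) := by
    refine hPcont.continuousOn.div ((continuousOn_id.mul hc1).mul hc2) ?_
    intro t ht
    exact mul_ne_zero (mul_ne_zero (hpos t ht).ne' (hγ₁ne t ht)) (hγ₂ne t ht)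
  set α : ℝ → ℝ := fun z => 1 / z + q z with hα_def
  have h1c : ContinuousOn (fun z => (1:ℝ) / z) (Icc a b) :=
    continuousOn_const.div continuousOn_id fun t ht => (hpos t ht).ne'
  have hαc : ContinuousOn α (Icc a b) := h1c.add hqc
  have hsub : ∀ u ∈ Icc a b, ∀ v ∈ Icc a b, uIcc u v ⊆ Icc a b := fun u hu v hv =>
    uIcc_subset_Icc hu hv
  have hαint : ∀ u ∈ Icc a b, ∀ v ∈ Icc a b, IntervalIntegrable α MeasureTheory.volume u v :=
    fun u hu v hv => (hαc.mono (hsub u hu v hv)).intervalIntegrable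
  set A : ℝ → ℝ := fun t => ∫ z in a..t, α z with hA_def
  have haI : a ∈ Icc a b := left_mem_Icc.2 hab
  have hA' : ∀ t ∈ Icc a b, HasDerivWithinAt A (α t) (Icc a b) t := by
    intro t ht
    haveI : Fact (t ∈ Icc a b) := ⟨ht⟩
    exact intervalIntegral.integral_hasDerivWithinAt_right (hαint a haI t ht)
      (hαc.stronglyMeasurableAtFilter_nhdsWithin measurableSet_Icc t)
      (hαc t ht)
  have hAc : ContinuousOn A (Icc a b) := fun t ht => (hA' t ht).continuousWithinAt
  set μf : ℝ → ℝ := fun t => Real.exp (-A t) with hμ_def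
  have hμpos : ∀ t, 0 < μf t := fun t => Real.exp_pos _
  have hμc : ContinuousOn μf (Icc a b) := Real.continuous_exp.comp_continuousOn hAc.neg
  set D : ℝ → ℝ := derivWithin γ₂ (Icc a b) with hD_def
  set Rt : ℝ → ℝ := fun y => D y - (γ₂ y + γ₂ y ^ 2 - P y) / (y * γ₂ y) with hR_def
  have hRc : ContinuousOn Rt (Icc a b) := by
    refine (hγ₂C1.continuousOn_derivWithin (uniqueDiffOn_Icc hlt) le_rfl).sub ?_
    exact ((hc2.add (hc2.pow 2)).sub hPcont.continuousOn).div
      (continuousOn_id.mul hc2) (fun t ht => mul_ne_zero (hpos t ht).ne' (hγ₂ne t ht))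
  have hRμint : ∀ u ∈ Icc a b, ∀ v ∈ Icc a b,
      IntervalIntegrable (fun y => Rt y * μf y) MeasureTheory.volume u v :=
    fun u hu v hv => ((hRc.mul hμc).mono (hsub u hu v hv)).intervalIntegrable
  set g : ℝ → ℝ := fun t => (γ₁ t - γ₂ t) * μf t + ∫ y in a..t, Rt y * μf y with hg_def
  have hg' : ∀ t ∈ Icc a b, HasDerivWithinAt g 0 (Icc a b) t := by
    intro t ht
    haveI : Fact (t ∈ Icc a b) := ⟨ht⟩
    have h1 : HasDerivWithinAt γ₁ ((γ₁ t + γ₁ t ^ 2 - P t) / (t * γ₁ t)) (Icc a b) t :=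
      (hode₁ t ht).hasDerivWithinAt
    have h2 : HasDerivWithinAt γ₂ (D t) (Icc a b) t :=
      ((hγ₂C1.differentiableOn one_ne_zero) t ht).hasDerivWithinAt
    have hA := hA' t ht
    have hμ' : HasDerivWithinAt μf (Real.exp (-A t) * (-α t)) (Icc a b) t := hA.neg.exp
    have hI : HasDerivWithinAt (fun u => ∫ y in a..u, Rt y * μf y)
        (Rt t * μf t) (Icc a b) t :=
      intervalIntegral.integral_hasDerivWithinAt_right (hRμint a haI t ht)
        ((hRc.mul hμc).stronglyMeasurableAtFilter_nhdsWithin measurableSet_Icc t)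
        ((hRc t ht).mul (hμc t ht))
    have hcomb := ((h1.sub h2).mul hμ').add hI
    have ht0 : t ≠ 0 := (hpos t ht).ne'
    have h10 := hγ₁ne t ht
    have h20 := hγ₂ne t ht
    simp only [hg_def]
    convert hcomb using 1 <;> try rfl
    simp only [hμ_def, hR_def, hα_def, hq_def, Pi.sub_apply]
    field_simp
    ring
  have hgc : ContinuousOn g (Icc a b) := fun t ht => (hg' t ht).continuousWithinAt
  have hconst : ∀ t ∈ Icc a b, g t = g a := by
    refine constant_of_has_deriv_right_zero hgc fun t ht => ?_
    refine (hg' t (Ico_subset_Icc_self ht)).mono_of_mem_nhdsWithin ?_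
    rw [mem_nhdsWithin]
    exact ⟨Iio b, isOpen_Iio, ht.2, fun y hy => ⟨ht.1.trans hy.2, hy.1.le⟩⟩
  have hkey : (γ₁ x - γ₂ x) * μf x
      = (γ₁ x₀ - γ₂ x₀) * μf x₀ + ∫ y in x..x₀, Rt y * μf y := by
    have h1 := hconst x hx
    have h2 := hconst x₀ hx₀
    have h3 : (∫ y in a..x₀, Rt y * μf y) - ∫ y in a..x, Rt y * μf y
        = ∫ y in x..x₀, Rt y * μf y :=
      integral_interval_sub_left (hRμint a haI x₀ hx₀) (hRμint a haI x hx)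
    simp only [hg_def] at h1 h2
    linarith
  have hK : ∀ y ∈ Icc a b,
      (x / y) * Real.exp (-(∫ z in x..y, q z)) = μf y / μf x := by
    intro y hy
    have hx0 := hpos x hx
    have hy0 := hpos y hy
    have hxy : (∫ z in x..y, α z) = A y - A x := by
      simp only [hA_def]
      rw [eq_sub_iff_add_eq, add_comm]
      exact integral_add_adjacent_intervals (hαint a haI x hx) (hαint x hx y hy)
    have hsplit : (∫ z in x..y, α z) = (∫ z in x..y, (1:ℝ) / z) + ∫ z in x..y, q z := by
      rw [← intervalIntegral.integral_add ((h1c.mono (hsub x hx y hy)).intervalIntegrable)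
        ((hqc.mono (hsub x hx y hy)).intervalIntegrable)]
    have h0 : (0:ℝ) ∉ uIcc x y := fun h => lt_irrefl (0:ℝ) (hpos 0 (hsub x hx y hy h))
    have hlog : (∫ z in x..y, (1:ℝ) / z) = Real.log (y / x) := integral_one_div h0
    rw [hlog] at hsplit
    have hQ : (∫ z in x..y, q z) = (A y - A x) - Real.log (y / x) := by
      linarith [hxy, hsplit]
    rw [hQ]
    simp only [hμ_def]
    rw [← Real.exp_sub]
    have e1 : -((A y - A x) - Real.log (y / x)) = (A x - A y) + Real.log (y / x) := by ring
    have e2 : -A y - -A x = A x - A y := by ring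
    rw [e1, e2, Real.exp_add, Real.exp_log (div_pos hy0 hx0)]
    field_simp
  have hμx : μf x ≠ 0 := (hμpos x).ne'
  have hIcongr : (∫ y in x..x₀,
        (deriv γ₂ y - (γ₂ y + γ₂ y ^ 2 - P y) / (y * γ₂ y)) *
          ((x / y) * Real.exp (-(∫ z in x..y, q z))))
      = ∫ y in x..x₀, (Rt y * μf y) / μf x := by
    apply intervalIntegral.integral_congr_ae
    have ha' : ∀ᵐ (y : ℝ), y ≠ a := by
      rw [MeasureTheory.ae_iff]; simpa using Real.volume_singleton
    have hb' : ∀ᵐ (y : ℝ), y ≠ b := by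
      rw [MeasureTheory.ae_iff]; simpa using Real.volume_singleton
    filter_upwards [ha', hb'] with y hya hyb hyI
    have hyIcc : y ∈ Icc a b := hsub x hx x₀ hx₀ (uIoc_subset_uIcc hyI)
    have hyO : y ∈ Ioo a b :=
      ⟨lt_of_le_of_ne hyIcc.1 (Ne.symm hya), lt_of_le_of_ne hyIcc.2 hyb⟩
    have hd : deriv γ₂ y = D y :=
      (derivWithin_of_mem_nhds (Icc_mem_nhds hyO.1 hyO.2)).symm
    rw [hK y hyIcc, hd]
    simp only [hR_def]
    ring
  rw [hK x₀ hx₀, hIcongr, intervalIntegral.integral_div]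
  field_simp
  linear_combination hkey
end

section
/- Under H1 and H2, the unique asymptotically free solution γ₁* of γ' = (γ+γ²−P)/(xγ) on (0,x*] with lim_{x→0⁺} γ₁*(x) = 0 satisfies the two-sided bound (√(1+4P(x)) − 1)/2 ≤ γ₁*(x) ≤ P'(0)·x for all x ∈ (0,x*]; consequently γ₁*(x) = P'(0)x + O(x²) as x → 0. -/
open Set Filter

lemma qcd_key_persist (h h' : ℝ → ℝ) (x0 : ℝ) (hx0 : 0 < x0)
    (hd : ∀ x ∈ Ioc (0:ℝ) x0, HasDerivAt h (h' x) x)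
    (hsign : ∀ x ∈ Ioc (0:ℝ) x0, 0 < h x → h' x < 0)
    (hpos : 0 < h x0) :
    ∀ a ∈ Ioc (0:ℝ) x0, h x0 ≤ h a := by
  intro a ha
  by_contra hcon
  push_neg at hcon
  have hax0 : a < x0 := ha.2.lt_of_ne (by rintro rfl; exact absurd hcon (lt_irrefl _))
  set m : ℝ := (max (h a) 0 + h x0) / 2 with hm
  have hmaxlt : max (h a) 0 < h x0 := max_lt hcon hpos
  have hm0 : 0 < m := by
    have := le_max_right (h a) 0
    rw [hm]; linarith
  have hmlt : m < h x0 := by rw [hm]; linarith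
  have hma : h a < m := by
    have := le_max_left (h a) 0
    rw [hm]; linarith
  have hcont : ContinuousOn h (Icc a x0) := fun x hx =>
    ((hd x ⟨lt_of_lt_of_le ha.1 hx.1, hx.2⟩).continuousAt).continuousWithinAt
  set S : Set ℝ := Icc a x0 ∩ h ⁻¹' Iic m with hS
  have hSc : IsClosed S := hcont.preimage_isClosed_of_isClosed isClosed_Icc isClosed_Iic
  have hScomp : IsCompact S :=
    isCompact_Icc.of_isClosed_subset hSc inter_subset_left
  have hSne : S.Nonempty := ⟨a, ⟨le_refl a, hax0.le⟩, hma.le⟩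
  set x2 := sSup S with hx2
  have hx2S : x2 ∈ S := hScomp.sSup_mem hSne
  have hx2m : h x2 ≤ m := hx2S.2
  have hx2lt : x2 < x0 := hx2S.1.2.lt_of_ne (fun heq => by rw [heq] at hx2m; linarith)
  have hgt : ∀ x ∈ Ioc x2 x0, m < h x := by
    intro x hx
    by_contra hle
    push_neg at hle
    have hxS : x ∈ S := ⟨⟨le_trans hx2S.1.1 hx.1.le, hx.2⟩, hle⟩
    exact absurd (le_csSup hScomp.bddAbove hxS) (not_le.mpr hx.1)
  have hanti : StrictAntiOn h (Icc x2 x0) := by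
    apply strictAntiOn_of_deriv_neg (convex_Icc _ _)
      (hcont.mono (Icc_subset_Icc hx2S.1.1 le_rfl))
    intro x hx
    rw [interior_Icc] at hx
    have hxI : x ∈ Ioc (0:ℝ) x0 :=
      ⟨lt_of_lt_of_le ha.1 (le_trans hx2S.1.1 hx.1.le), hx.2.le⟩
    rw [(hd x hxI).deriv]
    exact hsign x hxI (lt_trans hm0 (hgt x ⟨hx.1, hx.2.le⟩))
  have := hanti (left_mem_Icc.mpr hx2lt.le) (right_mem_Icc.mpr hx2lt.le) hx2lt
  linarith

lemma qcd_key_nonpos (h h' : ℝ → ℝ) (x0 : ℝ) (hx0 : 0 < x0)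
    (hd : ∀ x ∈ Ioc (0:ℝ) x0, HasDerivAt h (h' x) x)
    (hsign : ∀ x ∈ Ioc (0:ℝ) x0, 0 < h x → h' x < 0)
    (hlim : Tendsto h (nhdsWithin 0 (Ioi 0)) (nhds 0)) :
    h x0 ≤ 0 := by
  by_contra hcon
  push_neg at hcon
  have hkey := qcd_key_persist h h' x0 hx0 hd hsign hcon
  have hev : ∀ᶠ a in nhdsWithin (0:ℝ) (Ioi 0), h x0 ≤ h a := by
    filter_upwards [Ioo_mem_nhdsGT hx0] with a ha
    exact hkey a ⟨ha.1, ha.2.le⟩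
  have := ge_of_tendsto hlim hev
  linarith

lemma qcd_sqrt_lb (u : ℝ) (h1 : -1 ≤ u) (h2 : u ≤ 0) :
    1 + u / 2 - u ^ 2 / 2 ≤ Real.sqrt (1 + u) := by
  have h0 : (0:ℝ) ≤ 1 + u := by linarith
  have hs := Real.sq_sqrt h0
  have hsn := Real.sqrt_nonneg (1 + u)
  rcases le_or_gt (1 + u / 2 - u ^ 2 / 2) 0 with hr | hr
  · linarith
  · have key : 0 ≤ u ^ 2 * (3 - u) * (1 + u) :=
      mul_nonneg (mul_nonneg (sq_nonneg u) (by linarith)) h0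
    nlinarith [sq_nonneg (Real.sqrt (1 + u) - (1 + u / 2 - u ^ 2 / 2)),
      sq_nonneg (Real.sqrt (1 + u) + (1 + u / 2 - u ^ 2 / 2))]

/-- the asymptotically free solution `γ₁*` (the solution on `(0,x*]`
tending to `0` at `0⁺`) satisfies the two-sided bound
`(√(1+4P x) − 1)/2 ≤ γ₁*(x) ≤ P'(0)·x` on `(0,x*]`, and consequently
`γ₁*(x) = P'(0)x + O(x²)` as `x → 0`. -/
theorem qcd_asymptotically_free_bounds
    (P : ℝ → ℝ) (xstar : ℝ) (hxstar : 0 < xstar)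
    (hP1 : Differentiable ℝ P) (hP2 : Differentiable ℝ (deriv P))
    (hP0 : P 0 = 0) (hP'0 : deriv P 0 < 0) (hP''0 : deriv (deriv P) 0 < 0)
    (hPgt : ∀ x ∈ Icc (0 : ℝ) xstar, -(1 / 4 : ℝ) < P x)
    (hconc : ∀ x ∈ Icc (0 : ℝ) xstar, deriv (deriv P) x ≤ 0)
    (γ : ℝ → ℝ)
    (hode : ∀ x ∈ Ioc (0 : ℝ) xstar,
      HasDerivAt γ ((γ x + γ x ^ 2 - P x) / (x * γ x)) x)
    (hneg : ∀ x ∈ Ioc (0 : ℝ) xstar, γ x < 0)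
    (hlim : Tendsto γ (nhdsWithin 0 (Ioi 0)) (nhds 0)) :
    (∀ x ∈ Ioc (0 : ℝ) xstar,
      (Real.sqrt (1 + 4 * P x) - 1) / 2 ≤ γ x ∧ γ x ≤ deriv P 0 * x) ∧
    ∃ C > 0, ∀ x ∈ Ioc (0 : ℝ) xstar, |γ x - deriv P 0 * x| ≤ C * x ^ 2 := by
  set c := deriv P 0 with hc
  have hγcont : ∀ x ∈ Ioc (0:ℝ) xstar, ContinuousAt γ x := fun x hx => (hode x hx).continuousAt
  -- P' is antitone on [0, xstar]
  have hP'anti : AntitoneOn (deriv P) (Icc 0 xstar) := by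
    apply antitoneOn_of_deriv_nonpos (convex_Icc _ _) hP2.continuous.continuousOn
      (hP2.differentiableOn.mono interior_subset)
    intro x hx
    rw [interior_Icc] at hx
    exact hconc x (Ioo_subset_Icc_self hx)
  have hP'le : ∀ x ∈ Icc (0:ℝ) xstar, deriv P x ≤ c := fun x hx =>
    hP'anti (left_mem_Icc.mpr hxstar.le) hx hx.1
  -- P x ≤ c x on [0, xstar]
  have hPle : ∀ x ∈ Icc (0:ℝ) xstar, P x ≤ c * x := by
    have hφ : ∀ x : ℝ, HasDerivAt (fun y => c * y - P y) (c - deriv P x) x := by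
      intro x
      simpa using ((hasDerivAt_id x).const_mul c).fun_sub (hP1 x).hasDerivAt
    have hmono : MonotoneOn (fun y => c * y - P y) (Icc 0 xstar) := by
      apply monotoneOn_of_deriv_nonneg (convex_Icc _ _)
        (fun x _ => (hφ x).continuousAt.continuousWithinAt)
        (fun x _ => (hφ x).differentiableAt.differentiableWithinAt)
      intro x hx
      rw [interior_Icc] at hx
      rw [(hφ x).deriv]
      have := hP'le x (Ioo_subset_Icc_self hx)
      linarith
    intro x hx
    have h2 := hmono (left_mem_Icc.mpr hxstar.le) hx hx.1
    simp only [mul_zero, hP0, sub_zero] at h2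
    linarith
  have hsq : ∀ x ∈ Icc (0:ℝ) xstar, 0 < 1 + 4 * P x := by
    intro x hx; have := hPgt x hx; linarith
  -- Step A: γ > -1/2
  have hA : ∀ x ∈ Ioc (0:ℝ) xstar, -(1/2 : ℝ) < γ x := by
    intro x0 hx0
    by_contra hcon
    push_neg at hcon
    have hev : ∀ᶠ y in nhdsWithin (0:ℝ) (Ioi 0), -(1/2:ℝ) < γ y :=
      hlim.eventually (eventually_gt_nhds (by norm_num))
    obtain ⟨δ, hδmem, hδ⟩ := mem_nhdsGT_iff_exists_Ioo_subset.mp hev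
    have hδ0 : (0:ℝ) < δ := hδmem
    set ε : ℝ := min (δ/2) (x0/2) with hε
    have hε0 : 0 < ε := lt_min (by linarith) (by linarith [hx0.1])
    have hεδ : ε < δ := lt_of_le_of_lt (min_le_left _ _) (by linarith)
    have hεx0 : ε < x0 := lt_of_le_of_lt (min_le_right _ _) (by linarith [hx0.1])
    have hsmall : ∀ x : ℝ, 0 < x → x ≤ ε → -(1/2:ℝ) < γ x := fun x h1 h2 =>
      hδ ⟨h1, lt_of_le_of_lt h2 hεδ⟩
    set T : Set ℝ := Icc ε x0 ∩ γ ⁻¹' Iic (-(1/2:ℝ)) with hT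
    have hTcont : ContinuousOn γ (Icc ε x0) := fun x hx =>
      (hγcont x ⟨lt_of_lt_of_le hε0 hx.1, le_trans hx.2 hx0.2⟩).continuousWithinAt
    have hTc : IsClosed T := hTcont.preimage_isClosed_of_isClosed isClosed_Icc isClosed_Iic
    have hTcomp : IsCompact T := isCompact_Icc.of_isClosed_subset hTc inter_subset_left
    have hTne : T.Nonempty := ⟨x0, ⟨hεx0.le, le_refl _⟩, hcon⟩
    set x1 := sInf T with hx1
    have hx1T : x1 ∈ T := hTcomp.sInf_mem hTne
    have hx1I : x1 ∈ Ioc (0:ℝ) xstar := ⟨lt_of_lt_of_le hε0 hx1T.1.1, le_trans hx1T.1.2 hx0.2⟩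
    have hεx1 : ε < x1 := by
      rcases lt_or_eq_of_le hx1T.1.1 with h | h
      · exact h
      · exfalso
        have := hsmall x1 hx1I.1 (le_of_eq h.symm)
        exact absurd hx1T.2 (not_le.mpr this)
    have hleft : ∀ x ∈ Ico ε x1, -(1/2:ℝ) < γ x := by
      intro x hx
      by_contra hle
      push_neg at hle
      have hxT : x ∈ T := ⟨⟨hx.1, le_trans hx.2.le hx1T.1.2⟩, hle⟩
      exact absurd (csInf_le hTcomp.bddBelow hxT) (not_le.mpr hx.2)
    have hγx1 : γ x1 = -(1/2:ℝ) := by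
      refine le_antisymm hx1T.2 ?_
      have htl : Tendsto γ (nhdsWithin x1 (Iio x1)) (nhds (γ x1)) :=
        (hγcont x1 hx1I).continuousWithinAt
      refine ge_of_tendsto htl ?_
      filter_upwards [Ioo_mem_nhdsLT hεx1] with y hy
      exact (hleft y ⟨hy.1.le, hy.2⟩).le
    have hd1 := hode x1 hx1I
    have hP1' := hPgt x1 ⟨hx1I.1.le, hx1I.2⟩
    have hdpos : 0 < (γ x1 + γ x1 ^ 2 - P x1) / (x1 * γ x1) := by
      rw [hγx1]
      apply div_pos_of_neg_of_neg
      · nlinarith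
      · nlinarith [hx1I.1]
    have hslope := hasDerivAt_iff_tendsto_slope.mp hd1
    have hslope' : Tendsto (slope γ x1) (nhdsWithin x1 (Iio x1))
        (nhds ((γ x1 + γ x1 ^ 2 - P x1) / (x1 * γ x1))) :=
      hslope.mono_left (nhdsWithin_mono _ (fun y hy => ne_of_lt hy))
    have hnonpos : (γ x1 + γ x1 ^ 2 - P x1) / (x1 * γ x1) ≤ 0 := by
      refine le_of_tendsto hslope' ?_
      filter_upwards [Ioo_mem_nhdsLT hεx1] with y hy
      have hγy : γ x1 ≤ γ y := by rw [hγx1]; exact (hleft y ⟨hy.1.le, hy.2⟩).le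
      rw [slope_def_field]
      apply div_nonpos_of_nonneg_of_nonpos
      · linarith
      · linarith [hy.2]
    linarith
  -- Step C: upper bound γ x ≤ c x
  have hUB : ∀ x ∈ Ioc (0:ℝ) xstar, γ x ≤ c * x := by
    intro x0 hx0
    have hd : ∀ x ∈ Ioc (0:ℝ) x0, HasDerivAt (fun y => γ y - c * y)
        ((γ x + γ x ^ 2 - P x) / (x * γ x) - c) x := by
      intro x hx
      have hxI : x ∈ Ioc (0:ℝ) xstar := ⟨hx.1, le_trans hx.2 hx0.2⟩
      exact (hode x hxI).sub (by simpa using (hasDerivAt_id x).const_mul c)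
    have hsign : ∀ x ∈ Ioc (0:ℝ) x0, 0 < γ x - c * x →
        (γ x + γ x ^ 2 - P x) / (x * γ x) - c < 0 := by
      intro x hx hpos
      have hxI : x ∈ Ioc (0:ℝ) xstar := ⟨hx.1, le_trans hx.2 hx0.2⟩
      have hγx := hneg x hxI
      have hγA := hA x hxI
      have hPx := hPle x ⟨hx.1.le, hxI.2⟩
      have hxγ : x * γ x < 0 := mul_neg_of_pos_of_neg hx.1 hγx
      rw [sub_neg, div_lt_iff_of_neg hxγ]
      have hfac : 0 < (γ x - c * x) * (1 + γ x) := mul_pos hpos (by linarith)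
      nlinarith [hfac, hPx]
    have hlim' : Tendsto (fun x => γ x - c * x) (nhdsWithin (0:ℝ) (Ioi 0)) (nhds 0) := by
      have h2 : Tendsto (fun x : ℝ => c * x) (nhdsWithin (0:ℝ) (Ioi 0)) (nhds 0) := by
        have hcont2 : Continuous fun x : ℝ => c * x := continuous_const.mul continuous_id
        simpa using (hcont2.tendsto 0).mono_left nhdsWithin_le_nhds
      simpa using hlim.sub h2
    have hkey := qcd_key_nonpos (fun y => γ y - c * y)
      (fun x => (γ x + γ x ^ 2 - P x) / (x * γ x) - c) x0 hx0.1 hd hsign hlim'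
    try simp only at hkey
    linarith
  -- Step B: lower bound
  have hB : ∀ x ∈ Ioc (0:ℝ) xstar, (Real.sqrt (1 + 4 * P x) - 1) / 2 ≤ γ x := by
    intro x0 hx0
    have hd : ∀ x ∈ Ioc (0:ℝ) x0, HasDerivAt
        (fun y => (Real.sqrt (1 + 4 * P y) - 1) / 2 - γ y)
        (4 * deriv P x / (2 * Real.sqrt (1 + 4 * P x)) / 2
          - (γ x + γ x ^ 2 - P x) / (x * γ x)) x := by
      intro x hx
      have hxI : x ∈ Ioc (0:ℝ) xstar := ⟨hx.1, le_trans hx.2 hx0.2⟩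
      have h4 : HasDerivAt (fun y => 1 + 4 * P y) (4 * deriv P x) x := by
        simpa using ((hP1 x).hasDerivAt.const_mul 4).const_add 1
      have hsqx := hsq x ⟨hx.1.le, hxI.2⟩
      exact (((h4.sqrt (ne_of_gt hsqx)).sub_const 1).div_const 2).sub (hode x hxI)
    have hsign : ∀ x ∈ Ioc (0:ℝ) x0,
        0 < (Real.sqrt (1 + 4 * P x) - 1) / 2 - γ x →
        (4 * deriv P x / (2 * Real.sqrt (1 + 4 * P x)) / 2
          - (γ x + γ x ^ 2 - P x) / (x * γ x)) < 0 := by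
      intro x hx hpos
      have hxI : x ∈ Ioc (0:ℝ) xstar := ⟨hx.1, le_trans hx.2 hx0.2⟩
      have hγx := hneg x hxI
      have hγA := hA x hxI
      have hsqx := hsq x ⟨hx.1.le, hxI.2⟩
      have hspos : 0 < Real.sqrt (1 + 4 * P x) := Real.sqrt_pos.mpr hsqx
      have hs2 : Real.sqrt (1 + 4 * P x) ^ 2 = 1 + 4 * P x := Real.sq_sqrt hsqx.le
      have hP'x : deriv P x ≤ c := hP'le x ⟨hx.1.le, hxI.2⟩
      have hg'le : 4 * deriv P x / (2 * Real.sqrt (1 + 4 * P x)) / 2 ≤ 0 := by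
        apply div_nonpos_of_nonpos_of_nonneg _ (by norm_num)
        apply div_nonpos_of_nonpos_of_nonneg (by linarith) (by positivity)
      have hnum : γ x + γ x ^ 2 - P x < 0 := by
        have hfac : γ x + γ x ^ 2 - P x =
            (γ x - (Real.sqrt (1 + 4 * P x) - 1) / 2) *
            (γ x + (1 + Real.sqrt (1 + 4 * P x)) / 2) := by
          linear_combination ((1:ℝ)/4) * hs2
        rw [hfac]
        apply mul_neg_of_neg_of_pos
        · linarith
        · linarith
      have hγ' : 0 < (γ x + γ x ^ 2 - P x) / (x * γ x) :=
        div_pos_of_neg_of_neg hnum (mul_neg_of_pos_of_neg hx.1 hγx)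
      linarith
    have hlim' : Tendsto (fun x => (Real.sqrt (1 + 4 * P x) - 1) / 2 - γ x)
        (nhdsWithin (0:ℝ) (Ioi 0)) (nhds 0) := by
      have hgc : Continuous fun x : ℝ => (Real.sqrt (1 + 4 * P x) - 1) / 2 := by
        apply Continuous.div_const
        apply Continuous.sub _ continuous_const
        exact Real.continuous_sqrt.comp (continuous_const.add (continuous_const.mul hP1.continuous))
      have hg0 : (Real.sqrt (1 + 4 * P 0) - 1) / 2 = 0 := by
        rw [hP0]; norm_num
      have hgt : Tendsto (fun x : ℝ => (Real.sqrt (1 + 4 * P x) - 1) / 2)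
          (nhdsWithin (0:ℝ) (Ioi 0)) (nhds 0) := by
        have := (hgc.tendsto 0).mono_left (nhdsWithin_le_nhds (s := Ioi (0:ℝ)))
        rwa [hg0] at this
      simpa using hgt.sub hlim
    have hkey := qcd_key_nonpos
      (fun y => (Real.sqrt (1 + 4 * P y) - 1) / 2 - γ y)
      (fun x => 4 * deriv P x / (2 * Real.sqrt (1 + 4 * P x)) / 2
          - (γ x + γ x ^ 2 - P x) / (x * γ x)) x0 hx0.1 hd hsign hlim'
    try simp only at hkey
    linarith
  refine ⟨fun x hx => ⟨hB x hx, hUB x hx⟩, ?_⟩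
  -- quadratic lower bound on P near 0
  have hbd : HasDerivAt (deriv P) (deriv (deriv P) 0) 0 := (hP2 0).hasDerivAt
  have hlo := hasDerivAt_iff_isLittleO.mp hbd
  have hev1 := hlo.def one_pos
  obtain ⟨δ, hδ0, hδb⟩ := Metric.eventually_nhds_iff.mp hev1
  set b := deriv (deriv P) 0 with hbb
  have hbneg : b < 0 := hP''0
  set δ' := min (δ/2) xstar with hδ'
  have hδ'0 : 0 < δ' := lt_min (by linarith) hxstar
  have hδ'x : δ' ≤ xstar := min_le_right _ _
  have hP'lb : ∀ x ∈ Icc (0:ℝ) δ', c - (1 - b) * x ≤ deriv P x := by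
    intro x hx
    have hd2 : δ' ≤ δ/2 := min_le_left _ _
    have hxd : dist x 0 < δ := by
      rw [Real.dist_eq, sub_zero, abs_of_nonneg hx.1]
      linarith [hx.2]
    have h := hδb hxd
    simp only [sub_zero, smul_eq_mul, Real.norm_eq_abs, one_mul] at h
    rw [abs_of_nonneg hx.1] at h
    have h2 := abs_le.mp h
    have h3 := h2.1
    linarith
  have hψd : ∀ y : ℝ, HasDerivAt (fun z => P z - c * z + (1 - b)/2 * z^2)
      (deriv P y - c + (1 - b) * y) y := by
    intro y
    have h1 : HasDerivAt (fun z : ℝ => P z - c * z) (deriv P y - c * 1) y :=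
      (hP1 y).hasDerivAt.sub ((hasDerivAt_id y).const_mul c)
    have h2 : HasDerivAt (fun z : ℝ => (1 - b)/2 * z^2) ((1 - b)/2 * (↑2 * y^1)) y :=
      (hasDerivAt_pow 2 y).const_mul ((1 - b)/2)
    have h3 := h1.fun_add h2
    convert h3 using 1
    all_goals first | rfl | ring
  have hPlb : ∀ x ∈ Icc (0:ℝ) δ', c * x - (1 - b)/2 * x^2 ≤ P x := by
    have hmono : MonotoneOn (fun z => P z - c * z + (1 - b)/2 * z^2) (Icc 0 δ') := by
      apply monotoneOn_of_deriv_nonneg (convex_Icc _ _)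
        (fun y _ => (hψd y).continuousAt.continuousWithinAt)
        (fun y _ => (hψd y).differentiableAt.differentiableWithinAt)
      intro y hy
      rw [interior_Icc] at hy
      rw [(hψd y).deriv]
      have := hP'lb y ⟨hy.1.le, hy.2.le⟩
      linarith
    intro x hx
    have h2 := hmono (left_mem_Icc.mpr hδ'0.le) hx hx.1
    simp only [hP0, mul_zero, sub_zero] at h2
    norm_num at h2
    linarith
  have hBpos : (0:ℝ) < 1 - b := by linarith
  set L := -c + (1 - b)/2 * δ' with hL
  have hLpos : 0 < L := by
    have : 0 < (1 - b)/2 * δ' := mul_pos (by linarith) hδ'0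
    rw [hL]; linarith
  set K := 1/2 + (-c) * xstar with hK
  have hKpos : 0 < K := by
    have : 0 < (-c) * xstar := mul_pos (by linarith) hxstar
    rw [hK]; linarith
  set C := (1 - b)/2 + 4 * L^2 + K/δ'^2 with hC0
  clear_value b δ' L K C
  have hCpos : 0 < C := by
    have h1 : 0 < K/δ'^2 := div_pos hKpos (pow_pos hδ'0 2)
    rw [hC0]; linarith [sq_nonneg L]
  refine ⟨C, hCpos, ?_⟩
  intro x hx
  have hlow := hB x hx
  have hup := hUB x hx
  have hxIcc : x ∈ Icc (0:ℝ) xstar := ⟨hx.1.le, hx.2⟩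
  have hPu := hPle x hxIcc
  have hcx : c * x < 0 := mul_neg_of_neg_of_pos hP'0 hx.1
  rw [abs_of_nonpos (by linarith : γ x - c * x ≤ 0)]
  rcases le_or_gt x δ' with hxs | hxs
  · have hPl := hPlb x ⟨hx.1.le, hxs⟩
    have hx2 : x^2 ≤ δ' * x := by
      have := mul_le_mul_of_nonneg_right hxs hx.1.le
      nlinarith [this]
    have hnP : -P x ≤ L * x := by
      have hint := mul_le_mul_of_nonneg_left hx2 (by linarith : (0:ℝ) ≤ (1 - b)/2)
      rw [hL]
      linarith [hPl, hint]
    have h0P : 0 ≤ -P x := by linarith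
    have hLx : (0:ℝ) ≤ L * x := mul_nonneg hLpos.le hx.1.le
    have hPsq : P x ^ 2 ≤ L^2 * x^2 := by linarith [mul_le_mul hnP hnP h0P hLx]
    have hu4 : -1 ≤ 4 * P x := by linarith [hPgt x hxIcc]
    have hu0 : 4 * P x ≤ 0 := by linarith
    have hsqrt := qcd_sqrt_lb (4 * P x) hu4 hu0
    have hglb : P x - 4 * P x ^ 2 ≤ (Real.sqrt (1 + 4 * P x) - 1)/2 := by linarith [hsqrt]
    have hKnn : 0 ≤ K/δ'^2 * x^2 := mul_nonneg (div_pos hKpos (pow_pos hδ'0 2)).le (sq_nonneg x)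
    rw [hC0]
    linarith [hlow, hglb, hPl, hPsq, hKnn]
  · have h1 : -(γ x - c * x) ≤ K := by
      have hAx := hA x hx
      have hcxs : 0 < (-c) * xstar := mul_pos (by linarith) hxstar
      rw [hK]; linarith [hAx, hcx, hcxs]
    have hδx2 : δ'^2 ≤ x^2 := by linarith [mul_self_le_mul_self hδ'0.le hxs.le]
    have h2 : K ≤ C * x^2 := by
      have e1 : K = K/δ'^2 * δ'^2 := (div_mul_cancel₀ K ((pow_pos hδ'0 2).ne')).symm
      have e2 : K/δ'^2 * δ'^2 ≤ K/δ'^2 * x^2 :=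
        mul_le_mul_of_nonneg_left hδx2 (le_of_lt (div_pos hKpos (pow_pos hδ'0 2)))
      have e3 : K/δ'^2 * x^2 ≤ C * x^2 := by
        apply mul_le_mul_of_nonneg_right _ (sq_nonneg x)
        rw [hC0]; linarith [sq_nonneg L]
      linarith
    linarith
end

section
/- Assume H1–H3 (in particular P(x) < 0 for all x > 0). If γ₁ solves γ' = (γ+γ²−P)/(xγ) with γ₁(x₀) > 0 for some x₀ > 0, then γ₁ exists for all x ≥ x₀ and satisfies 0 < x·S_P(x₀,x) ≤ γ₁(x) ≤ x·S_P(x₀,x) + x/x₀ − 1, where S_P(x₀,x) = √(γ₁(x₀)²/x₀² + 2∫_{x₀}^x (−P(z))/z³ dz). -/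
open Set intervalIntegral

/-- solutions in the first quadrant are global and grow essentially
linearly: if `γ` solves the ODE for all `x ≥ x₀` with `γ x₀ > 0`, then for all
`x ≥ x₀`, `0 < x·S_P(x₀,x) ≤ γ x ≤ x·S_P(x₀,x) + x/x₀ − 1`, where
`S_P(x₀,x) = √(γ(x₀)²/x₀² + 2∫_{x₀}^x (−P z)/z³ dz)`. -/
theorem qcd_first_quadrant_global_bounds
    (P : ℝ → ℝ) (hPcont : Continuous P)
    (hP0 : P 0 = 0) (hP'0 : deriv P 0 < 0)
    (hPneg : ∀ x > (0 : ℝ), P x < 0)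
    (γ : ℝ → ℝ) (x₀ : ℝ) (hx₀ : 0 < x₀)
    (hode : ∀ x ∈ Ici x₀,
      HasDerivAt γ ((γ x + γ x ^ 2 - P x) / (x * γ x)) x)
    (hpos : 0 < γ x₀) :
    ∀ x ∈ Ici x₀,
      0 < x * Real.sqrt (γ x₀ ^ 2 / x₀ ^ 2 + 2 * ∫ z in x₀..x, -P z / z ^ 3) ∧
      x * Real.sqrt (γ x₀ ^ 2 / x₀ ^ 2 + 2 * ∫ z in x₀..x, -P z / z ^ 3) ≤ γ x ∧
      γ x ≤ x * Real.sqrt (γ x₀ ^ 2 / x₀ ^ 2 + 2 * ∫ z in x₀..x, -P z / z ^ 3)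
              + x / x₀ - 1 := by
  have hγcont : ∀ x ∈ Ici x₀, ContinuousAt γ x := fun x hx =>
    (hode x hx).differentiableAt.continuousAt
  set f : ℝ → ℝ := fun z => -P z / z ^ 3 with hf_def
  have hfmeas : Measurable f := hPcont.neg.measurable.div (continuous_pow 3).measurable
  have hfcontAt : ∀ z : ℝ, 0 < z → ContinuousAt f z := fun z hz =>
    hPcont.neg.continuousAt.div (continuous_pow 3).continuousAt (by positivity)
  have hfint : ∀ x ∈ Ici x₀, IntervalIntegrable f MeasureTheory.volume x₀ x := by
    intro x hx
    apply ContinuousOn.intervalIntegrable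
    intro z hz
    rw [uIcc_of_le hx] at hz
    exact (hfcontAt z (lt_of_lt_of_le hx₀ hz.1)).continuousWithinAt
  have hFTC : ∀ z ∈ Ici x₀, HasDerivAt (fun u => ∫ t in x₀..u, f t) (f z) z := fun z hz =>
    intervalIntegral.integral_hasDerivAt_right (hfint z hz)
      hfmeas.stronglyMeasurable.stronglyMeasurableAtFilter
      (hfcontAt z (lt_of_lt_of_le hx₀ hz))
  -- Step 1: γ stays positive
  have hγpos : ∀ x ∈ Ici x₀, 0 < γ x := by
    by_contra hcon
    push_neg at hcon
    obtain ⟨t₁, ht₁, ht₁'⟩ := hcon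
    set Z : Set ℝ := {x | x ∈ Ici x₀ ∧ γ x ≤ 0} with hZ_def
    have hZne : Z.Nonempty := ⟨t₁, ht₁, ht₁'⟩
    have hZbdd : BddBelow Z := ⟨x₀, fun z hz => hz.1⟩
    set t := sInf Z with ht_def
    have htx₀ : x₀ ≤ t := le_csInf hZne fun z hz => hz.1
    have hγt_le : γ t ≤ 0 := by
      by_contra hγt
      push_neg at hγt
      have hev : ∀ᶠ y in nhds t, 0 < γ y :=
        (hγcont t htx₀).eventually (eventually_gt_nhds hγt)
      obtain ⟨ε, hε, hball⟩ := Metric.eventually_nhds_iff.mp hev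
      obtain ⟨z, hzZ, hzlt⟩ := Real.lt_sInf_add_pos hZne hε
      have hz_ge : t ≤ z := csInf_le hZbdd hzZ
      have : 0 < γ z := hball (by rw [Real.dist_eq, abs_sub_lt_iff]; constructor <;> linarith)
      linarith [hzZ.2]
    have htne : x₀ < t := by
      rcases lt_or_eq_of_le htx₀ with h | h
      · exact h
      · rw [← h] at hγt_le; linarith
    have hmin : ∀ y, x₀ ≤ y → y < t → 0 < γ y := by
      intro y hy hyt
      by_contra hyneg
      push_neg at hyneg
      exact absurd (csInf_le hZbdd ⟨hy, hyneg⟩) (not_le.mpr hyt)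
    have hγt_ge : 0 ≤ γ t := by
      have htend : Filter.Tendsto γ (nhdsWithin t (Iio t)) (nhds (γ t)) :=
        (hγcont t htx₀).continuousWithinAt.tendsto
      refine ge_of_tendsto htend ?_
      filter_upwards [Ioo_mem_nhdsLT htne] with y hy
      exact (hmin y hy.1.le hy.2).le
    have hγt0 : γ t = 0 := le_antisymm hγt_le hγt_ge
    set w : ℝ → ℝ := fun z => γ z ^ 2 / z ^ 2 with hw_def
    have hwderiv : ∀ z ∈ Ioo x₀ t, HasDerivAt w (2 * (γ z - P z) / z ^ 3) z := by
      intro z hz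
      have hzpos : 0 < z := lt_trans hx₀ hz.1
      have hγz : 0 < γ z := hmin z hz.1.le hz.2
      have h1 : HasDerivAt (fun y => γ y ^ 2)
          (2 * γ z ^ 1 * ((γ z + γ z ^ 2 - P z) / (z * γ z))) z := by
        exact_mod_cast (hode z hz.1.le).pow 2
      have h2 : HasDerivAt (fun y : ℝ => y ^ 2) (2 * z ^ 1) z := by
        simpa using hasDerivAt_pow 2 z
      have h3 := h1.fun_div h2 (by positivity)
      refine h3.congr_deriv ?_
      field_simp
      ring
    have hwmono : StrictMonoOn w (Icc x₀ t) := by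
      apply strictMonoOn_of_deriv_pos (convex_Icc x₀ t)
      · intro z hz
        have hzpos : 0 < z := lt_of_lt_of_le hx₀ hz.1
        exact (((hγcont z hz.1).pow 2).div ((continuous_pow 2).continuousAt)
          (by positivity)).continuousWithinAt
      · intro z hz
        rw [interior_Icc] at hz
        rw [(hwderiv z hz).deriv]
        have hzpos : 0 < z := lt_trans hx₀ hz.1
        have hγz : 0 < γ z := hmin z hz.1.le hz.2
        have hPz : P z < 0 := hPneg z hzpos
        have hnum : 0 < γ z - P z := by linarith
        positivity
    have := hwmono ⟨le_refl x₀, htx₀⟩ ⟨htx₀, le_refl t⟩ htne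
    simp only [hw_def] at this
    rw [hγt0] at this
    have hwx₀ : 0 < γ x₀ ^ 2 / x₀ ^ 2 := by positivity
    simp at this
    nlinarith
  -- global derivative of γ²/z²
  have hwderiv : ∀ z ∈ Ici x₀, HasDerivAt (fun y => γ y ^ 2 / y ^ 2)
      (2 * (γ z - P z) / z ^ 3) z := by
    intro z hz
    have hzpos : 0 < z := lt_of_lt_of_le hx₀ hz
    have hγz : 0 < γ z := hγpos z hz
    have h1 : HasDerivAt (fun y => γ y ^ 2)
        (2 * γ z ^ 1 * ((γ z + γ z ^ 2 - P z) / (z * γ z))) z := by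
      exact_mod_cast (hode z hz).pow 2
    have h2 : HasDerivAt (fun y : ℝ => y ^ 2) (2 * z ^ 1) z := by
      simpa using hasDerivAt_pow 2 z
    have h3 := h1.fun_div h2 (by positivity)
    refine h3.congr_deriv ?_
    field_simp
    ring
  set h : ℝ → ℝ := fun u => γ x₀ ^ 2 / x₀ ^ 2 + 2 * ∫ z in x₀..u, f z with hh_def
  have hhderiv : ∀ z ∈ Ici x₀, HasDerivAt h (2 * f z) z := fun z hz =>
    ((hFTC z hz).const_mul 2).const_add _
  have hhpos : ∀ x ∈ Ici x₀, 0 < h x := by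
    intro x hx
    have hint : 0 ≤ ∫ z in x₀..x, f z := by
      apply intervalIntegral.integral_nonneg hx
      intro u hu
      have hupos : 0 < u := lt_of_lt_of_le hx₀ hu.1
      have hPu : P u < 0 := hPneg u hupos
      simp only [hf_def]
      apply div_nonneg
      · linarith
      · positivity
    have : 0 < γ x₀ ^ 2 / x₀ ^ 2 := by positivity
    simp only [hh_def]
    linarith
  -- Step 2: lower bound  h x ≤ (γ x)²/x²
  have hγsq : ∀ x ∈ Ici x₀, h x ≤ γ x ^ 2 / x ^ 2 := by
    intro x hx
    set F : ℝ → ℝ := fun z => γ z ^ 2 / z ^ 2 - 2 * ∫ t in x₀..z, f t with hF_def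
    have hF' : ∀ z ∈ Ici x₀, HasDerivAt F (2 * (γ z - P z) / z ^ 3 - 2 * f z) z :=
      fun z hz => (hwderiv z hz).sub ((hFTC z hz).const_mul 2)
    have hFmono : MonotoneOn F (Icc x₀ x) := by
      apply monotoneOn_of_deriv_nonneg (convex_Icc x₀ x)
      · intro z hz
        have hzpos : 0 < z := lt_of_lt_of_le hx₀ hz.1
        exact ((((hγcont z hz.1).pow 2).div ((continuous_pow 2).continuousAt)
          (by positivity)).sub
          (((hFTC z hz.1).differentiableAt.continuousAt).const_mul 2)).continuousWithinAt
      · intro z hz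
        rw [interior_Icc] at hz
        exact (hF' z hz.1.le).differentiableAt.differentiableWithinAt
      · intro z hz
        rw [interior_Icc] at hz
        rw [(hF' z hz.1.le).deriv]
        have hzpos : 0 < z := lt_trans hx₀ hz.1
        have hγz : 0 < γ z := hγpos z hz.1.le
        have heq : 2 * (γ z - P z) / z ^ 3 - 2 * f z = 2 * γ z / z ^ 3 := by
          simp only [hf_def]
          field_simp
          ring
        rw [heq]
        positivity
    have := hFmono ⟨le_refl x₀, hx⟩ ⟨hx, le_refl x⟩ hx
    simp only [hF_def, intervalIntegral.integral_same, mul_zero, sub_zero] at this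
    simp only [hh_def]
    linarith
  have hSle : ∀ x ∈ Ici x₀, x * Real.sqrt (h x) ≤ γ x := by
    intro x hx
    have hxpos : 0 < x := lt_of_lt_of_le hx₀ hx
    have hγx : 0 < γ x := hγpos x hx
    have h1 : Real.sqrt (h x) ≤ Real.sqrt (γ x ^ 2 / x ^ 2) :=
      Real.sqrt_le_sqrt (hγsq x hx)
    rw [show γ x ^ 2 / x ^ 2 = (γ x / x) ^ 2 by rw [div_pow]] at h1
    rw [Real.sqrt_sq (by positivity)] at h1
    calc x * Real.sqrt (h x) ≤ x * (γ x / x) := by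
          exact mul_le_mul_of_nonneg_left h1 hxpos.le
      _ = γ x := by field_simp
  intro x hx
  have hxpos : 0 < x := lt_of_lt_of_le hx₀ hx
  have hxne : x ≠ 0 := ne_of_gt hxpos
  refine ⟨mul_pos hxpos (Real.sqrt_pos.2 (hhpos x hx)), hSle x hx, ?_⟩
  -- Step 3: upper bound via antitone G
  set G : ℝ → ℝ := fun z => γ z / z - Real.sqrt (h z) + z⁻¹ with hG_def
  have hG' : ∀ z ∈ Ici x₀, HasDerivAt G
      (((γ z + γ z ^ 2 - P z) / (z * γ z) * z - γ z * 1) / z ^ 2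
        - 2 * f z / (2 * Real.sqrt (h z)) + -(z ^ 2)⁻¹) z := by
    intro z hz
    have hzpos : 0 < z := lt_of_lt_of_le hx₀ hz
    have hzne : z ≠ 0 := ne_of_gt hzpos
    have hhz : h z ≠ 0 := ne_of_gt (hhpos z hz)
    exact (((hode z hz).div (hasDerivAt_id z) hzne).sub
      ((hhderiv z hz).sqrt hhz)).add (hasDerivAt_inv hzne)
  have hGanti : AntitoneOn G (Icc x₀ x) := by
    apply antitoneOn_of_deriv_nonpos (convex_Icc x₀ x)
    · intro z hz
      have hzpos : 0 < z := lt_of_lt_of_le hx₀ hz.1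
      have hcont1 : ContinuousAt h z :=
        (hhderiv z hz.1).differentiableAt.continuousAt
      exact ((((hγcont z hz.1).div continuousAt_id (ne_of_gt hzpos)).sub
        (Real.continuous_sqrt.continuousAt.comp hcont1)).add
        (continuousAt_id.inv₀ (ne_of_gt hzpos))).continuousWithinAt
    · intro z hz
      rw [interior_Icc] at hz
      exact (hG' z hz.1.le).differentiableAt.differentiableWithinAt
    · intro z hz
      rw [interior_Icc] at hz
      rw [(hG' z hz.1.le).deriv]
      have hzpos : 0 < z := lt_trans hx₀ hz.1
      have hzne : z ≠ 0 := ne_of_gt hzpos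
      have hγz : 0 < γ z := hγpos z hz.1.le
      have hs : 0 < Real.sqrt (h z) := Real.sqrt_pos.2 (hhpos z hz.1.le)
      have hPz : P z < 0 := hPneg z hzpos
      have hlow : z * Real.sqrt (h z) ≤ γ z := hSle z hz.1.le
      set s := Real.sqrt (h z) with hs_def
      have key : ((γ z + γ z ^ 2 - P z) / (z * γ z) * z - γ z * 1) / z ^ 2
          - 2 * f z / (2 * s) + -(z ^ 2)⁻¹
          = (-P z) * (z * s - γ z) / (γ z * z ^ 3 * s) := by
        simp only [hf_def]
        field_simp
        ring
      rw [key]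
      apply div_nonpos_of_nonpos_of_nonneg
      · apply mul_nonpos_of_nonneg_of_nonpos <;> linarith
      · positivity
  have hGle := hGanti ⟨le_refl x₀, hx⟩ ⟨hx, le_refl x⟩ hx
  have hhx₀ : h x₀ = (γ x₀ / x₀) ^ 2 := by
    simp only [hh_def, intervalIntegral.integral_same, mul_zero, add_zero, div_pow]
  have hGx₀ : G x₀ = x₀⁻¹ := by
    simp only [hG_def, hhx₀, Real.sqrt_sq (by positivity : (0:ℝ) ≤ γ x₀ / x₀)]
    ring
  rw [hGx₀] at hGle
  simp only [hG_def] at hGle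
  set s := Real.sqrt (h x) with hs_def
  have h2 : (γ x / x - s + x⁻¹) * x ≤ x₀⁻¹ * x :=
    mul_le_mul_of_nonneg_right hGle hxpos.le
  have e1 : (γ x / x - s + x⁻¹) * x = γ x - s * x + 1 := by
    field_simp
  have e2 : x₀⁻¹ * x = x / x₀ := by
    rw [div_eq_mul_inv]; ring
  rw [e1, e2] at h2
  linarith
end

section
/- Assume P(x) < 0 for all x > 0 and P continuous. If γ₁ is a negative solution of γ' = (γ+γ²−P)/(xγ) on [x₀, x₁] ⊂ (0,∞), then (1/2)·d/dx(γ₁(x)²) ≤ (γ₁(x)² − P(x))/x, and hence γ₁(x) ≥ −x·S_P(x₀,x) for all x ∈ [x₀,x₁], where S_P(x₀,x) = √(γ₁(x₀)²/x₀² + 2∫_{x₀}^x (−P(z))/z³ dz). -/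
open Set intervalIntegral

/-- for a negative solution on `[x₀,x₁] ⊂ (0,∞)` of the ODE (with
`P < 0` continuous), one has the differential inequality
`(1/2)·d/dx(γ²) ≤ (γ² − P)/x`, and hence `γ x ≥ −x·S_P(x₀,x)` on `[x₀,x₁]`. -/
theorem qcd_lower_bound_negative_solution
    (P : ℝ → ℝ) (hPcont : ContinuousOn P (Ioi 0))
    (hPneg : ∀ x > (0 : ℝ), P x < 0)
    (γ : ℝ → ℝ) (x₀ x₁ : ℝ) (hx₀ : 0 < x₀) (hx₀₁ : x₀ ≤ x₁)
    (hode : ∀ x ∈ Icc x₀ x₁,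
      HasDerivAt γ ((γ x + γ x ^ 2 - P x) / (x * γ x)) x)
    (hneg : ∀ x ∈ Icc x₀ x₁, γ x < 0) :
    ∀ x ∈ Icc x₀ x₁,
      deriv (fun y => γ y ^ 2) x / 2 ≤ (γ x ^ 2 - P x) / x ∧
      -(x * Real.sqrt (γ x₀ ^ 2 / x₀ ^ 2 + 2 * ∫ z in x₀..x, -P z / z ^ 3))
        ≤ γ x := by
  set f : ℝ → ℝ := fun z => -P z / z ^ 3 with hf
  have hfc : ContinuousOn f (Ioi 0) := by
    apply ContinuousOn.div hPcont.neg (by fun_prop)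
    intro z hz
    have : (0:ℝ) < z := hz
    positivity
  have hpos : ∀ x ∈ Icc x₀ x₁, (0:ℝ) < x := fun x hx => lt_of_lt_of_le hx₀ hx.1
  have hF : ∀ x ∈ Icc x₀ x₁, HasDerivAt (fun t => ∫ z in x₀..t, f z) (f x) x := by
    intro x hx
    have hxpos := hpos x hx
    have hsub : uIcc x₀ x ⊆ Ioi 0 := by
      rw [uIcc_of_le hx.1]
      intro z hz
      exact lt_of_lt_of_le hx₀ hz.1
    exact intervalIntegral.integral_hasDerivAt_right
      ((hfc.mono hsub).intervalIntegrable)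
      (hfc.stronglyMeasurableAtFilter isOpen_Ioi x hxpos)
      (hfc.continuousAt (isOpen_Ioi.mem_nhds hxpos))
  set g : ℝ → ℝ := fun x => γ x ^ 2 / x ^ 2 - 2 * ∫ z in x₀..x, f z with hg
  have hgd : ∀ x ∈ Icc x₀ x₁, HasDerivAt g (2 * γ x / x ^ 3) x := by
    intro x hx
    have hxpos := hpos x hx
    have hγ := hneg x hx
    have h1 : HasDerivAt (fun y => γ y ^ 2 / y ^ 2)
        (((2 * γ x * ((γ x + γ x ^ 2 - P x) / (x * γ x))) * x ^ 2
          - γ x ^ 2 * (2 * x)) / (x ^ 2) ^ 2) x := by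
      refine HasDerivAt.div ?_ ?_ (by positivity)
      · simpa using (hode x hx).fun_pow 2
      · simpa using hasDerivAt_pow 2 x
    have h2 := h1.sub ((hF x hx).const_mul 2)
    convert h2 using 1 <;> try rfl
    have hx0 : x ≠ 0 := ne_of_gt hxpos
    have hγ0 : γ x ≠ 0 := ne_of_lt hγ
    simp only [hf]
    field_simp
    ring
  have hcont : ContinuousOn g (Icc x₀ x₁) := fun x hx =>
    ((hgd x hx).continuousAt).continuousWithinAt
  have hdiff : DifferentiableOn ℝ g (interior (Icc x₀ x₁)) := fun x hx =>
    ((hgd x (interior_subset hx)).differentiableAt).differentiableWithinAt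
  have hanti : AntitoneOn g (Icc x₀ x₁) := by
    refine antitoneOn_of_deriv_nonpos (convex_Icc _ _) hcont hdiff ?_
    intro x hx
    rw [(hgd x (interior_subset hx)).deriv]
    have hxpos := hpos x (interior_subset hx)
    have hγ := hneg x (interior_subset hx)
    apply div_nonpos_of_nonpos_of_nonneg
    · linarith
    · positivity
  intro x hx
  have hxpos := hpos x hx
  have hγx := hneg x hx
  have hx0 : x ≠ 0 := ne_of_gt hxpos
  have hγ0 : γ x ≠ 0 := ne_of_lt hγx
  constructor
  · have hd : HasDerivAt (fun y => γ y ^ 2)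
        (2 * γ x * ((γ x + γ x ^ 2 - P x) / (x * γ x))) x := by
      simpa using (hode x hx).fun_pow 2
    rw [hd.deriv]
    have heq : 2 * γ x * ((γ x + γ x ^ 2 - P x) / (x * γ x)) / 2
        = γ x / x + (γ x ^ 2 - P x) / x := by
      field_simp
      ring
    rw [heq]
    have : γ x / x < 0 := div_neg_of_neg_of_pos hγx hxpos
    linarith
  · have hgle : g x ≤ g x₀ := hanti (left_mem_Icc.mpr hx₀₁) hx hx.1
    have hF0 : (∫ z in x₀..x₀, f z) = 0 := intervalIntegral.integral_same
    set R := γ x₀ ^ 2 / x₀ ^ 2 + 2 * ∫ z in x₀..x, f z with hR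
    have hvle : γ x ^ 2 / x ^ 2 ≤ R := by
      simp only [hg, hF0, mul_zero, sub_zero] at hgle
      rw [hR]
      linarith
    have hkey : γ x ^ 2 ≤ x ^ 2 * R := by
      have h := mul_le_mul_of_nonneg_left hvle (sq_nonneg x)
      calc γ x ^ 2 = x ^ 2 * (γ x ^ 2 / x ^ 2) := by field_simp
        _ ≤ x ^ 2 * R := h
    have hR0 : 0 ≤ R := by
      have := sq_nonneg (γ x)
      have hx2 : (0:ℝ) < x ^ 2 := by positivity
      nlinarith
    have h2 : -γ x ≤ x * Real.sqrt R := by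
      have hng : 0 ≤ -γ x := by linarith
      have h3 : Real.sqrt ((-γ x) ^ 2) ≤ Real.sqrt (x ^ 2 * R) := by
        apply Real.sqrt_le_sqrt
        rw [neg_pow]
        simpa using hkey
      rw [Real.sqrt_sq hng] at h3
      rw [Real.sqrt_mul (sq_nonneg x) R, Real.sqrt_sq hxpos.le] at h3
      exact h3
    linarith
end

section
/- Assume H1–H3. Any solution γ₁ of γ' = (γ+γ²−P)/(xγ) with γ₁(x*) < 0 exists for all x ≥ x* and satisfies −x·S_P(x*,x) ≤ γ₁(x) ≤ max(γ₁(x*), sup_{z∈[x*,x]} (√(1+4P(z)) − 1)/4) < 0 for all x ≥ x*. In particular, if ∫_{x*}^∞ (−P(z))/z³ dz < ∞ then γ₁ grows at most linearly as x → ∞. -/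
open Set intervalIntegral MeasureTheory

/-- under H1–H3, any solution with `γ(x*) < 0` is global on
`[x*,∞)` and satisfies
`−x·S_P(x*,x) ≤ γ x ≤ max(γ(x*), sup_{z∈[x*,x]}(√(1+4P z)−1)/4) < 0`;
in particular if `∫_{x*}^∞ (−P z)/z³ dz < ∞` then `γ` grows at most linearly. -/
theorem qcd_negative_solutions_global
    (P : ℝ → ℝ) (xstar : ℝ) (hxstar : 0 < xstar)
    (hP1 : Differentiable ℝ P) (hP2 : Differentiable ℝ (deriv P))
    (hP0 : P 0 = 0) (hP'0 : deriv P 0 < 0) (hP''0 : deriv (deriv P) 0 < 0)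
    (hPgt : ∀ x ∈ Icc (0 : ℝ) xstar, -(1 / 4 : ℝ) < P x)
    (hconc : ∀ x ∈ Icc (0 : ℝ) xstar, deriv (deriv P) x ≤ 0)
    (hPneg : ∀ x > (0 : ℝ), P x < 0)
    (γ : ℝ → ℝ)
    (hode : ∀ x ∈ Ici xstar,
      HasDerivAt γ ((γ x + γ x ^ 2 - P x) / (x * γ x)) x)
    (hinit : γ xstar < 0) :
    (∀ x ∈ Ici xstar,
      -(x * Real.sqrt (γ xstar ^ 2 / xstar ^ 2 + 2 * ∫ z in xstar..x, -P z / z ^ 3))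
          ≤ γ x ∧
      γ x ≤ max (γ xstar)
          (sSup ((fun z => (Real.sqrt (1 + 4 * P z) - 1) / 4) '' Icc xstar x)) ∧
      max (γ xstar)
          (sSup ((fun z => (Real.sqrt (1 + 4 * P z) - 1) / 4) '' Icc xstar x)) < 0) ∧
    (IntegrableOn (fun z => -P z / z ^ 3) (Ici xstar) →
      ∃ C > 0, ∀ x ∈ Ici xstar, |γ x| ≤ C * x) := by
  set f : ℝ → ℝ := fun z => (Real.sqrt (1 + 4 * P z) - 1) / 4 with hf_def
  have hPc : Continuous P := hP1.continuous
  have hfc : Continuous f := by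
    apply Continuous.div_const
    exact (Real.continuous_sqrt.comp (by continuity)).sub continuous_const
  have hγca : ∀ t, xstar ≤ t → ContinuousAt γ t := fun t ht => (hode t ht).continuousAt
  have hγconOn : ∀ x : ℝ, ContinuousOn γ (Icc xstar x) :=
    fun x t ht => (hγca t ht.1).continuousWithinAt
  -- f is negative on [xstar, ∞)
  have hfneg : ∀ z, xstar ≤ z → f z < 0 := by
    intro z hz
    have hz0 : 0 < z := lt_of_lt_of_le hxstar hz
    have hPz : P z < 0 := hPneg z hz0
    have h1 : Real.sqrt (1 + 4 * P z) < 1 := by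
      rw [show (1:ℝ) = Real.sqrt 1 by rw [Real.sqrt_one]]
      rw [Real.sqrt_one]
      rw [Real.sqrt_lt' one_pos]
      nlinarith
    simp only [hf_def]
    linarith
  -- sup facts
  have hsup_lt : ∀ x, xstar ≤ x → sSup (f '' Icc xstar x) < 0 := by
    intro x hx
    have hcpt : IsCompact (f '' Icc xstar x) := isCompact_Icc.image hfc
    have hne : (f '' Icc xstar x).Nonempty := (nonempty_Icc.2 hx).image f
    obtain ⟨z, hz, hzeq⟩ := hcpt.sSup_mem hne
    rw [← hzeq]
    exact hfneg z hz.1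
  have hfle : ∀ x, xstar ≤ x → ∀ t ∈ Icc xstar x, f t ≤ sSup (f '' Icc xstar x) :=
    fun x hx t ht => le_csSup (isCompact_Icc.image hfc).bddAbove (mem_image_of_mem f ht)
  -- positivity of the numerator above the separatrix
  have hnum : ∀ t g : ℝ, 0 < t → f t < g → g < 0 → 0 < g + g ^ 2 - P t := by
    intro t g ht hfg hg0
    set D := 1 + 4 * P t with hD
    have h0 : Real.sqrt D - 1 < 4 * g := by
      have : (Real.sqrt D - 1) / 4 < g := hfg
      linarith
    have h1 : Real.sqrt D < 2 * g + 1 := by linarith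
    have hs : 0 ≤ Real.sqrt D := Real.sqrt_nonneg _
    have h2 : D ≤ Real.sqrt D ^ 2 := by
      rcases le_or_gt 0 D with h | h
      · rw [Real.sq_sqrt h]
      · nlinarith [sq_nonneg (Real.sqrt D)]
    nlinarith [h1, h2, hs]
  -- upper bound
  have hub : ∀ x, xstar ≤ x → γ x ≤ max (γ xstar) (sSup (f '' Icc xstar x)) := by
    intro x hx
    by_contra hcon
    push_neg at hcon
    set c := max (γ xstar) (sSup (f '' Icc xstar x)) with hc
    have hc0 : c < 0 := max_lt hinit (hsup_lt x hx)
    set A := {t | t ∈ Icc xstar x ∧ γ t ≤ c} with hA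
    have hxA : xstar ∈ A := ⟨⟨le_refl _, hx⟩, le_max_left _ _⟩
    have hAne : A.Nonempty := ⟨xstar, hxA⟩
    have hAsub : A ⊆ Icc xstar x := fun t ht => ht.1
    have hconOn : ContinuousOn γ (Icc xstar x) := hγconOn x
    have hAclosed : IsClosed A := by
      have : A = Icc xstar x ∩ γ ⁻¹' (Iic c) := by
        ext t
        simp only [hA, Set.mem_setOf_eq, Set.mem_inter_iff, Set.mem_preimage, Set.mem_Iic]
      rw [this]
      exact hconOn.preimage_isClosed_of_isClosed isClosed_Icc isClosed_Iic
    have hAcpt : IsCompact A := isCompact_Icc.of_isClosed_subset hAclosed hAsub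
    set s := sSup A with hs_def
    have hsA : s ∈ A := hAcpt.sSup_mem hAne
    have hs1 : xstar ≤ s := (hAsub hsA).1
    have hs2 : s ≤ x := (hAsub hsA).2
    have hγs : γ s ≤ c := hsA.2
    have hslt : s < x := by
      rcases lt_or_eq_of_le hs2 with h | h
      · exact h
      · exfalso; rw [h] at hγs; exact absurd hγs (not_le.2 hcon)
    have hgt : ∀ t, s < t → t ≤ x → c < γ t := by
      intro t h1 h2
      by_contra h
      push_neg at h
      have : t ≤ s := le_csSup hAcpt.bddAbove ⟨⟨le_trans hs1 h1.le, h2⟩, h⟩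
      linarith
    have hev : ∀ᶠ t in nhds s, γ t < 0 := by
      have hten : Filter.Tendsto γ (nhds s) (nhds (γ s)) := hγca s hs1
      exact hten.eventually_lt_const (lt_of_le_of_lt hγs hc0)
    obtain ⟨δ, hδ0, hδ⟩ := Metric.eventually_nhds_iff.1 hev
    set b := min (s + δ / 2) x with hb_def
    have hsb : s < b := lt_min (by linarith) hslt
    have hbx : b ≤ x := min_le_right _ _
    have hneg : ∀ t ∈ Icc s b, γ t < 0 := by
      intro t ht
      apply hδ
      rw [Real.dist_eq, abs_lt]
      have : t ≤ s + δ / 2 := le_trans ht.2 (min_le_left _ _)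
      constructor <;> [linarith [ht.1]; linarith]
    have hanti : StrictAntiOn γ (Icc s b) := by
      apply strictAntiOn_of_deriv_neg (convex_Icc s b)
      · exact fun t ht => (hγca t (le_trans hs1 ht.1)).continuousWithinAt
      · rw [interior_Icc]
        intro t ht
        have htx : xstar ≤ t := le_trans hs1 ht.1.le
        have ht0 : 0 < t := lt_of_lt_of_le hxstar htx
        have hγt0 : γ t < 0 := hneg t ⟨ht.1.le, ht.2.le⟩
        have hγtc : c < γ t := hgt t ht.1 (le_trans ht.2.le hbx)
        have hft : f t ≤ c :=
          (hfle x hx t ⟨htx, le_trans ht.2.le hbx⟩).trans (le_max_right _ _)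
        have hN := hnum t (γ t) ht0 (lt_of_le_of_lt hft hγtc) hγt0
        rw [(hode t htx).deriv]
        exact div_neg_of_pos_of_neg hN (mul_neg_of_pos_of_neg ht0 hγt0)
    have h1 : γ b < γ s := hanti ⟨le_refl s, hsb.le⟩ ⟨hsb.le, le_refl b⟩ hsb
    have h2 : c < γ b := hgt b hsb hbx
    linarith
  have hγneg : ∀ t, xstar ≤ t → γ t < 0 :=
    fun t ht => lt_of_le_of_lt (hub t ht) (max_lt hinit (hsup_lt t ht))
  -- FTC for u = γ²/x²
  have hFTC : ∀ x, xstar ≤ x →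
      γ x ^ 2 / x ^ 2 - γ xstar ^ 2 / xstar ^ 2
        = ∫ t in xstar..x, 2 * (γ t - P t) / t ^ 3 := by
    intro x hx
    have hcontI : ContinuousOn (fun t => 2 * (γ t - P t) / t ^ 3) (uIcc xstar x) := by
      rw [uIcc_of_le hx]
      apply ContinuousOn.div
      · exact continuousOn_const.mul ((hγconOn x).sub hPc.continuousOn)
      · exact (continuous_pow 3).continuousOn
      · intro t ht
        have : 0 < t := lt_of_lt_of_le hxstar ht.1
        positivity
    have hderiv : ∀ t ∈ uIcc xstar x,
        HasDerivAt (fun t => γ t ^ 2 / t ^ 2) (2 * (γ t - P t) / t ^ 3) t := by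
      rw [uIcc_of_le hx]
      intro t ht
      have htx : xstar ≤ t := ht.1
      have ht0 : 0 < t := lt_of_lt_of_le hxstar htx
      have hγ0 : γ t < 0 := hγneg t htx
      have h4 := ((hode t htx).pow 2).div (hasDerivAt_pow 2 t) (by positivity)
      convert h4 using 1
      any_goals rfl
      have ht0' : t ≠ 0 := ht0.ne'
      have hγ0' : γ t ≠ 0 := hγ0.ne
      push_cast
      field_simp
      simp only [Pi.pow_apply]
      ring
    have h := intervalIntegral.integral_eq_sub_of_hasDerivAt hderiv hcontI.intervalIntegrable
    rw [h]
  -- the a priori bound |γ x| ≤ x √(A x)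
  have hAx : ∀ x, xstar ≤ x →
      γ x ^ 2 / x ^ 2 ≤ γ xstar ^ 2 / xstar ^ 2 + 2 * ∫ z in xstar..x, -P z / z ^ 3 := by
    intro x hx
    have h1 := hFTC x hx
    have hcont1 : ContinuousOn (fun t => 2 * (γ t - P t) / t ^ 3) (uIcc xstar x) := by
      rw [uIcc_of_le hx]
      apply ContinuousOn.div
      · exact continuousOn_const.mul ((hγconOn x).sub hPc.continuousOn)
      · exact (continuous_pow 3).continuousOn
      · intro t ht
        have : 0 < t := lt_of_lt_of_le hxstar ht.1
        positivity
    have hcont2 : ContinuousOn (fun t : ℝ => 2 * (-P t) / t ^ 3) (uIcc xstar x) := by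
      rw [uIcc_of_le hx]
      apply ContinuousOn.div
      · exact continuousOn_const.mul hPc.neg.continuousOn
      · exact (continuous_pow 3).continuousOn
      · intro t ht
        have : 0 < t := lt_of_lt_of_le hxstar ht.1
        positivity
    have h2 : (∫ t in xstar..x, 2 * (γ t - P t) / t ^ 3)
        ≤ ∫ t in xstar..x, 2 * (-P t) / t ^ 3 := by
      apply intervalIntegral.integral_mono_on hx
        hcont1.intervalIntegrable hcont2.intervalIntegrable
      intro t ht
      have ht0 : 0 < t := lt_of_lt_of_le hxstar ht.1
      have hγ0 : γ t < 0 := hγneg t ht.1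
      gcongr
      linarith
    have h3 : (∫ t in xstar..x, 2 * (-P t) / t ^ 3)
        = 2 * ∫ z in xstar..x, -P z / z ^ 3 := by
      rw [← intervalIntegral.integral_const_mul]
      congr 1
      ext t
      ring
    linarith
  have hbound : ∀ x, xstar ≤ x →
      |γ x| ≤ x * Real.sqrt (γ xstar ^ 2 / xstar ^ 2 + 2 * ∫ z in xstar..x, -P z / z ^ 3) := by
    intro x hx
    set Ax := γ xstar ^ 2 / xstar ^ 2 + 2 * ∫ z in xstar..x, -P z / z ^ 3 with hAxdef
    have hx0 : 0 < x := lt_of_lt_of_le hxstar hx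
    have hA0 : 0 ≤ Ax := le_trans (by positivity : (0:ℝ) ≤ γ x ^ 2 / x ^ 2) (hAx x hx)
    have h1 : γ x ^ 2 ≤ Ax * x ^ 2 := by
      have h := hAx x hx
      rw [← hAxdef] at h
      rw [div_le_iff₀ (by positivity : (0:ℝ) < x ^ 2)] at h
      linarith
    calc |γ x| = Real.sqrt (γ x ^ 2) := (Real.sqrt_sq_eq_abs _).symm
      _ ≤ Real.sqrt (Ax * x ^ 2) := Real.sqrt_le_sqrt h1
      _ = Real.sqrt Ax * x := by
          rw [Real.sqrt_mul hA0, Real.sqrt_sq hx0.le]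
      _ = x * Real.sqrt Ax := mul_comm _ _
  constructor
  · intro x hx
    refine ⟨?_, hub x hx, max_lt hinit (hsup_lt x hx)⟩
    exact neg_le_of_abs_le (hbound x hx)
  · intro hint
    set B := γ xstar ^ 2 / xstar ^ 2 + 2 * ∫ z in Ici xstar, -P z / z ^ 3 with hB
    have hg0 : ∀ z ∈ Ici xstar, (0:ℝ) ≤ -P z / z ^ 3 := by
      intro z hz
      have hz0 : 0 < z := lt_of_lt_of_le hxstar hz
      have := hPneg z hz0
      have h1 : 0 ≤ -P z := by linarith
      positivity
    have hIle : ∀ x, xstar ≤ x →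
        (∫ z in xstar..x, -P z / z ^ 3) ≤ ∫ z in Ici xstar, -P z / z ^ 3 := by
      intro x hx
      rw [intervalIntegral.integral_of_le hx]
      apply setIntegral_mono_set hint
      · exact (ae_restrict_iff' measurableSet_Ici).2 (Filter.Eventually.of_forall hg0)
      · exact HasSubset.Subset.eventuallyLE (fun z hz => le_of_lt hz.1)
    have hB0 : 0 ≤ B := by
      have := hIle xstar (le_refl _)
      have h2 : (0:ℝ) ≤ ∫ z in xstar..xstar, -P z / z ^ 3 := by
        simp
      have h3 : 0 ≤ ∫ z in Ici xstar, -P z / z ^ 3 := le_trans h2 (hIle xstar (le_refl _))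
      positivity
    refine ⟨Real.sqrt B + 1, by positivity, ?_⟩
    intro x hx
    have hx0 : 0 < x := lt_of_lt_of_le hxstar hx
    have h1 : Real.sqrt (γ xstar ^ 2 / xstar ^ 2 + 2 * ∫ z in xstar..x, -P z / z ^ 3)
        ≤ Real.sqrt B := by
      apply Real.sqrt_le_sqrt
      have := hIle x hx
      rw [hB]
      linarith
    calc |γ x| ≤ x * Real.sqrt (γ xstar ^ 2 / xstar ^ 2 + 2 * ∫ z in xstar..x, -P z / z ^ 3) :=
          hbound x hx
      _ ≤ x * (Real.sqrt B + 1) := by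
          apply mul_le_mul_of_nonneg_left _ hx0.le
          linarith
      _ = (Real.sqrt B + 1) * x := mul_comm _ _
end

section
/- Assume P(x) < 0 for all x > 0. If a solution γ₁ of γ' = (γ+γ²−P)/(xγ) satisfies γ₁(x₀) ≤ −1 for some x₀ > 0, then for all x ≥ x₀: −x·S_P(x₀,x) ≤ γ₁(x) ≤ −x·S_P(x₀,x) + x/x₀ − 1 < 0. -/
open Set intervalIntegral

/-- Auxiliary: a function with nonnegative derivative on `Ici a` is at least its
value at `a` there. -/
lemma qcd_mono_aux {a : ℝ} {f f' : ℝ → ℝ}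
    (hderiv : ∀ x ∈ Ici a, HasDerivAt f (f' x) x)
    (hnn : ∀ x ∈ Ici a, 0 ≤ f' x) :
    ∀ x ∈ Ici a, f a ≤ f x := by
  intro x hx
  have hmono : MonotoneOn f (Ici a) := by
    apply monotoneOn_of_deriv_nonneg (convex_Ici a)
    · exact fun y hy => (hderiv y hy).continuousAt.continuousWithinAt
    · intro y hy
      exact (hderiv y (interior_subset hy)).differentiableAt.differentiableWithinAt
    · intro y hy
      rw [(hderiv y (interior_subset hy)).deriv]
      exact hnn y (interior_subset hy)
  exact hmono self_mem_Ici hx hx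

/-- if a solution of the ODE satisfies `γ(x₀) ≤ −1` (with `P < 0`
on `(0,∞)`), then for all `x ≥ x₀`:
`−x·S_P(x₀,x) ≤ γ x ≤ −x·S_P(x₀,x) + x/x₀ − 1 < 0`. -/
theorem qcd_below_minus_one_bounds
    (P : ℝ → ℝ) (hPcont : ContinuousOn P (Ioi 0))
    (hPneg : ∀ x > (0 : ℝ), P x < 0)
    (γ : ℝ → ℝ) (x₀ : ℝ) (hx₀ : 0 < x₀)
    (hode : ∀ x ∈ Ici x₀,
      HasDerivAt γ ((γ x + γ x ^ 2 - P x) / (x * γ x)) x)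
    (hneg : ∀ x ∈ Ici x₀, γ x < 0)
    (hinit : γ x₀ ≤ -1) :
    ∀ x ∈ Ici x₀,
      -(x * Real.sqrt (γ x₀ ^ 2 / x₀ ^ 2 + 2 * ∫ z in x₀..x, -P z / z ^ 3)) ≤ γ x ∧
      γ x ≤ -(x * Real.sqrt (γ x₀ ^ 2 / x₀ ^ 2 + 2 * ∫ z in x₀..x, -P z / z ^ 3))
              + x / x₀ - 1 ∧
      -(x * Real.sqrt (γ x₀ ^ 2 / x₀ ^ 2 + 2 * ∫ z in x₀..x, -P z / z ^ 3))
              + x / x₀ - 1 < 0 := by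
  have hx₀' : (x₀ : ℝ) ≠ 0 := ne_of_gt hx₀
  set F : ℝ → ℝ := fun z => -P z / z ^ 3 with hFdef
  have hpos : ∀ x ∈ Ici x₀, (0:ℝ) < x := fun x hx => lt_of_lt_of_le hx₀ hx
  have hFcont : ContinuousOn F (Ioi 0) := by
    apply ContinuousOn.div hPcont.neg (continuous_pow 3).continuousOn
    intro z hz
    have hz0 : (0:ℝ) < z := hz
    positivity
  have hint : ∀ x ∈ Ici x₀, IntervalIntegrable F MeasureTheory.volume x₀ x := by
    intro x hx
    apply ContinuousOn.intervalIntegrable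
    apply hFcont.mono
    rw [uIcc_of_le hx]
    exact fun z hz => lt_of_lt_of_le hx₀ hz.1
  set I : ℝ → ℝ := fun x => γ x₀ ^ 2 / x₀ ^ 2 + 2 * ∫ z in x₀..x, F z with hIdef
  set S : ℝ → ℝ := fun x => Real.sqrt (I x) with hSdef
  have hintnn : ∀ x ∈ Ici x₀, 0 ≤ ∫ z in x₀..x, F z := by
    intro x hx
    apply intervalIntegral.integral_nonneg hx
    intro z hz
    have hz0 : (0:ℝ) < z := lt_of_lt_of_le hx₀ hz.1
    have h1 := hPneg z hz0
    have h2 : 0 ≤ -P z := by linarith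
    simp only [hFdef]
    positivity
  have hγsq : (1:ℝ) ≤ γ x₀ ^ 2 := by nlinarith
  have hIlb : ∀ x ∈ Ici x₀, (1/x₀)^2 ≤ I x := by
    intro x hx
    have h1 := hintnn x hx
    have h2 : (1:ℝ)/x₀^2 ≤ γ x₀ ^ 2 / x₀ ^ 2 := by gcongr
    simp only [hIdef]
    rw [div_pow, one_pow]
    linarith
  have hIpos : ∀ x ∈ Ici x₀, 0 < I x := by
    intro x hx
    exact lt_of_lt_of_le (by positivity) (hIlb x hx)
  have hSlb : ∀ x ∈ Ici x₀, 1/x₀ ≤ S x := by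
    intro x hx
    have h1 : Real.sqrt ((1/x₀)^2) ≤ Real.sqrt (I x) := Real.sqrt_le_sqrt (hIlb x hx)
    rwa [Real.sqrt_sq (by positivity)] at h1
  have hSpos : ∀ x ∈ Ici x₀, 0 < S x := fun x hx =>
    lt_of_lt_of_le (by positivity) (hSlb x hx)
  have hSsq : ∀ x ∈ Ici x₀, S x ^ 2 = I x := fun x hx =>
    Real.sq_sqrt (hIpos x hx).le
  -- derivative of I
  have hIderiv : ∀ x ∈ Ici x₀, HasDerivAt I (2 * F x) x := by
    intro x hx
    have h1 : HasDerivAt (fun u => ∫ z in x₀..u, F z) (F x) x :=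
      intervalIntegral.integral_hasDerivAt_right (hint x hx)
        (hFcont.stronglyMeasurableAtFilter isOpen_Ioi x (hpos x hx))
        (hFcont.continuousAt (isOpen_Ioi.mem_nhds (hpos x hx)))
    have h2 := (h1.const_mul 2).const_add (γ x₀ ^ 2 / x₀ ^ 2)
    simpa [hIdef] using h2
  -- derivative of S
  have hSderiv : ∀ x ∈ Ici x₀, HasDerivAt S (F x / S x) x := by
    intro x hx
    have h1 := (hIderiv x hx).sqrt (ne_of_gt (hIpos x hx))
    have h2 : 2 * F x / (2 * Real.sqrt (I x)) = F x / S x := by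
      rw [mul_div_mul_left _ _ (by norm_num : (2:ℝ) ≠ 0)]
    rw [h2] at h1
    exact h1
  -- derivative of (γ x / x)^2
  have hqderiv : ∀ x ∈ Ici x₀,
      HasDerivAt (fun y => (γ y / y) ^ 2) (2 * (γ x - P x) / x ^ 3) x := by
    intro x hx
    have hx0 : x ≠ 0 := ne_of_gt (hpos x hx)
    have hγx : γ x ≠ 0 := ne_of_lt (hneg x hx)
    have hq : HasDerivAt (fun y => γ y / y)
        (((γ x + γ x ^ 2 - P x) / (x * γ x) * x - γ x * 1) / x ^ 2) x :=
      (hode x hx).div (hasDerivAt_id' x) hx0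
    have h2 := hq.pow 2
    convert h2 using 1 <;> try rfl
    norm_num; field_simp
    ring
  -- lower bound function f = I - (γ/x)^2 is nondecreasing with f x₀ = 0
  have hfderiv : ∀ x ∈ Ici x₀,
      HasDerivAt (fun y => I y - (γ y / y) ^ 2) (-2 * γ x / x ^ 3) x := by
    intro x hx
    have hx0 : x ≠ 0 := ne_of_gt (hpos x hx)
    have h := (hIderiv x hx).sub (hqderiv x hx)
    convert h using 1 <;> try rfl
    simp only [hFdef]
    field_simp
    ring
  have hfnn : ∀ x ∈ Ici x₀, 0 ≤ -2 * γ x / x ^ 3 := by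
    intro x hx
    have h1 : (0:ℝ) ≤ -2 * γ x := by nlinarith [hneg x hx]
    have hx0 : (0:ℝ) < x := hpos x hx
    have h2 : (0:ℝ) < x ^ 3 := by positivity
    exact div_nonneg h1 h2.le
  have hfmono := qcd_mono_aux hfderiv hfnn
  have hfx₀ : I x₀ - (γ x₀ / x₀) ^ 2 = 0 := by
    simp only [hIdef]
    rw [intervalIntegral.integral_same, div_pow]
    ring
  -- lower bound
  have hlow : ∀ x ∈ Ici x₀, -(x * S x) ≤ γ x := by
    intro x hx
    have hx0 : (0:ℝ) < x := hpos x hx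
    have h0 := hfmono x hx
    rw [hfx₀] at h0
    have hsq : (γ x / x) ^ 2 ≤ S x ^ 2 := by rw [hSsq x hx]; linarith
    have hS := hSpos x hx
    have h1 : -(S x) ≤ γ x / x := by nlinarith [sq_nonneg (γ x / x + S x)]
    calc -(x * S x) = -(S x) * x := by ring
      _ ≤ (γ x / x) * x := mul_le_mul_of_nonneg_right h1 hx0.le
      _ = γ x := by field_simp
  -- upper bound function g = 1/x₀ - S - (γ+1)/x is nondecreasing with g x₀ = 0
  have hgderiv : ∀ x ∈ Ici x₀,
      HasDerivAt (fun y => 1/x₀ - S y - (γ y + 1) / y)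
        (P x / (x ^ 3 * S x) + P x / (γ x * x ^ 2)) x := by
    intro x hx
    have hx0 : x ≠ 0 := ne_of_gt (hpos x hx)
    have hγx : γ x ≠ 0 := ne_of_lt (hneg x hx)
    have hS0 : S x ≠ 0 := ne_of_gt (hSpos x hx)
    have h2 : HasDerivAt (fun y => (γ y + 1) / y)
        (((γ x + γ x ^ 2 - P x) / (x * γ x) * x - (γ x + 1) * 1) / x ^ 2) x :=
      ((hode x hx).add_const 1).div (hasDerivAt_id' x) hx0
    have h := ((hasDerivAt_const x (1/x₀)).sub (hSderiv x hx)).sub h2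
    convert h using 1 <;> try rfl
    simp only [hFdef]
    field_simp
    ring
  have hgnn : ∀ x ∈ Ici x₀, 0 ≤ P x / (x ^ 3 * S x) + P x / (γ x * x ^ 2) := by
    intro x hx
    have hx0 : (0:ℝ) < x := hpos x hx
    have hγx : γ x < 0 := hneg x hx
    have hS := hSpos x hx
    have hP : P x < 0 := hPneg x hx0
    have hnum : P x * (γ x + x * S x) ≤ 0 :=
      mul_nonpos_of_nonpos_of_nonneg hP.le (by linarith [hlow x hx])
    have hden : γ x * x ^ 3 * S x < 0 := by
      have hx3 : (0:ℝ) < x ^ 3 := by positivity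
      exact mul_neg_of_neg_of_pos (mul_neg_of_neg_of_pos hγx hx3) hS
    have heq : P x / (x ^ 3 * S x) + P x / (γ x * x ^ 2) =
        (P x * (γ x + x * S x)) / (γ x * x ^ 3 * S x) := by
      field_simp [hx0.ne', hγx.ne, hS.ne']
    rw [heq]
    exact div_nonneg_iff.mpr (Or.inr ⟨hnum, hden.le⟩)
  have hgmono := qcd_mono_aux hgderiv hgnn
  have hSx₀ : S x₀ = -γ x₀ / x₀ := by
    have hIx₀ : I x₀ = (-γ x₀ / x₀) ^ 2 := by
      simp only [hIdef]
      rw [intervalIntegral.integral_same]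
      field_simp
      ring
    rw [hSdef]
    simp only
    rw [hIx₀]
    have hγ0 : (0:ℝ) ≤ -γ x₀ := by linarith [hneg x₀ self_mem_Ici]
    exact Real.sqrt_sq (div_nonneg hγ0 hx₀.le)
  have hgx₀ : 1/x₀ - S x₀ - (γ x₀ + 1) / x₀ = 0 := by
    rw [hSx₀]; field_simp; ring
  -- conclude
  intro x hx
  have hx0 : (0:ℝ) < x := hpos x hx
  have hlow' := hlow x hx
  have hup : γ x ≤ -(x * S x) + x / x₀ - 1 := by
    have h0 := hgmono x hx
    rw [hgx₀] at h0
    have h1 : (γ x + 1) / x ≤ 1/x₀ - S x := by linarith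
    have h2 : (γ x + 1) / x * x ≤ (1/x₀ - S x) * x :=
      mul_le_mul_of_nonneg_right h1 hx0.le
    rw [div_mul_cancel₀ _ (ne_of_gt hx0)] at h2
    have : (1/x₀ - S x) * x = x / x₀ - x * S x := by ring
    linarith [this ▸ h2]
  have hlt : -(x * S x) + x / x₀ - 1 < 0 := by
    have h1 : 1/x₀ * x ≤ S x * x := mul_le_mul_of_nonneg_right (hSlb x hx) hx0.le
    have h2 : 1/x₀ * x = x / x₀ := by ring
    nlinarith
  exact ⟨hlow', hup, hlt⟩
end

section
/- Assume H1–H3 and that there is an interval [x_c,x_d] with x_c > x* such that −∫_{x_c}^{x_d} (1+4P(z))/(2z) dz ≥ 1 (hypothesis S3). Then any solution with −1 < γ₁(x*) < 0 attains the value −1: there exists x₀ > x* with γ₁(x₀) = −1. Key inequality: if −1 < γ₁(x) < 0 on [x_c, x_d], then d/dx(γ₁(x)²) ≥ −(4P(x)+1)/(2x), so γ₁(x_d) ≤ −√(γ₁(x_c)² − ∫_{x_c}^{x_d} (1+4P(z))/(2z) dz) < −1, a contradiction. -/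
open Set intervalIntegral

/-- under H1–H3 and S3 (there is `[x_c,x_d]` with `x_c > x*` and
`−∫_{x_c}^{x_d}(1+4P z)/(2z) dz ≥ 1`), any global solution with
`−1 < γ(x*) < 0` attains the value `−1` at some `x₀ > x*`. -/
theorem qcd_reaches_minus_one
    (P : ℝ → ℝ) (xstar : ℝ) (hxstar : 0 < xstar)
    (hP1 : Differentiable ℝ P) (hP2 : Differentiable ℝ (deriv P))
    (hP0 : P 0 = 0) (hP'0 : deriv P 0 < 0) (hP''0 : deriv (deriv P) 0 < 0)
    (hPgt : ∀ x ∈ Icc (0 : ℝ) xstar, -(1 / 4 : ℝ) < P x)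
    (hconc : ∀ x ∈ Icc (0 : ℝ) xstar, deriv (deriv P) x ≤ 0)
    (hPneg : ∀ x > (0 : ℝ), P x < 0)
    (xc xd : ℝ) (hxc : xstar < xc) (hxcd : xc ≤ xd)
    (hS3 : 1 ≤ -(∫ z in xc..xd, (1 + 4 * P z) / (2 * z)))
    (γ : ℝ → ℝ)
    (hode : ∀ x ∈ Ici xstar,
      HasDerivAt γ ((γ x + γ x ^ 2 - P x) / (x * γ x)) x)
    (hneg : ∀ x ∈ Ici xstar, γ x < 0)
    (hinit : -1 < γ xstar ∧ γ xstar < 0) :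
    ∃ x₀ > xstar, γ x₀ = -1 := by
  by_contra h
  push_neg at h
  -- γ is continuous on Ici xstar
  have hcont : ContinuousOn γ (Ici xstar) := fun x hx =>
    (hode x hx).continuousAt.continuousWithinAt
  -- γ stays above -1
  have hgt : ∀ x ∈ Ici xstar, -1 < γ x := by
    intro b hb
    by_contra hle
    push_neg at hle
    have hb' : xstar ≤ b := hb
    have hcont' : ContinuousOn γ (Icc xstar b) :=
      hcont.mono (Icc_subset_Ici_self)
    have hmem : (-1 : ℝ) ∈ Icc (γ b) (γ xstar) := ⟨hle, le_of_lt hinit.1⟩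
    obtain ⟨c, hc, hc'⟩ := intermediate_value_Icc' hb' hcont' hmem
    have hcx : xstar < c := by
      rcases lt_or_eq_of_le hc.1 with h1 | h1
      · exact h1
      · exfalso; rw [← h1] at hc'; linarith [hinit.1]
    exact h c hcx hc'
  -- basic facts on [xc, xd]
  have hsub : Icc xc xd ⊆ Ici xstar := fun z hz => le_trans (le_of_lt hxc) hz.1
  have hpos : ∀ z ∈ Icc xc xd, (0 : ℝ) < z := fun z hz =>
    lt_trans hxstar (lt_of_lt_of_le hxc hz.1)
  -- derivative of γ² on [xc, xd]
  have hsq : ∀ z ∈ Icc xc xd,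
      HasDerivAt (fun x => γ x ^ 2) (2 * (γ z + γ z ^ 2 - P z) / z) z := by
    intro z hz
    have hz' := hsub hz
    have hγne : γ z ≠ 0 := ne_of_lt (hneg z hz')
    have hzne : z ≠ 0 := ne_of_gt (hpos z hz)
    have := (hode z hz').pow 2
    convert this using 1
    all_goals try rfl
    field_simp
    ring
  -- continuity of integrands
  have hγc : ContinuousOn γ (Icc xc xd) := hcont.mono hsub
  have hcont1 : ContinuousOn (fun z => 2 * (γ z + γ z ^ 2 - P z) / z) (Icc xc xd) := by
    apply ContinuousOn.div
    · exact (continuousOn_const.mul ((hγc.add (hγc.pow 2)).sub hP1.continuous.continuousOn))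
    · exact continuousOn_id
    · exact fun z hz => ne_of_gt (hpos z hz)
  have hcont2 : ContinuousOn (fun z => -((1 + 4 * P z) / (2 * z))) (Icc xc xd) := by
    apply ContinuousOn.neg
    apply ContinuousOn.div
    · exact continuousOn_const.add (continuousOn_const.mul hP1.continuous.continuousOn)
    · exact continuousOn_const.mul continuousOn_id
    · intro z hz
      have := hpos z hz
      positivity
  have hint1 : IntervalIntegrable (fun z => 2 * (γ z + γ z ^ 2 - P z) / z)
      MeasureTheory.volume xc xd := by
    apply ContinuousOn.intervalIntegrable
    rwa [uIcc_of_le hxcd]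
  have hint2 : IntervalIntegrable (fun z => -((1 + 4 * P z) / (2 * z)))
      MeasureTheory.volume xc xd := by
    apply ContinuousOn.intervalIntegrable
    rwa [uIcc_of_le hxcd]
  -- FTC
  have hftc : ∫ z in xc..xd, 2 * (γ z + γ z ^ 2 - P z) / z
      = γ xd ^ 2 - γ xc ^ 2 := by
    apply intervalIntegral.integral_eq_sub_of_hasDerivAt
    · intro z hz
      exact hsq z (by rwa [uIcc_of_le hxcd] at hz)
    · exact hint1
  -- pointwise inequality
  have hmono : ∫ z in xc..xd, -((1 + 4 * P z) / (2 * z))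
      ≤ ∫ z in xc..xd, 2 * (γ z + γ z ^ 2 - P z) / z := by
    apply intervalIntegral.integral_mono_on hxcd hint2 hint1
    intro z hz
    have hz0 := hpos z hz
    have hγ1 := hgt z (hsub hz)
    have hγ2 := hneg z (hsub hz)
    rw [neg_div' , div_le_div_iff₀ (by positivity) hz0]
    nlinarith [sq_nonneg (2 * γ z + 1)]
  rw [hftc, intervalIntegral.integral_neg] at hmono
  have h1 : γ xd ^ 2 < 1 := by
    have := hgt xd (hsub ⟨hxcd, le_refl xd⟩)
    have := hneg xd (hsub ⟨hxcd, le_refl xd⟩)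
    nlinarith
  nlinarith [sq_nonneg (γ xc)]
end

section
/- Let γ₁ ∈ C¹((0,∞)) with γ₁ < 0, and suppose −1 < γ₁(x) ≤ 0 for all x > 0 (γ₁ never reaches −1). Then ∫_x^∞ dz/(z γ₁(z)) = −∞ for every x > 0, i.e. the maximal solution of dX/dt = Xγ₁(X), X(0)=x, exists for all t ∈ ℝ. Conversely, if γ₁(x₀) ≤ −1 for some x₀ and γ₁(x) ≤ −c x for x large (some c > 0), then ∫_x^∞ dz/(zγ₁(z)) is finite and the running coupling blows up at the finite backward time L_∞(x). -/
open Set Filter MeasureTheory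
open Topology

noncomputable def Gfun (γ₁ : ℝ → ℝ) (x : ℝ) : ℝ → ℝ := fun y => ∫ t in x..y, (t * γ₁ t)⁻¹

variable {γ₁ : ℝ → ℝ}

lemma gcont (hC1 : ContDiffOn ℝ 1 γ₁ (Ioi 0)) (hneg : ∀ x > (0:ℝ), γ₁ x < 0) :
    ContinuousOn (fun z : ℝ => (z * γ₁ z)⁻¹) (Ioi 0) := by
  apply ContinuousOn.inv₀ (continuousOn_id.mul hC1.continuousOn)
  intro z hz
  exact (mul_neg_of_pos_of_neg hz (hneg z hz)).ne

lemma gneg (hneg : ∀ x > (0:ℝ), γ₁ x < 0) : ∀ z ∈ Ioi (0:ℝ), (z * γ₁ z)⁻¹ < 0 := by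
  intro z hz
  exact inv_lt_zero.mpr (mul_neg_of_pos_of_neg hz (hneg z hz))

lemma gii (hC1 : ContDiffOn ℝ 1 γ₁ (Ioi 0)) (hneg : ∀ x > (0:ℝ), γ₁ x < 0)
    {a b : ℝ} (ha : 0 < a) (hb : 0 < b) :
    IntervalIntegrable (fun z => (z * γ₁ z)⁻¹) volume a b := by
  apply ContinuousOn.intervalIntegrable
  apply (gcont hC1 hneg).mono
  exact fun z hz => lt_of_lt_of_le (lt_min ha hb) hz.1

lemma Gderiv (hC1 : ContDiffOn ℝ 1 γ₁ (Ioi 0)) (hneg : ∀ x > (0:ℝ), γ₁ x < 0)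
    {x y : ℝ} (hx : 0 < x) (hy : 0 < y) :
    HasDerivAt (fun u => ∫ t in x..u, (t * γ₁ t)⁻¹) ((y * γ₁ y)⁻¹) y := by
  apply intervalIntegral.integral_hasDerivAt_right (gii hC1 hneg hx hy)
  · exact ((gcont hC1 hneg).stronglyMeasurableAtFilter isOpen_Ioi) y hy
  · exact ((gcont hC1 hneg) y hy).continuousAt (isOpen_Ioi.mem_nhds hy)

lemma Ganti (hC1 : ContDiffOn ℝ 1 γ₁ (Ioi 0)) (hneg : ∀ x > (0:ℝ), γ₁ x < 0)
    {x : ℝ} (hx : 0 < x) :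
    StrictAntiOn (fun y => ∫ t in x..y, (t * γ₁ t)⁻¹) (Ioi 0) := by
  intro a ha b hb hab
  have hadd : (∫ t in x..a, (t * γ₁ t)⁻¹) + ∫ t in a..b, (t * γ₁ t)⁻¹
      = ∫ t in x..b, (t * γ₁ t)⁻¹ :=
    intervalIntegral.integral_add_adjacent_intervals (gii hC1 hneg hx ha) (gii hC1 hneg ha hb)
  have hpos : 0 < ∫ t in a..b, -(t * γ₁ t)⁻¹ := by
    apply intervalIntegral.intervalIntegral_pos_of_pos_on ((gii hC1 hneg ha hb).neg)
    · intro z hz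
      have : z ∈ Ioi (0:ℝ) := lt_trans ha hz.1
      simpa using gneg hneg z this
    · exact hab
  rw [intervalIntegral.integral_neg] at hpos
  simp only []
  linarith

lemma GcontOn (hC1 : ContDiffOn ℝ 1 γ₁ (Ioi 0)) (hneg : ∀ x > (0:ℝ), γ₁ x < 0)
    {x a b : ℝ} (hx : 0 < x) (ha : 0 < a) :
    ContinuousOn (fun y => ∫ t in x..y, (t * γ₁ t)⁻¹) (Icc a b) := by
  intro y hy
  exact ((Gderiv hC1 hneg hx (lt_of_lt_of_le ha hy.1)).continuousAt).continuousWithinAt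

/-- membership of the image of `G` is a neighborhood of each of its points -/

lemma Tnhds (hC1 : ContDiffOn ℝ 1 γ₁ (Ioi 0)) (hneg : ∀ x > (0:ℝ), γ₁ x < 0)
    {x y : ℝ} (hx : 0 < x) (hy : 0 < y) :
    ((fun y => ∫ t in x..y, (t * γ₁ t)⁻¹) '' (Ioi 0)) ∈
      𝓝 ((fun y => ∫ t in x..y, (t * γ₁ t)⁻¹) y) := by
  set G := fun y => ∫ t in x..y, (t * γ₁ t)⁻¹ with hG
  have h2 : (0:ℝ) < y/2 := by linarith
  have hmem : Icc (G (y+1)) (G (y/2)) ⊆ G '' (Ioi 0) := by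
    refine subset_trans (intermediate_value_Icc' (by linarith) ?_) (image_mono ?_)
    · exact GcontOn hC1 hneg hx h2
    · exact fun z hz => lt_of_lt_of_le h2 hz.1
  have h1 : G (y+1) < G y := Ganti hC1 hneg hx hy (mem_Ioi.mpr (by linarith)) (by linarith)
  have h3 : G y < G (y/2) := Ganti hC1 hneg hx h2 hy (by linarith)
  exact mem_of_superset (Ioo_mem_nhds h1 h3) (subset_trans Ioo_subset_Icc_self hmem)

lemma exists_inverse (hC1 : ContDiffOn ℝ 1 γ₁ (Ioi 0)) (hneg : ∀ x > (0:ℝ), γ₁ x < 0)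
    {x : ℝ} (hx : 0 < x) :
    ∃ X : ℝ → ℝ, (∀ y, 0 < y → X (∫ t in x..y, (t * γ₁ t)⁻¹) = y) ∧
      ∀ t ∈ (fun y => ∫ t in x..y, (t * γ₁ t)⁻¹) '' (Ioi 0),
        0 < X t ∧ (∫ s in x..(X t), (s * γ₁ s)⁻¹) = t ∧
          HasDerivAt X (X t * γ₁ (X t)) t := by
  classical
  set G := fun y => ∫ t in x..y, (t * γ₁ t)⁻¹ with hGdef
  set T := G '' (Ioi 0) with hTdef
  have hinj : InjOn G (Ioi 0) := (Ganti hC1 hneg hx).injOn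
  set X : ℝ → ℝ := fun t => if h : t ∈ T then h.choose else 1 with hXdef
  have hXmem : ∀ t (h : t ∈ T), X t ∈ Ioi (0:ℝ) ∧ G (X t) = t := by
    intro t h
    have := h.choose_spec
    simp only [hXdef, dif_pos h]
    exact this
  have hleft : ∀ y, 0 < y → X (G y) = y := by
    intro y hy
    have h : G y ∈ T := mem_image_of_mem G hy
    exact hinj (hXmem _ h).1 hy (hXmem _ h).2
  refine ⟨X, hleft, ?_⟩
  intro t ht
  obtain ⟨hXpos, hGXt⟩ := hXmem t ht
  have hanti : StrictAntiOn X T := by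
    intro s hs r hr hsr
    by_contra hle
    push_neg at hle
    have hiff : G (X r) ≤ G (X s) ↔ X s ≤ X r :=
      (Ganti hC1 hneg hx).le_iff_ge (hXmem _ hr).1 (hXmem _ hs).1
    have h1 : G (X r) ≤ G (X s) := hiff.mpr hle
    rw [(hXmem _ hs).2, (hXmem _ hr).2] at h1
    linarith
  have himg : X '' T = Ioi 0 := by
    apply Subset.antisymm
    · rintro - ⟨s, hs, rfl⟩; exact (hXmem _ hs).1
    · intro y hy; exact ⟨G y, mem_image_of_mem G hy, hleft y hy⟩
  have hTn : T ∈ 𝓝 t := by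
    rw [← hGXt]; exact Tnhds hC1 hneg hx hXpos
  have hcont : ContinuousAt X t := by
    have hmono : StrictMonoOn (fun s => -X s) T := fun a ha b hb hab =>
      neg_lt_neg (hanti ha hb hab)
    have himg2 : (fun s => -X s) '' T ∈ 𝓝 (-X t) := by
      have : (fun s => -X s) '' T = Iio 0 := by
        rw [show (fun s => -X s) = (fun u : ℝ => -u) ∘ X from rfl, image_comp, himg]
        simp
      rw [this]
      exact Iio_mem_nhds (neg_neg_iff_pos.mpr hXpos)
    simpa [Pi.neg_def] using (hmono.continuousAt_of_image_mem_nhds hTn himg2).neg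
  have hfg : ∀ᶠ s in 𝓝 t, G (X s) = s := by
    filter_upwards [hTn] with s hs using (hXmem _ hs).2
  have hGd : HasDerivAt G ((X t * γ₁ (X t))⁻¹) (X t) := Gderiv hC1 hneg hx hXpos
  have hne : ((X t * γ₁ (X t))⁻¹) ≠ 0 := by
    have := gneg hneg (X t) hXpos
    rw [← hGXt] at *
    exact ne_of_lt this
  have := HasDerivAt.of_local_left_inverse hcont hGd hne hfg
  refine ⟨hXpos, hGXt, by simpa using this⟩

lemma gbound (hone : ∀ x > (0:ℝ), -1 < γ₁ x) (hneg : ∀ x > (0:ℝ), γ₁ x < 0)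
    {z : ℝ} (hz : 0 < z) : (z * γ₁ z)⁻¹ ≤ -z⁻¹ := by
  have h1 := hone z hz
  have h2 := hneg z hz
  have hu : 0 < -γ₁ z := by linarith
  have h3 : z * (-γ₁ z) ≤ z := by nlinarith
  have h4 : z⁻¹ ≤ (z * (-γ₁ z))⁻¹ := by
    apply inv_anti₀ (by positivity) h3
  have h5 : z * γ₁ z = -(z * (-γ₁ z)) := by ring
  rw [h5, inv_neg]
  linarith

lemma Gle (hC1 : ContDiffOn ℝ 1 γ₁ (Ioi 0)) (hneg : ∀ x > (0:ℝ), γ₁ x < 0)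
    (hone : ∀ x > (0:ℝ), -1 < γ₁ x) {x a b : ℝ} (hx : 0 < x) (ha : 0 < a) (hab : a ≤ b) :
    (∫ t in a..b, (t * γ₁ t)⁻¹) ≤ Real.log a - Real.log b := by
  have hb : 0 < b := lt_of_lt_of_le ha hab
  have h0 : (0:ℝ) ∉ uIcc a b := by
    rw [mem_uIcc]; push_neg
    constructor <;> intro h <;> linarith [lt_min ha hb]
  have hint2 : IntervalIntegrable (fun z : ℝ => -z⁻¹) volume a b := by
    apply IntervalIntegrable.neg
    rw [intervalIntegrable_inv_iff]
    right; exact h0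
  have hmono := intervalIntegral.integral_mono_on hab (gii hC1 hneg ha hb) hint2
    (fun z hz => gbound hone hneg (lt_of_lt_of_le ha hz.1))
  calc (∫ t in a..b, (t * γ₁ t)⁻¹) ≤ ∫ t in a..b, -t⁻¹ := hmono
    _ = Real.log a - Real.log b := by
        rw [intervalIntegral.integral_neg, integral_inv h0, Real.log_div hb.ne' ha.ne']
        ring

lemma Gsurj (hC1 : ContDiffOn ℝ 1 γ₁ (Ioi 0)) (hneg : ∀ x > (0:ℝ), γ₁ x < 0)
    (hone : ∀ x > (0:ℝ), -1 < γ₁ x) {x : ℝ} (hx : 0 < x) (t : ℝ) :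
    ∃ y > (0:ℝ), (∫ s in x..y, (s * γ₁ s)⁻¹) = t := by
  set G := fun y => ∫ s in x..y, (s * γ₁ s)⁻¹ with hGdef
  set a := min (x/2) (Real.exp (Real.log x - t - 1)) with hadef
  set b := max (x+1) (Real.exp (Real.log x - t + 1)) with hbdef
  have ha : 0 < a := lt_min (by linarith) (Real.exp_pos _)
  have hax : a ≤ x := le_trans (min_le_left _ _) (by linarith)
  have hxb : x ≤ b := le_trans (by linarith) (le_max_left _ _)
  have hb : 0 < b := lt_of_lt_of_le hx hxb
  have hab : a ≤ b := le_trans hax hxb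
  have hGa : t < G a := by
    have h1 : G a = -(∫ s in a..x, (s * γ₁ s)⁻¹) := by
      rw [hGdef]; simp only []; rw [intervalIntegral.integral_symm]
    have h2 := Gle hC1 hneg hone hx ha hax
    have h3 : Real.log a ≤ Real.log x - t - 1 := by
      calc Real.log a ≤ Real.log (Real.exp (Real.log x - t - 1)) :=
            Real.log_le_log ha (min_le_right _ _)
        _ = Real.log x - t - 1 := Real.log_exp _
    rw [h1]; linarith
  have hGb : G b < t := by
    have h2 : G b ≤ Real.log x - Real.log b := Gle hC1 hneg hone hx hx hxb
    have h3 : Real.log x - t + 1 ≤ Real.log b := by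
      calc Real.log x - t + 1 = Real.log (Real.exp (Real.log x - t + 1)) :=
            (Real.log_exp _).symm
        _ ≤ Real.log b := Real.log_le_log (Real.exp_pos _) (le_max_right _ _)
    linarith
  have hIVT := intermediate_value_Icc' hab (GcontOn hC1 hneg hx ha (b := b))
  have ht : t ∈ Icc (G b) (G a) := ⟨le_of_lt hGb, le_of_lt hGa⟩
  obtain ⟨y, hy, hGy⟩ := hIVT ht
  exact ⟨y, lt_of_lt_of_le ha hy.1, hGy⟩

lemma part1a (hone : ∀ x > (0:ℝ), -1 < γ₁ x) (hneg : ∀ x > (0:ℝ), γ₁ x < 0)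
    {x : ℝ} (hx : 0 < x) : ¬ IntegrableOn (fun z => (z * γ₁ z)⁻¹) (Ioi x) := by
  intro h
  apply not_IntegrableOn_Ioi_inv (a := x)
  apply Integrable.mono h (measurable_inv.aestronglyMeasurable)
  rw [ae_restrict_iff' measurableSet_Ioi]
  filter_upwards with z hz
  have hz0 : 0 < z := lt_trans hx hz
  have h1 := hone z hz0
  have h2 := hneg z hz0
  have hu : 0 < -γ₁ z := by linarith
  have h3 : z * (-γ₁ z) ≤ z := by nlinarith
  have h4 : z⁻¹ ≤ (z * (-γ₁ z))⁻¹ := inv_anti₀ (by positivity) h3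
  rw [Real.norm_eq_abs, Real.norm_eq_abs, abs_inv, abs_inv, abs_of_pos hz0,
    abs_of_neg (mul_neg_of_pos_of_neg hz0 h2)]
  calc z⁻¹ ≤ (z * (-γ₁ z))⁻¹ := h4
    _ = (-(z * γ₁ z))⁻¹ := by ring_nf
  

lemma part2int (hC1 : ContDiffOn ℝ 1 γ₁ (Ioi 0)) (hneg : ∀ x > (0:ℝ), γ₁ x < 0)
    {c M : ℝ} (hc : 0 < c) (hdecay : ∀ x ≥ M, γ₁ x ≤ -c * x)
    {x : ℝ} (hx : 0 < x) : IntegrableOn (fun z => (z * γ₁ z)⁻¹) (Ioi x) := by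
  set M' := max M (max x 1) with hM'
  have hxM' : x ≤ M' := le_trans (le_max_left _ _) (le_max_right _ _)
  have hM'1 : (1:ℝ) ≤ M' := le_trans (le_max_right _ _) (le_max_right _ _)
  have hM'0 : (0:ℝ) < M' := lt_of_lt_of_le one_pos hM'1
  have h1 : IntegrableOn (fun z => (z * γ₁ z)⁻¹) (Ioc x M') := by
    apply IntegrableOn.mono_set _ Ioc_subset_Icc_self
    apply ContinuousOn.integrableOn_Icc
    apply (gcont hC1 hneg).mono
    exact fun z hz => lt_of_lt_of_le hx hz.1
  have h2 : IntegrableOn (fun z => (z * γ₁ z)⁻¹) (Ioi M') := by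
    have hbig : IntegrableOn (fun z : ℝ => c⁻¹ * z ^ (-2 : ℝ)) (Ioi M') :=
      ((integrableOn_Ioi_rpow_iff hM'0).mpr (by norm_num)).const_mul c⁻¹
    apply hbig.mono' (((gcont hC1 hneg).mono (fun z hz => lt_of_lt_of_le hM'0 (le_of_lt hz))).aestronglyMeasurable measurableSet_Ioi)
    rw [ae_restrict_iff' measurableSet_Ioi]
    filter_upwards with z hz
    have hz0 : 0 < z := lt_trans hM'0 hz
    have hd := hdecay z (le_trans (le_max_left _ _) (le_of_lt hz))
    have hg2 := hneg z hz0
    have hcz : c * z ≤ -γ₁ z := by linarith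
    have h5 : c * z * z ≤ z * (-γ₁ z) := by nlinarith
    have h6 : (z * (-γ₁ z))⁻¹ ≤ (c * z * z)⁻¹ := inv_anti₀ (by positivity) h5
    rw [Real.norm_eq_abs, abs_inv, abs_of_neg (mul_neg_of_pos_of_neg hz0 hg2)]
    calc (-(z * γ₁ z))⁻¹ = (z * (-γ₁ z))⁻¹ := by ring_nf
      _ ≤ (c * z * z)⁻¹ := h6
      _ = c⁻¹ * z ^ (-2:ℝ) := by
          rw [Real.rpow_neg hz0.le, show ((2:ℝ)) = ((2:ℕ):ℝ) by norm_num,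
            Real.rpow_natCast]
          field_simp
  have : Ioi x = Ioc x M' ∪ Ioi M' := (Ioc_union_Ioi_eq_Ioi hxM').symm
  rw [this]
  exact h1.union h2

lemma Ganti' (hC1 : ContDiffOn ℝ 1 γ₁ (Ioi 0)) (hneg : ∀ x > (0:ℝ), γ₁ x < 0)
    {x : ℝ} (hx : 0 < x) : StrictAntiOn (Gfun γ₁ x) (Ioi 0) := Ganti hC1 hneg hx

lemma GcontOn' (hC1 : ContDiffOn ℝ 1 γ₁ (Ioi 0)) (hneg : ∀ x > (0:ℝ), γ₁ x < 0)
    {x a b : ℝ} (hx : 0 < x) (ha : 0 < a) :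
    ContinuousOn (Gfun γ₁ x) (Icc a b) := GcontOn hC1 hneg hx ha

lemma exists_inverse' (hC1 : ContDiffOn ℝ 1 γ₁ (Ioi 0)) (hneg : ∀ x > (0:ℝ), γ₁ x < 0)
    {x : ℝ} (hx : 0 < x) :
    ∃ X : ℝ → ℝ, (∀ y, 0 < y → X (Gfun γ₁ x y) = y) ∧
      ∀ t ∈ Gfun γ₁ x '' (Ioi 0),
        0 < X t ∧ Gfun γ₁ x (X t) = t ∧ HasDerivAt X (X t * γ₁ (X t)) t :=
  exists_inverse hC1 hneg hx

lemma part2blow (hC1 : ContDiffOn ℝ 1 γ₁ (Ioi 0)) (hneg : ∀ x > (0:ℝ), γ₁ x < 0)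
    {c M : ℝ} (hc : 0 < c) (hdecay : ∀ x ≥ M, γ₁ x ≤ -c * x)
    {x : ℝ} (hx : 0 < x) (X : ℝ → ℝ) (hX0 : X 0 = x)
    (hXode : ∀ t ∈ Ioi (∫ z in Ioi x, (z * γ₁ z)⁻¹), HasDerivAt X (X t * γ₁ (X t)) t) :
    Tendsto X (𝓝[>] (∫ z in Ioi x, (z * γ₁ z)⁻¹)) atTop := by
  classical
  set L := ∫ z in Ioi x, (z * γ₁ z)⁻¹ with hLdef
  obtain ⟨Y, hYleft, hYspec⟩ := exists_inverse' hC1 hneg hx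
  have hInt := part2int hC1 hneg hc hdecay hx
  have hGx0 : Gfun γ₁ x x = 0 := intervalIntegral.integral_same
  have hGtend : Tendsto (Gfun γ₁ x) atTop (𝓝 L) :=
    intervalIntegral_tendsto_integral_Ioi x hInt tendsto_id
  have hGanti := Ganti' hC1 hneg hx
  have hLle : ∀ z, 0 < z → L ≤ Gfun γ₁ x z := by
    intro z hz
    apply le_of_tendsto hGtend
    filter_upwards [Ici_mem_atTop z] with w hw
    exact hGanti.antitoneOn (mem_Ioi.mpr hz) (mem_Ioi.mpr (lt_of_lt_of_le hz hw)) hw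
  have hGgt : ∀ y, 0 < y → L < Gfun γ₁ x y := fun y hy =>
    lt_of_le_of_lt (hLle (y+1) (by linarith))
      (hGanti (mem_Ioi.mpr hy) (mem_Ioi.mpr (by linarith)) (by linarith))
  have hL0 : L < 0 := by rw [← hGx0]; exact hGgt x hx
  have hx2 : (0:ℝ) < x/2 := by linarith
  have hu : 0 < Gfun γ₁ x (x/2) := by
    rw [← hGx0]
    exact hGanti (mem_Ioi.mpr hx2) (mem_Ioi.mpr hx) (by linarith)
  have hTIoc : Ioc L (Gfun γ₁ x (x/2)) ⊆ Gfun γ₁ x '' (Ioi 0) := by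
    intro t ht
    obtain ⟨b, hGb, hbx⟩ := ((hGtend.eventually_lt_const ht.1).and
      (eventually_ge_atTop (x/2))).exists
    obtain ⟨y, hy, hGy⟩ := intermediate_value_Icc' hbx
      (GcontOn' hC1 hneg hx hx2 (b := b)) ⟨hGb.le, ht.2⟩
    exact ⟨y, mem_Ioi.mpr (lt_of_lt_of_le hx2 hy.1), hGy⟩
  have hY0 : Y 0 = x := by have h := hYleft x hx; rwa [hGx0] at h
  have hFlip : ∀ y, 0 < y → ContDiffAt ℝ 1 (fun w : ℝ => w * γ₁ w) y := fun y hy =>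
    (contDiffOn_id.mul hC1).contDiffAt (isOpen_Ioi.mem_nhds hy)
  have key : ∀ t₁ ∈ Ioo L (0:ℝ), ∀ s ∈ Icc t₁ (0:ℝ), X s = Y s := by
    intro t₁ ht₁
    set B := {t : ℝ | t ∈ Icc t₁ (0:ℝ) ∧ ∀ s ∈ Icc t (0:ℝ), X s = Y s} with hBdef
    have h0B : (0:ℝ) ∈ B := by
      refine ⟨⟨ht₁.2.le, le_refl 0⟩, fun s hs => ?_⟩
      have : s = 0 := le_antisymm hs.2 hs.1
      rw [this, hX0, hY0]
    have hne : B.Nonempty := ⟨0, h0B⟩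
    have hbdd : BddBelow B := ⟨t₁, fun b hb => hb.1.1⟩
    have ht₁m : t₁ ≤ sInf B := le_csInf hne fun b hb => hb.1.1
    have hm0 : sInf B ≤ 0 := csInf_le hbdd h0B
    have hmL : L < sInf B := lt_of_lt_of_le ht₁.1 ht₁m
    have hright : ∀ s, sInf B < s → s ≤ 0 → X s = Y s := by
      intro s hms hs0
      obtain ⟨b, hbB, hbs⟩ := exists_lt_of_csInf_lt hne hms
      exact hbB.2 s ⟨hbs.le, hs0⟩
    have hmT : sInf B ∈ Gfun γ₁ x '' (Ioi 0) := hTIoc ⟨hmL, le_trans hm0 hu.le⟩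
    have hXmYm : X (sInf B) = Y (sInf B) := by
      rcases eq_or_lt_of_le hm0 with h | h
      · rw [h, hX0, hY0]
      · have hXc : Tendsto X (𝓝[>] sInf B) (𝓝 (X (sInf B))) :=
          ((hXode _ hmL).continuousAt).continuousWithinAt
        have hYc : Tendsto Y (𝓝[>] sInf B) (𝓝 (Y (sInf B))) :=
          ((hYspec _ hmT).2.2.continuousAt).continuousWithinAt
        have heq : X =ᶠ[𝓝[>] sInf B] Y := by
          filter_upwards [Ioo_mem_nhdsGT h] with s hs
          exact hright s hs.1 hs.2.le
        exact (tendsto_nhds_unique hYc (Filter.Tendsto.congr' heq hXc)).symm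
    have hmt₁ : sInf B ≤ t₁ := by
      by_contra hcon
      push_neg at hcon
      have hYm := hYspec _ hmT
      obtain ⟨K, tset, htset, hK⟩ := (hFlip (Y (sInf B)) hYm.1).exists_lipschitzOnWith
      have hXev : ∀ᶠ s in 𝓝 (sInf B), X s ∈ tset :=
        (hXode _ hmL).continuousAt.eventually_mem (by rw [hXmYm]; exact htset)
      have hYev : ∀ᶠ s in 𝓝 (sInf B), Y s ∈ tset :=
        hYm.2.2.continuousAt.eventually_mem htset
      have hIev : ∀ᶠ s in 𝓝 (sInf B), s ∈ Ioo L (Gfun γ₁ x (x/2)) :=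
        Ioo_mem_nhds hmL (lt_of_le_of_lt hm0 hu)
      obtain ⟨δ, hδ, hball⟩ := Metric.eventually_nhds_iff_ball.mp
        ((hXev.and hYev).and hIev)
      have hballIoo : ∀ s ∈ Ioo (sInf B - δ) (sInf B + δ),
          (X s ∈ tset ∧ Y s ∈ tset) ∧ s ∈ Ioo L (Gfun γ₁ x (x/2)) := by
        intro s hs
        exact hball s (by rw [Real.ball_eq_Ioo]; exact hs)
      have huniq : EqOn X Y (Ioo (sInf B - δ) (sInf B + δ)) := by
        apply ODE_solution_unique_of_mem_Ioo (v := fun _ w => w * γ₁ w)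
          (s := fun _ => tset) (K := K) (fun _ _ => hK)
          (t₀ := sInf B) ⟨by linarith, by linarith⟩ ?_ ?_ hXmYm
        · intro s hs
          obtain ⟨⟨h1, h2⟩, h3⟩ := hballIoo s hs
          exact ⟨hXode s h3.1, h1⟩
        · intro s hs
          obtain ⟨⟨h1, h2⟩, h3⟩ := hballIoo s hs
          exact ⟨(hYspec s (hTIoc ⟨h3.1, h3.2.le⟩)).2.2, h2⟩
      have ht₂m : max t₁ (sInf B - δ/2) < sInf B := max_lt hcon (by linarith)
      have ht₂B : max t₁ (sInf B - δ/2) ∈ B := by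
        refine ⟨⟨le_max_left _ _, le_trans ht₂m.le hm0⟩, fun s hs => ?_⟩
        rcases lt_trichotomy s (sInf B) with h | h | h
        · apply huniq
          have h4 := le_trans (le_max_right _ _) hs.1
          exact ⟨by linarith, by linarith⟩
        · rw [h]; exact hXmYm
        · exact hright s h hs.2
      have h5 := csInf_le hbdd ht₂B
      linarith
    intro s hs
    rcases eq_or_lt_of_le (le_trans hmt₁ hs.1 : sInf B ≤ s) with h | h
    · rw [← h]; exact hXmYm
    · exact hright s h hs.2
  rw [tendsto_atTop]
  intro C
  have hyx : x < max C x + 1 := by have := le_max_right C x; linarith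
  have hy0 : (0:ℝ) < max C x + 1 := lt_trans hx hyx
  have hyC : C ≤ max C x + 1 := by have := le_max_left C x; linarith
  have ht₀L : L < Gfun γ₁ x (max C x + 1) := hGgt _ hy0
  have ht₀0 : Gfun γ₁ x (max C x + 1) < 0 := by
    rw [← hGx0]; exact hGanti (mem_Ioi.mpr hx) (mem_Ioi.mpr hy0) hyx
  filter_upwards [Ioo_mem_nhdsGT ht₀L] with t ht
  have ht0 : t ∈ Ioo L (0:ℝ) := ⟨ht.1, lt_trans ht.2 ht₀0⟩
  have hXY : X t = Y t := key t ht0 t ⟨le_refl t, ht0.2.le⟩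
  have htT : t ∈ Gfun γ₁ x '' (Ioi 0) := hTIoc ⟨ht.1, le_trans ht0.2.le hu.le⟩
  have hYt := hYspec t htT
  by_contra hlt
  push_neg at hlt
  have hYty : Y t < max C x + 1 := by rw [← hXY]; linarith
  have hcmp : Gfun γ₁ x (max C x + 1) < Gfun γ₁ x (Y t) :=
    hGanti (mem_Ioi.mpr hYt.1) (mem_Ioi.mpr hy0) hYty
  rw [hYt.2.1] at hcmp
  linarith [ht.2]

/-- if `−1 < γ₁ < 0` on `(0,∞)` then `∫_x^∞ dz/(z γ₁ z) = −∞`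
(non-integrability of the negative integrand) and the running coupling exists
globally; conversely if `γ₁(x₀) ≤ −1` somewhere and `γ₁(x) ≤ −c·x` for large
`x`, then the integral is finite and the running coupling blows up at the
finite backward time `L_∞(x) = ∫_x^∞ dz/(z γ₁ z)`. -/
theorem qcd_running_coupling_dichotomy
    (γ₁ : ℝ → ℝ) (hC1 : ContDiffOn ℝ 1 γ₁ (Ioi 0))
    (hneg : ∀ x > (0 : ℝ), γ₁ x < 0) :
    ((∀ x > (0 : ℝ), -1 < γ₁ x) →
      (∀ x > (0 : ℝ), ¬ IntegrableOn (fun z => (z * γ₁ z)⁻¹) (Ioi x)) ∧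
      (∀ x > (0 : ℝ), ∃ X : ℝ → ℝ, X 0 = x ∧
        ∀ t : ℝ, HasDerivAt X (X t * γ₁ (X t)) t)) ∧
    (∀ x₀ > (0 : ℝ), γ₁ x₀ ≤ -1 →
      (∃ c > (0 : ℝ), ∃ M : ℝ, ∀ x ≥ M, γ₁ x ≤ -c * x) →
      ∀ x > (0 : ℝ),
        IntegrableOn (fun z => (z * γ₁ z)⁻¹) (Ioi x) ∧
        ∀ X : ℝ → ℝ, X 0 = x →
          (∀ t ∈ Ioi (∫ z in Ioi x, (z * γ₁ z)⁻¹),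
            HasDerivAt X (X t * γ₁ (X t)) t) →
          Tendsto X
            (nhdsWithin (∫ z in Ioi x, (z * γ₁ z)⁻¹)
              (Ioi (∫ z in Ioi x, (z * γ₁ z)⁻¹))) atTop) := by
  constructor
  · intro hone
    refine ⟨fun x hx => part1a hone hneg hx, fun x hx => ?_⟩
    obtain ⟨X, hleft, hspec⟩ := exists_inverse' hC1 hneg hx
    have hT : ∀ t : ℝ, t ∈ Gfun γ₁ x '' (Ioi 0) := by
      intro t
      obtain ⟨y, hy, hGy⟩ := Gsurj hC1 hneg hone hx t
      exact ⟨y, hy, hGy⟩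
    refine ⟨X, ?_, fun t => (hspec t (hT t)).2.2⟩
    have h := hleft x hx
    rwa [show Gfun γ₁ x x = 0 from intervalIntegral.integral_same] at h
  · intro x₀ hx₀ hle hdecay x hx
    obtain ⟨c, hc, M, hM⟩ := hdecay
    exact ⟨part2int hC1 hneg hc hM hx,
      fun X hX0 hXode => part2blow hC1 hneg hc hM hx X hX0 hXode⟩
end

section
/- Consider the QED-type ODE γ'(x) = (γ(x)+γ(x)²−P(x))/(s·x·γ(x)) with s ≥ 1, P ∈ C²([0,∞)), P > 0 on (0,∞), P(0) = 0, P'(0) ≠ 0, and initial condition γ₁(x₀) = γ₀ > 0, 0 < x₀ < 1. Assume the a priori bound γ₁(x) ≤ C_b·x·|ln x| (s=1) or γ₁(x) ≤ C_b·x^{1/s} (s>1) on [0,x₀]. Then there is a constant C = C(x₀,γ₀) > 0 such that γ₁(x) ≤ C·x for all x ∈ [0,x₀]. -/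
open Set

open Filter

lemma key_lemma
    (s : ℝ) (hs : 1 ≤ s) (P : ℝ → ℝ) (x₀ : ℝ)
    (γ : ℝ → ℝ)
    (hode : ∀ x ∈ Ioc (0 : ℝ) x₀,
      HasDerivAt γ ((γ x + γ x ^ 2 - P x) / (s * x * γ x)) x)
    (Cp : ℝ) (hCp : 0 ≤ Cp) (hPle : ∀ x ∈ Icc (0:ℝ) x₀, P x ≤ Cp * x)
    (α : ℝ) (hα : 2 * Cp + 2 ≤ α)
    (X : ℝ) (hXx₀ : X ≤ x₀) (hXα : X ≤ 1 / (2 * s * α))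
    (hγX : γ X < α * X) :
    ∀ x ∈ Ioc (0:ℝ) X, γ x ≤ α * x := by
  have hαpos : (0:ℝ) < α := by linarith
  have hspos : (0:ℝ) < s := lt_of_lt_of_le one_pos hs
  by_contra hcon
  push_neg at hcon
  obtain ⟨x₁, hx₁, hgt⟩ := hcon
  have hsub : Icc x₁ X ⊆ Ioc (0:ℝ) x₀ := fun y hy =>
    ⟨lt_of_lt_of_le hx₁.1 hy.1, le_trans hy.2 hXx₀⟩
  have hcont : ContinuousOn γ (Icc x₁ X) := fun y hy =>
    ((hode y (hsub hy)).continuousAt).continuousWithinAt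
  set S : Set ℝ := {x ∈ Icc x₁ X | γ x ≤ α * x} with hS
  have hSX : X ∈ S := ⟨⟨hx₁.2, le_refl X⟩, le_of_lt hγX⟩
  have hSsub : S ⊆ Icc x₁ X := fun y hy => hy.1
  have hSclosed : IsClosed S := by
    have : S = Icc x₁ X ∩ (fun x => γ x - α * x) ⁻¹' Iic 0 := by
      ext y; simp only [hS, mem_inter_iff, mem_preimage, mem_Iic, mem_setOf_eq]
      constructor
      · rintro ⟨h1, h2⟩; exact ⟨h1, by linarith⟩
      · rintro ⟨h1, h2⟩; exact ⟨h1, by linarith⟩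
    rw [this]
    exact ContinuousOn.preimage_isClosed_of_isClosed
      (hcont.sub (continuousOn_const.mul continuousOn_id)) isClosed_Icc isClosed_Iic
  have hSbdd : BddBelow S := ⟨x₁, fun y hy => (hSsub hy).1⟩
  set t := sInf S with ht
  have htS : t ∈ S := hSclosed.csInf_mem ⟨X, hSX⟩ hSbdd
  have htlb : ∀ y ∈ S, t ≤ y := fun y hy => csInf_le hSbdd hy
  have hx₁t : x₁ < t := by
    rcases lt_or_eq_of_le htS.1.1 with h | h
    · exact h
    · exfalso; have := htS.2; rw [← h] at this; linarith
  have hbelow : ∀ y ∈ Ico x₁ t, α * y < γ y := by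
    intro y hy
    by_contra hle
    push_neg at hle
    have : y ∈ S := ⟨⟨hy.1, le_trans (le_of_lt hy.2) htS.1.2⟩, hle⟩
    exact absurd (htlb y this) (not_le.mpr hy.2)
  have hγt : γ t = α * t := by
    have hconts : ContinuousOn (fun x => γ x - α * x) (Icc x₁ t) :=
      (hcont.mono (Icc_subset_Icc le_rfl htS.1.2)).sub
        (continuousOn_const.mul continuousOn_id)
    have h0mem : (0:ℝ) ∈ Icc ((fun x => γ x - α * x) t) ((fun x => γ x - α * x) x₁) := by
      constructor
      · simp only; linarith [htS.2]
      · simp only; linarith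
    obtain ⟨c, hc, hceq⟩ := intermediate_value_Icc' (le_of_lt hx₁t) hconts h0mem
    have hcS : c ∈ S := ⟨⟨hc.1, le_trans hc.2 htS.1.2⟩, by
      simp only at hceq; linarith⟩
    have : t ≤ c := htlb c hcS
    have hct : c = t := le_antisymm hc.2 this
    rw [← hct]; simp only at hceq; linarith
  have htIoc : t ∈ Ioc (0:ℝ) x₀ := hsub ⟨htS.1.1, htS.1.2⟩
  have htpos : 0 < t := lt_of_lt_of_le hx₁.1 htS.1.1
  have hd := hode t htIoc
  have htX : t ≤ X := htS.1.2
  have hsat : s * α * t ≤ 1 / 2 := by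
    have h1 : t ≤ 1 / (2 * s * α) := le_trans htX hXα
    have h2 : 0 < 2 * s * α := by positivity
    rw [le_div_iff₀ h2] at h1
    nlinarith
  have hPt : P t ≤ Cp * t := hPle t ⟨le_of_lt htpos, htIoc.2⟩
  have hdenpos : 0 < s * t * γ t := by
    rw [hγt]; positivity
  have hDgt : α < (γ t + γ t ^ 2 - P t) / (s * t * γ t) := by
    rw [lt_div_iff₀ hdenpos, hγt]
    nlinarith [mul_le_mul_of_nonneg_right hsat (mul_nonneg hαpos.le htpos.le),
      mul_le_mul_of_nonneg_right hα htpos.le, hPt, sq_nonneg (α * t),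
      mul_pos hαpos htpos]
  set D := (γ t + γ t ^ 2 - P t) / (s * t * γ t) with hD
  have hdh : HasDerivAt (fun x => γ x - α * x) (D - α) t := by
    have h1 : HasDerivAt (fun x : ℝ => α * x) α t := by
      simpa using (hasDerivAt_id t).const_mul α
    exact hd.sub h1
  have hslope := hasDerivAt_iff_tendsto_slope.mp hdh
  have hev : ∀ᶠ y in nhdsWithin t {t}ᶜ, 0 < slope (fun x => γ x - α * x) t y :=
    hslope.eventually (eventually_gt_nhds (by linarith : (0:ℝ) < D - α))
  have hev' : ∀ᶠ y in nhdsWithin t (Iio t), 0 < slope (fun x => γ x - α * x) t y :=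
    hev.filter_mono (nhdsWithin_mono t (fun y hy => ne_of_lt hy))
  have hev2 : ∀ᶠ y in nhdsWithin t (Iio t), x₁ < y :=
    eventually_nhdsWithin_of_eventually_nhds (eventually_gt_nhds hx₁t)
  have hev3 : ∀ᶠ y in nhdsWithin t (Iio t), y < t :=
    eventually_mem_nhdsWithin
  obtain ⟨y, hy1, hy2, hy3⟩ := (hev'.and (hev2.and hev3)).exists
  have hyslope : slope (fun x => γ x - α * x) t y = (γ y - α * y) / (y - t) := by
    rw [slope_def_field]
    rw [hγt]
    ring_nf
  rw [hyslope] at hy1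
  have hylt : γ y - α * y < 0 := by
    by_contra hge
    push_neg at hge
    have : (γ y - α * y) / (y - t) ≤ 0 :=
      div_nonpos_of_nonneg_of_nonpos hge (by linarith)
    linarith
  have := hbelow y ⟨le_of_lt hy2, hy3⟩
  linarith

/-- QED: for the ODE `γ' = (γ+γ²−P)/(s·x·γ)` with `s ≥ 1`,
`P ∈ C²`, `P(0)=0`, `P'(0) ≠ 0`, `P > 0` on `(0,∞)`, a positive solution on
`(0,x₀]` satisfying the a priori bound `γ x ≤ C_b·x·|ln x|` (if `s = 1`) or
`γ x ≤ C_b·x^{1/s}` (if `s > 1`) in fact satisfies a linear bound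
`γ x ≤ C·x` on `(0,x₀]`. -/
theorem qed_linear_bound
    (s : ℝ) (hs : 1 ≤ s)
    (P : ℝ → ℝ) (hP : ContDiff ℝ 2 P)
    (hP0 : P 0 = 0) (hP'0 : deriv P 0 ≠ 0)
    (hPpos : ∀ x > (0 : ℝ), 0 < P x)
    (x₀ γ₀ : ℝ) (hx₀ : 0 < x₀) (hx₀1 : x₀ < 1) (hγ₀ : 0 < γ₀)
    (γ : ℝ → ℝ)
    (hode : ∀ x ∈ Ioc (0 : ℝ) x₀,
      HasDerivAt γ ((γ x + γ x ^ 2 - P x) / (s * x * γ x)) x)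
    (hinit : γ x₀ = γ₀)
    (hpos : ∀ x ∈ Ioc (0 : ℝ) x₀, 0 < γ x)
    (hapriori : ∃ Cb > (0 : ℝ),
      (s = 1 → ∀ x ∈ Ioc (0 : ℝ) x₀, γ x ≤ Cb * x * |Real.log x|) ∧
      (1 < s → ∀ x ∈ Ioc (0 : ℝ) x₀, γ x ≤ Cb * x ^ (1 / s))) :
    ∃ C > (0 : ℝ), ∀ x ∈ Ioc (0 : ℝ) x₀, γ x ≤ C * x := by
  obtain ⟨Cb, hCb, hap1, hap2⟩ := hapriori
  have hspos : (0:ℝ) < s := lt_of_lt_of_le one_pos hs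
  -- bound P x ≤ Cp * x on [0, x₀]
  have hPdiff : Differentiable ℝ P := hP.differentiable (by norm_num)
  have hPderiv_cont : Continuous (deriv P) := hP.continuous_deriv (by norm_num)
  obtain ⟨cP, hcP, hcPmax'⟩ := isCompact_Icc.exists_isMaxOn
    (nonempty_Icc.mpr hx₀.le) ((hPderiv_cont.abs).continuousOn)
  rw [isMaxOn_iff] at hcPmax'
  have hcPmax : ∀ y ∈ Icc (0:ℝ) x₀, |deriv P y| ≤ |deriv P cP| := hcPmax'
  set Cp := |deriv P cP| with hCpdef
  have hCp : 0 ≤ Cp := abs_nonneg _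
  have hPle : ∀ x ∈ Icc (0:ℝ) x₀, P x ≤ Cp * x := by
    intro x hx
    have hmvt := norm_image_sub_le_of_norm_deriv_le_segment'
      (f := P) (f' := deriv P) (C := Cp) (a := (0:ℝ)) (b := x₀)
      (fun y hy => (hPdiff y).hasDerivAt.hasDerivWithinAt)
      (fun y hy => by
        rw [Real.norm_eq_abs]
        exact hcPmax y ⟨hy.1, hy.2.le⟩) x hx
    rw [hP0, sub_zero, Real.norm_eq_abs] at hmvt
    calc P x ≤ |P x| := le_abs_self _
    _ ≤ Cp * (x - 0) := hmvt
    _ = Cp * x := by ring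
  -- choose α
  suffices h : ∃ α : ℝ, 2 * Cp + 2 ≤ α ∧ 0 < α ∧ 1 / (2 * s * α) ≤ x₀ ∧
      γ (1 / (2 * s * α)) < α * (1 / (2 * s * α)) by
    obtain ⟨α, hα, hαpos, hXx₀, hγX⟩ := h
    set X := 1 / (2 * s * α) with hXdef
    have hX0 : 0 < X := by positivity
    have hlin := key_lemma s hs P x₀ γ hode Cp hCp hPle α hα X hXx₀ le_rfl hγX
    -- sup of γ on [X, x₀]
    have hcont2 : ContinuousOn γ (Icc X x₀) := fun y hy =>
      ((hode y ⟨lt_of_lt_of_le hX0 hy.1, hy.2⟩).continuousAt).continuousWithinAt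
    obtain ⟨c, hc, hcmax'⟩ := isCompact_Icc.exists_isMaxOn
      (nonempty_Icc.mpr hXx₀) hcont2
    rw [isMaxOn_iff] at hcmax'
    have hcmax : ∀ y ∈ Icc X x₀, γ y ≤ γ c := hcmax'
    set K := max (γ c) 1 with hKdef
    have hKpos : 0 < K := lt_of_lt_of_le one_pos (le_max_right _ _)
    refine ⟨max α (K / X), lt_of_lt_of_le (by linarith) (le_max_left _ _), ?_⟩
    intro x hx
    rcases le_or_gt x X with hxX | hxX
    · have := hlin x ⟨hx.1, hxX⟩
      have h2 : α * x ≤ max α (K / X) * x :=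
        mul_le_mul_of_nonneg_right (le_max_left _ _) hx.1.le
      linarith
    · have h1 : γ x ≤ γ c := hcmax x ⟨hxX.le, hx.2⟩
      have h2 : γ c ≤ K := le_max_left _ _
      have h3 : K ≤ K / X * x := by
        rw [div_mul_eq_mul_div, le_div_iff₀ hX0]
        exact mul_le_mul_of_nonneg_left hxX.le hKpos.le
      have h4 : K / X * x ≤ max α (K / X) * x :=
        mul_le_mul_of_nonneg_right (le_max_right _ _) hx.1.le
      linarith
  -- now construct α, by cases on s
  rcases lt_or_eq_of_le hs with hs1 | hs1
  · -- case 1 < s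
    have htend : Tendsto (fun α : ℝ => (2 * s * α) ^ (1 / s)) atTop atTop :=
      (tendsto_rpow_atTop (by positivity : (0:ℝ) < 1 / s)).comp
        (tendsto_id.const_mul_atTop (by positivity : (0:ℝ) < 2 * s))
    have hev : ∀ᶠ α : ℝ in atTop, 2 * Cp + 2 ≤ α ∧ 0 < α ∧ 1 / (2 * s * α) ≤ x₀ ∧
        γ (1 / (2 * s * α)) < α * (1 / (2 * s * α)) := by
      filter_upwards [eventually_ge_atTop (2 * Cp + 2), eventually_gt_atTop (0:ℝ),
        eventually_ge_atTop (1 / (2 * s * x₀)),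
        htend.eventually_gt_atTop (2 * s * Cb)] with α h1 h2 h3 h4
      have hXpos : 0 < 1 / (2 * s * α) := by positivity
      have hXx₀ : 1 / (2 * s * α) ≤ x₀ := by
        rw [div_le_iff₀ (by positivity)]
        rw [div_le_iff₀ (by positivity)] at h3
        nlinarith
      refine ⟨h1, h2, hXx₀, ?_⟩
      have hb := hap2 hs1 (1 / (2 * s * α)) ⟨hXpos, hXx₀⟩
      have hBpos : (0:ℝ) < (2 * s * α) ^ (1 / s) := Real.rpow_pos_of_pos (by positivity) _
      have hXr : (1 / (2 * s * α) : ℝ) ^ (1 / s) = ((2 * s * α) ^ (1 / s))⁻¹ := by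
        rw [one_div, ← Real.inv_rpow (by positivity : (0:ℝ) ≤ 2 * s * α)]
      have hrhs : α * (1 / (2 * s * α)) = 1 / (2 * s) := by
        field_simp
      have hlt : Cb * ((2 * s * α) ^ (1 / s))⁻¹ < 1 / (2 * s) := by
        rw [← div_eq_mul_inv, div_lt_div_iff₀ hBpos (by positivity : (0:ℝ) < 2 * s)]
        nlinarith
      rw [hXr] at hb
      rw [hrhs]
      linarith
    exact hev.exists
  · -- case s = 1
    have hs1' : s = 1 := hs1.symm
    have hlo := Real.isLittleO_log_id_atTop.def
      (show (0:ℝ) < 1 / (2 * (Cb + 1)) by positivity)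
    have hev : ∀ᶠ α : ℝ in atTop, 2 * Cp + 2 ≤ α ∧ 0 < α ∧ 1 / (2 * s * α) ≤ x₀ ∧
        γ (1 / (2 * s * α)) < α * (1 / (2 * s * α)) := by
      filter_upwards [eventually_ge_atTop (2 * Cp + 2), eventually_ge_atTop (1:ℝ),
        eventually_ge_atTop (1 / (2 * s * x₀)), eventually_ge_atTop (1 / (2 * s)),
        eventually_ge_atTop (2 * Cb * |Real.log (2 * s)| + 2), hlo]
        with α h1 h2 h3 h5 h6 h7
      have hαpos : (0:ℝ) < α := lt_of_lt_of_le one_pos h2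
      have hXpos : 0 < 1 / (2 * s * α) := by positivity
      have hXx₀ : 1 / (2 * s * α) ≤ x₀ := by
        rw [div_le_iff₀ (by positivity)]
        rw [div_le_iff₀ (by positivity)] at h3
        nlinarith
      refine ⟨h1, hαpos, hXx₀, ?_⟩
      have h2sα : (1:ℝ) ≤ 2 * s * α := by
        rw [div_le_iff₀ (by positivity)] at h5
        nlinarith
      have hb := hap1 hs1' (1 / (2 * s * α)) ⟨hXpos, hXx₀⟩
      have hlogX : |Real.log (1 / (2 * s * α))| = Real.log (2 * s * α) := by
        rw [one_div, Real.log_inv, abs_neg, abs_of_nonneg (Real.log_nonneg h2sα)]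
      rw [hlogX] at hb
      have hlogsplit : Real.log (2 * s * α) = Real.log (2 * s) + Real.log α :=
        Real.log_mul (by positivity) (by positivity)
      have hlogα : Real.log α ≤ 1 / (2 * (Cb + 1)) * α := by
        have h7' := h7
        rw [Real.norm_eq_abs, Real.norm_eq_abs, id_eq, abs_of_pos hαpos] at h7'
        exact le_trans (le_abs_self _) h7'
      have hkey : Cb * Real.log (2 * s * α) < α := by
        rw [hlogsplit]
        have hA : Cb * Real.log (2 * s) ≤ Cb * |Real.log (2 * s)| :=
          mul_le_mul_of_nonneg_left (le_abs_self _) hCb.le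
        have hB : Cb * Real.log α ≤ Cb * (1 / (2 * (Cb + 1)) * α) :=
          mul_le_mul_of_nonneg_left hlogα hCb.le
        have hC : Cb * (1 / (2 * (Cb + 1)) * α) ≤ α / 2 := by
          have e : Cb * (1 / (2 * (Cb + 1)) * α) = Cb / (Cb + 1) * (α / 2) := by
            field_simp
          have hd : Cb / (Cb + 1) ≤ 1 := by
            rw [div_le_one (by positivity)]; linarith
          rw [e]
          exact mul_le_of_le_one_left (by linarith : (0:ℝ) ≤ α / 2) hd
        nlinarith
      have hfin : Cb * (1 / (2 * s * α)) * Real.log (2 * s * α) <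
          α * (1 / (2 * s * α)) := by
        have := mul_lt_mul_of_pos_left hkey hXpos
        nlinarith
      linarith
    exact hev.exists
end

section
/- In the QED setting (ODE γ' = (γ+γ²−P)/(sxγ), P > 0, P(0)=0, P'(0)≠0), if γ₁ and γ₂ are two positive solutions on (0,x₀] with γᵢ(x) ≤ c·x, then |γ₁(x) − γ₂(x)| ≤ |γ₁(x₀) − γ₂(x₀)|·(x/x₀)^{1/s}·exp(C(1/x₀ − 1/x)) for all x ∈ (0,x₀] and some constant C > 0; in particular any two solutions differ by a quantity that vanishes faster than any power of x as x → 0⁺. -/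
open Set Filter Real Topology

/-- QED: two positive solutions of `γ' = (γ+γ²−P)/(sxγ)` on
`(0,x₀]`, each bounded by `c·x`, differ by at most
`|γ₁(x₀)−γ₂(x₀)|·(x/x₀)^{1/s}·exp(C(1/x₀ − 1/x))`; in particular their
difference vanishes faster than any power of `x` as `x → 0⁺`. -/
theorem qed_flat_difference
    (s : ℝ) (hs : 1 ≤ s)
    (P : ℝ → ℝ) (hP : ContDiff ℝ 2 P)
    (hP0 : P 0 = 0) (hP'0 : deriv P 0 ≠ 0)
    (hPpos : ∀ x > (0 : ℝ), 0 < P x)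
    (x₀ : ℝ) (hx₀ : 0 < x₀)
    (γ₁ γ₂ : ℝ → ℝ)
    (hode₁ : ∀ x ∈ Ioc (0 : ℝ) x₀,
      HasDerivAt γ₁ ((γ₁ x + γ₁ x ^ 2 - P x) / (s * x * γ₁ x)) x)
    (hode₂ : ∀ x ∈ Ioc (0 : ℝ) x₀,
      HasDerivAt γ₂ ((γ₂ x + γ₂ x ^ 2 - P x) / (s * x * γ₂ x)) x)
    (hpos₁ : ∀ x ∈ Ioc (0 : ℝ) x₀, 0 < γ₁ x)
    (hpos₂ : ∀ x ∈ Ioc (0 : ℝ) x₀, 0 < γ₂ x)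
    (c : ℝ) (hc : 0 < c)
    (hbd₁ : ∀ x ∈ Ioc (0 : ℝ) x₀, γ₁ x ≤ c * x)
    (hbd₂ : ∀ x ∈ Ioc (0 : ℝ) x₀, γ₂ x ≤ c * x) :
    (∃ C > (0 : ℝ), ∀ x ∈ Ioc (0 : ℝ) x₀,
      |γ₁ x - γ₂ x| ≤
        |γ₁ x₀ - γ₂ x₀| * (x / x₀) ^ (1 / s) *
          Real.exp (C * (1 / x₀ - 1 / x))) ∧
    ∀ n : ℕ, Filter.Tendsto (fun x => (γ₁ x - γ₂ x) / x ^ n)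
      (nhdsWithin 0 (Ioi 0)) (nhds 0) := by
  have hs0 : (0:ℝ) < s := lt_of_lt_of_le one_pos hs
  -- Step 1: a linear lower bound for P on (0, x₀]
  obtain ⟨m, hm, hmP⟩ : ∃ m > (0:ℝ), ∀ x ∈ Ioc (0:ℝ) x₀, m * x ≤ P x := by
    have hdP : HasDerivAt P (deriv P 0) 0 :=
      ((hP.differentiable (by norm_num)) 0).hasDerivAt
    have hslope : Tendsto (fun y => P y / y) (𝓝[>] (0:ℝ)) (𝓝 (deriv P 0)) := by
      have h1 := hasDerivAt_iff_tendsto_slope.mp hdP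
      have h2 : Tendsto (slope P 0) (𝓝[>] (0:ℝ)) (𝓝 (deriv P 0)) :=
        h1.mono_left (nhdsWithin_mono _ (fun y hy => ne_of_gt hy))
      refine h2.congr' ?_
      filter_upwards [self_mem_nhdsWithin] with y hy
      simp [slope_def_field, hP0]
    have hd0 : 0 ≤ deriv P 0 := by
      refine ge_of_tendsto hslope ?_
      filter_upwards [self_mem_nhdsWithin] with y hy
      exact (div_pos (hPpos y hy) hy).le
    have hdpos : 0 < deriv P 0 := hd0.lt_of_ne' hP'0
    have hev : ∀ᶠ y in 𝓝[>] (0:ℝ), deriv P 0 / 2 < P y / y :=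
      hslope.eventually (eventually_gt_nhds (half_lt_self hdpos))
    obtain ⟨δ, hδmem, hδbd⟩ := mem_nhdsGT_iff_exists_Ioo_subset.mp hev
    have hδ : (0:ℝ) < δ := hδmem
    set δ' := min δ x₀ with hδ'def
    have hδ' : 0 < δ' := lt_min hδ hx₀
    have hne : (Icc δ' x₀).Nonempty := ⟨δ', ⟨le_refl _, min_le_right _ _⟩⟩
    have hcontq : ContinuousOn (fun y => P y / y) (Icc δ' x₀) := by
      refine (hP.continuous.continuousOn).div continuousOn_id ?_
      intro y hy
      exact ne_of_gt (lt_of_lt_of_le hδ' hy.1)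
    obtain ⟨y₀, hy₀mem, hy₀min⟩ := isCompact_Icc.exists_isMinOn hne hcontq
    have hy₀pos : 0 < y₀ := lt_of_lt_of_le hδ' hy₀mem.1
    refine ⟨min (deriv P 0 / 2) (P y₀ / y₀),
      lt_min (half_pos hdpos) (div_pos (hPpos y₀ hy₀pos) hy₀pos), ?_⟩
    intro x hx
    rw [← le_div_iff₀ hx.1]
    rcases lt_or_ge x δ with h | h
    · exact le_trans (min_le_left _ _) (hδbd ⟨hx.1, h⟩).le
    · have hxmem : x ∈ Icc δ' x₀ := ⟨le_trans (min_le_left _ _) h, hx.2⟩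
      exact le_trans (min_le_right _ _) (hy₀min hxmem)
  set C := m / (s * c ^ 2) with hCdef
  have hC : 0 < C := div_pos hm (by positivity)
  set E : ℝ → ℝ := fun x => Real.exp (-(2/s) * Real.log x + 2*C * x⁻¹) with hEdef
  set v : ℝ → ℝ := fun x => (γ₁ x - γ₂ x)^2 * E x with hvdef
  have hEpos : ∀ x, 0 < E x := fun x => Real.exp_pos _
  -- Step 2: derivative of v
  have hvderiv : ∀ x ∈ Ioc (0:ℝ) x₀, HasDerivAt v
      (2 * (γ₁ x - γ₂ x)^2 * E x *
        (P x / (γ₁ x * γ₂ x * (s*x)) - C * (x^2)⁻¹)) x := by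
    intro x hx
    have hxpos := hx.1
    have hxne : x ≠ 0 := hxpos.ne'
    have h1 : γ₁ x ≠ 0 := (hpos₁ x hx).ne'
    have h2 : γ₂ x ≠ 0 := (hpos₂ x hx).ne'
    have hu : HasDerivAt (fun y => γ₁ y - γ₂ y)
        ((γ₁ x - γ₂ x) * ((1 + P x / (γ₁ x * γ₂ x)) / (s*x))) x := by
      have h := (hode₁ x hx).sub (hode₂ x hx)
      convert h using 1 <;> try rfl
      field_simp
      ring
    have hE : HasDerivAt E
        ((-(2/s) * x⁻¹ + 2*C * (-(x^2)⁻¹)) * E x) x := by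
      have hlog := (Real.hasDerivAt_log hxne).const_mul (-(2/s))
      have hinv := (hasDerivAt_inv hxne).const_mul (2*C)
      have := (hlog.add hinv).exp
      simpa [hEdef, mul_comm] using this
    have := (hu.pow 2).mul hE
    convert this using 1 <;> try rfl
    have hx2 : x^2 ≠ 0 := pow_ne_zero _ hxne
    simp only [Pi.pow_apply]
    field_simp
    ring
  -- Step 3: v is monotone, i.e. v x ≤ v x₀
  have hmono : ∀ x ∈ Ioc (0:ℝ) x₀, v x ≤ v x₀ := by
    intro x hx
    have hsub : Icc x x₀ ⊆ Ioc 0 x₀ := fun y hy => ⟨lt_of_lt_of_le hx.1 hy.1, hy.2⟩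
    have hsub' : interior (Icc x x₀) ⊆ Ioc 0 x₀ := by
      rw [interior_Icc]; exact fun y hy => hsub (Ioo_subset_Icc_self hy)
    have hM : MonotoneOn v (Icc x x₀) := by
      refine monotoneOn_of_deriv_nonneg (convex_Icc x x₀)
        (fun y hy => ((hvderiv y (hsub hy)).continuousAt).continuousWithinAt)
        (fun y hy => ((hvderiv y (hsub' hy)).differentiableAt).differentiableWithinAt) ?_
      intro y hy
      have hy' := hsub' hy
      rw [(hvderiv y hy').deriv]
      have hypos := hy'.1
      have hg1 : 0 < γ₁ y := hpos₁ y hy'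
      have hg2 : 0 < γ₂ y := hpos₂ y hy'
      have hkey : C * (y^2)⁻¹ ≤ P y / (γ₁ y * γ₂ y * (s*y)) := by
        rw [← div_eq_mul_inv, div_le_div_iff₀ (by positivity) (by positivity)]
        calc C * (γ₁ y * γ₂ y * (s*y)) ≤ C * ((c*y) * (c*y) * (s*y)) := by
              have hb1 := hbd₁ y hy'
              have hb2 := hbd₂ y hy'
              have : γ₁ y * γ₂ y * (s*y) ≤ (c*y) * (c*y) * (s*y) := by
                apply mul_le_mul_of_nonneg_right _ (by positivity)
                exact mul_le_mul hb1 hb2 hg2.le (by positivity)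
              exact mul_le_mul_of_nonneg_left this hC.le
          _ = (m * y) * y^2 := by
              rw [hCdef]; field_simp
          _ ≤ P y * y^2 := by
              apply mul_le_mul_of_nonneg_right (hmP y hy') (by positivity)
      have : 0 ≤ P y / (γ₁ y * γ₂ y * (s*y)) - C * (y^2)⁻¹ := sub_nonneg.mpr hkey
      positivity
    exact hM ⟨le_refl _, hx.2⟩ ⟨hx.2, le_refl _⟩ hx.2
  -- Step 4: the main bound
  have hx₀mem : x₀ ∈ Ioc (0:ℝ) x₀ := ⟨hx₀, le_refl _⟩
  have key : ∀ x ∈ Ioc (0:ℝ) x₀, |γ₁ x - γ₂ x| ≤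
      |γ₁ x₀ - γ₂ x₀| * (x / x₀) ^ (1/s) * Real.exp (C * (1/x₀ - 1/x)) := by
    intro x hx
    set R := |γ₁ x₀ - γ₂ x₀| * (x / x₀) ^ (1/s) * Real.exp (C * (1/x₀ - 1/x)) with hRdef
    have hR0 : 0 ≤ R :=
      mul_nonneg (mul_nonneg (abs_nonneg _)
        (Real.rpow_nonneg (div_pos hx.1 hx₀).le _)) (Real.exp_pos _).le
    have hexp2 : ∀ a : ℝ, (Real.exp a)^2 = Real.exp (2*a) := by
      intro a; rw [sq, ← Real.exp_add]; ring_nf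
    have h2 : R^2 * E x = (γ₁ x₀ - γ₂ x₀)^2 * E x₀ := by
      have hxx : (x / x₀) ^ (1/s) = Real.exp ((Real.log x - Real.log x₀) * (1/s)) := by
        rw [Real.rpow_def_of_pos (div_pos hx.1 hx₀), Real.log_div hx.1.ne' hx₀.ne']
      rw [hRdef, hxx]
      simp only [hEdef]
      rw [mul_pow, mul_pow, sq_abs, hexp2, hexp2, mul_assoc, mul_assoc,
        ← Real.exp_add, ← Real.exp_add]
      congr 1
      rw [Real.exp_eq_exp]
      ring
    have hsq : (γ₁ x - γ₂ x)^2 ≤ R^2 := by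
      have h1 : (γ₁ x - γ₂ x)^2 * E x ≤ (γ₁ x₀ - γ₂ x₀)^2 * E x₀ := hmono x hx
      rw [← h2] at h1
      exact le_of_mul_le_mul_right h1 (hEpos x)
    calc |γ₁ x - γ₂ x| = Real.sqrt ((γ₁ x - γ₂ x)^2) := (Real.sqrt_sq_eq_abs _).symm
      _ ≤ Real.sqrt (R^2) := Real.sqrt_le_sqrt hsq
      _ = R := Real.sqrt_sq hR0
  refine ⟨⟨C, hC, key⟩, ?_⟩
  -- Step 5: the flatness statement
  intro n
  have hT : Tendsto (fun t : ℝ => t^n * Real.exp (-(C*t))) atTop (𝓝 0) := by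
    have h0 : Tendsto (fun t : ℝ => (C*t)^n * Real.exp (-(C*t))) atTop (𝓝 0) :=
      (tendsto_pow_mul_exp_neg_atTop_nhds_zero n).comp
        (tendsto_id.const_mul_atTop hC)
    have h1 := h0.const_mul ((C^n)⁻¹)
    rw [mul_zero] at h1
    refine h1.congr (fun t => ?_)
    rw [mul_pow]
    field_simp
  have hT2 : Tendsto (fun x : ℝ => (x⁻¹)^n * Real.exp (-(C * x⁻¹)))
      (𝓝[>] (0:ℝ)) (𝓝 0) := hT.comp tendsto_inv_nhdsGT_zero
  set K := |γ₁ x₀ - γ₂ x₀| * Real.exp (C * (1/x₀)) with hKdef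
  have hK0 : 0 ≤ K := by positivity
  have hbound : ∀ᶠ x in 𝓝[>] (0:ℝ),
      ‖(γ₁ x - γ₂ x)/x^n‖ ≤ K * ((x⁻¹)^n * Real.exp (-(C*x⁻¹))) := by
    filter_upwards [Ioc_mem_nhdsGT hx₀] with x hx
    have hxpos := hx.1
    have h1 := key x hx
    have hrle : (x / x₀) ^ (1/s) ≤ 1 :=
      Real.rpow_le_one (div_pos hxpos hx₀).le
        ((div_le_one hx₀).mpr hx.2) (by positivity)
    have hexp : Real.exp (C * (1/x₀ - 1/x)) =
        Real.exp (C * (1/x₀)) * Real.exp (-(C * x⁻¹)) := by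
      rw [← Real.exp_add]; congr 1; rw [one_div]; ring
    have h2 : |γ₁ x - γ₂ x| ≤ K * Real.exp (-(C*x⁻¹)) := by
      calc |γ₁ x - γ₂ x| ≤
          |γ₁ x₀ - γ₂ x₀| * (x / x₀) ^ (1/s) * Real.exp (C * (1/x₀ - 1/x)) := h1
        _ ≤ |γ₁ x₀ - γ₂ x₀| * 1 * Real.exp (C * (1/x₀ - 1/x)) := by
            apply mul_le_mul_of_nonneg_right _ (Real.exp_pos _).le
            exact mul_le_mul_of_nonneg_left hrle (abs_nonneg _)
        _ = K * Real.exp (-(C*x⁻¹)) := by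
            rw [hKdef, mul_one, hexp]; ring
    rw [Real.norm_eq_abs, abs_div, abs_pow, abs_of_pos hxpos,
      div_le_iff₀ (by positivity)]
    calc |γ₁ x - γ₂ x| ≤ K * Real.exp (-(C*x⁻¹)) := h2
      _ = K * ((x⁻¹)^n * Real.exp (-(C*x⁻¹))) * x^n := by
          rw [inv_pow]
          field_simp
  have hKT : Tendsto (fun x : ℝ => K * ((x⁻¹)^n * Real.exp (-(C*x⁻¹))))
      (𝓝[>] (0:ℝ)) (𝓝 0) := by
    have := hT2.const_mul K
    rwa [mul_zero] at this
  exact squeeze_zero_norm' hbound hKT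
end

section
/- In the QED setting, fix an integer p ≥ 2 and let γ_{2,p}(x) = P'(0)x + Σ_{n=2}^p aₙ xⁿ be the truncated formal series solution, chosen so that the remainder R[γ_{2,p}](x) = γ_{2,p}'(x) − (γ_{2,p}+γ_{2,p}²−P)/(sxγ_{2,p}) satisfies |R[γ_{2,p}](x)| ≤ C x^{p−1} near 0. Then every solution γ₁ of the ODE with γ₁(x₀) > 0 satisfies |γ₁(x) − γ_{2,p}(x)| ≤ C_p·x^p for all x ∈ [0, x₀/2]; i.e., all solutions agree with the formal power series to every finite order at x = 0. -/
open Set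

lemma qed_key_compare (x₁ : ℝ) (hx₁ : 0 < x₁) (p : ℕ) (hp : 2 ≤ p)
    (a r w : ℝ → ℝ) (m C B K : ℝ)
    (hC : 0 < C) (hK : 0 < K)
    (hderiv : ∀ x ∈ Ioc (0:ℝ) x₁, HasDerivAt w (a x * w x - r x) x)
    (ha : ∀ x ∈ Ioc (0:ℝ) x₁, m / x^2 ≤ a x)
    (hr : ∀ x ∈ Ioc (0:ℝ) x₁, |r x| ≤ C * x^(p-1))
    (hB : ∀ x ∈ Ioc (0:ℝ) x₁, w x ≤ B)
    (hKB : B < K * x₁ ^ p)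
    (hKm : (C + p * K) * x₁ < m * K) :
    ∀ x ∈ Ioc (0:ℝ) x₁, w x ≤ K * x ^ p := by
  by_contra hcon
  push_neg at hcon
  obtain ⟨x₂, hx₂, h2⟩ := hcon
  set g : ℝ → ℝ := fun x => w x - K * x ^ p with hg
  have hgderiv : ∀ x ∈ Ioc (0:ℝ) x₁,
      HasDerivAt g (a x * w x - r x - K * (p * x ^ (p-1))) x := by
    intro x hx
    exact (hderiv x hx).sub ((hasDerivAt_pow p x).const_mul K)
  have hgcont : ∀ x ∈ Icc x₂ x₁, ContinuousAt g x := by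
    intro x hx
    exact (hgderiv x ⟨lt_of_lt_of_le hx₂.1 hx.1, hx.2⟩).continuousAt
  set T : Set ℝ := Icc x₂ x₁ ∩ {x | g x ≤ 0} with hT
  have hg2 : 0 < g x₂ := by simp only [hg]; linarith
  have hgpos : ∀ x ∈ Icc x₂ x₁, 0 < g x := by
    by_contra hcon2
    push_neg at hcon2
    obtain ⟨x₄, hx₄, h4⟩ := hcon2
    have hTne : T.Nonempty := ⟨x₄, hx₄, h4⟩
    have hTclosed : IsClosed T := by
      have hcg : ContinuousOn g (Icc x₂ x₁) := fun x hx => (hgcont x hx).continuousWithinAt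
      exact hcg.preimage_isClosed_of_isClosed isClosed_Icc isClosed_Iic
    have hTbdd : BddBelow T := BddBelow.mono inter_subset_left bddBelow_Icc
    set x₃ := sInf T with hx₃def
    have hx₃T : x₃ ∈ T := hTclosed.csInf_mem hTne hTbdd
    obtain ⟨hx₃I, hx₃g⟩ := hx₃T
    have hx₃ne : x₂ ≠ x₃ := by
      intro h; rw [← h] at hx₃g; simp only [mem_setOf_eq] at hx₃g; linarith
    have hx₃lt : x₂ < x₃ := lt_of_le_of_ne hx₃I.1 hx₃ne
    have hx₃mem : x₃ ∈ Ioc (0:ℝ) x₁ := ⟨lt_trans hx₂.1 hx₃lt, hx₃I.2⟩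
    -- g > 0 on [x₂, x₃)
    have hleft : ∀ y ∈ Ico x₂ x₃, 0 < g y := by
      intro y hy
      by_contra hgy
      push_neg at hgy
      have : y ∈ T := ⟨⟨hy.1, le_trans hy.2.le hx₃I.2⟩, hgy⟩
      have := csInf_le hTbdd this
      exact absurd this (not_le.mpr hy.2)
    -- g x₃ = 0
    have hgx₃0 : g x₃ = 0 := by
      have hten : Filter.Tendsto g (nhdsWithin x₃ (Iio x₃)) (nhds (g x₃)) :=
        ((hgcont x₃ hx₃I).continuousWithinAt).tendsto
      have hev : ∀ᶠ y in nhdsWithin x₃ (Iio x₃), 0 ≤ g y := by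
        filter_upwards [Ioo_mem_nhdsLT_of_mem ⟨hx₃lt, le_refl x₃⟩] with y hy
        exact (hleft y ⟨hy.1.le, hy.2⟩).le
      have h0 : 0 ≤ g x₃ := ge_of_tendsto hten hev
      simp only [mem_setOf_eq] at hx₃g
      linarith
    have hwx₃ : w x₃ = K * x₃ ^ p := by
      simp only [hg] at hgx₃0; linarith
    -- derivative positive at x₃
    have hx₃pos : (0:ℝ) < x₃ := hx₃mem.1
    set D := a x₃ * w x₃ - r x₃ - K * (p * x₃ ^ (p-1)) with hD
    have hDpos : 0 < D := by
      have h1 : m / x₃^2 ≤ a x₃ := ha x₃ hx₃mem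
      have h2' : |r x₃| ≤ C * x₃^(p-1) := hr x₃ hx₃mem
      have hrle : r x₃ ≤ C * x₃^(p-1) := le_trans (le_abs_self _) h2'
      have hxp : x₃ ^ p = x₃ ^ 2 * x₃ ^ (p-2) := by
        rw [← pow_add]; congr 1; omega
      have hxp1 : x₃ ^ (p-1) = x₃ ^ (p-2) * x₃ := by
        rw [← pow_succ]; congr 1; omega
      have haw : m * K * x₃ ^ (p-2) ≤ a x₃ * w x₃ := by
        rw [hwx₃, hxp]
        have : m / x₃^2 * (K * (x₃^2 * x₃^(p-2))) = m * K * x₃^(p-2) := by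
          field_simp
        rw [← this]
        apply mul_le_mul_of_nonneg_right h1
        positivity
      have hx₃le : x₃ ≤ x₁ := hx₃I.2
      have hpow2 : (0:ℝ) < x₃ ^ (p-2) := by positivity
      have hfin : (C + p * K) * x₃ ≤ (C + p * K) * x₁ := by
        apply mul_le_mul_of_nonneg_left hx₃le
        positivity
      have : r x₃ + K * (p * x₃ ^ (p-1)) ≤ (C + p*K) * x₁ * x₃^(p-2) := by
        calc r x₃ + K * (p * x₃ ^ (p-1)) ≤ C * x₃^(p-1) + K * (p * x₃^(p-1)) := by linarith
        _ = (C + p*K) * x₃ * x₃^(p-2) := by rw [hxp1]; ring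
        _ ≤ (C + p*K) * x₁ * x₃^(p-2) := by
            apply mul_le_mul_of_nonneg_right hfin hpow2.le
      have hmk : (C + p*K) * x₁ * x₃^(p-2) < m * K * x₃^(p-2) :=
        mul_lt_mul_of_pos_right hKm hpow2
      simp only [hD]
      linarith
    have hgd : HasDerivAt g D x₃ := hgderiv x₃ hx₃mem
    -- slope ≤ 0 from the left
    have hslope : Filter.Tendsto (slope g x₃) (nhdsWithin x₃ {x₃}ᶜ) (nhds D) :=
      hasDerivAt_iff_tendsto_slope.mp hgd
    have hslope' : Filter.Tendsto (slope g x₃) (nhdsWithin x₃ (Iio x₃)) (nhds D) :=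
      hslope.mono_left (nhdsWithin_mono _ (fun y hy => ne_of_lt hy))
    have hev : ∀ᶠ y in nhdsWithin x₃ (Iio x₃), slope g x₃ y ≤ 0 := by
      filter_upwards [Ioo_mem_nhdsLT_of_mem ⟨hx₃lt, le_refl x₃⟩] with y hy
      have hgy : 0 < g y := hleft y ⟨hy.1.le, hy.2⟩
      rw [slope_def_field]
      rw [hgx₃0]
      apply div_nonpos_of_nonneg_of_nonpos
      · linarith
      · linarith [hy.2]
    have : D ≤ 0 := le_of_tendsto hslope' hev
    linarith
  have h1 := hgpos x₁ ⟨hx₂.2, le_refl _⟩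
  have hBx₁ := hB x₁ ⟨hx₁, le_refl _⟩
  simp only [hg] at h1
  linarith

/-- QED: every solution agrees with the truncated formal power
series solution `γ_{2,p}(x) = P'(0)x + Σ_{n=2}^p aₙxⁿ` (whose remainder
satisfies `|R[γ_{2,p}](x)| ≤ C x^{p−1}`) to order `p`:
`|γ₁ x − γ_{2,p} x| ≤ C_p·x^p` for `x ∈ (0, x₀/2]`. -/
theorem qed_all_orders_agreement
    (s : ℝ) (hs : 1 ≤ s)
    (P : ℝ → ℝ) (hP : ContDiff ℝ 2 P)
    (hP0 : P 0 = 0) (hP'0 : deriv P 0 ≠ 0)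
    (hPpos : ∀ x > (0 : ℝ), 0 < P x)
    (x₀ : ℝ) (hx₀ : 0 < x₀)
    (p : ℕ) (hp : 2 ≤ p) (a : ℕ → ℝ)
    (γ2p : ℝ → ℝ)
    (hγ2p : γ2p = fun x => deriv P 0 * x + ∑ n ∈ Finset.Icc 2 p, a n * x ^ n)
    (hγ2ppos : ∀ x ∈ Ioc (0 : ℝ) x₀, 0 < γ2p x)
    (hrem : ∃ C > (0 : ℝ), ∀ x ∈ Ioc (0 : ℝ) x₀,
      |deriv γ2p x - (γ2p x + γ2p x ^ 2 - P x) / (s * x * γ2p x)|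
        ≤ C * x ^ (p - 1))
    (γ₁ : ℝ → ℝ)
    (hode : ∀ x ∈ Ioc (0 : ℝ) x₀,
      HasDerivAt γ₁ ((γ₁ x + γ₁ x ^ 2 - P x) / (s * x * γ₁ x)) x)
    (hpos : ∀ x ∈ Ioc (0 : ℝ) x₀, 0 < γ₁ x)
    (hlin : ∃ c > (0 : ℝ), ∀ x ∈ Ioc (0 : ℝ) x₀, γ₁ x ≤ c * x) :
    ∃ Cp > (0 : ℝ), ∀ x ∈ Ioc (0 : ℝ) (x₀ / 2),
      |γ₁ x - γ2p x| ≤ Cp * x ^ p := by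
  have hspos : (0:ℝ) < s := lt_of_lt_of_le one_pos hs
  obtain ⟨c, hc, hγ1le⟩ := hlin
  obtain ⟨C, hC, hR⟩ := hrem
  -- d := deriv P 0 > 0
  have hPdiff : DifferentiableAt ℝ P 0 :=
    (hP.differentiable (by norm_num)).differentiableAt
  have hdP : HasDerivAt P (deriv P 0) 0 := hPdiff.hasDerivAt
  have hslP : Filter.Tendsto (slope P 0) (nhdsWithin 0 {(0:ℝ)}ᶜ) (nhds (deriv P 0)) :=
    hasDerivAt_iff_tendsto_slope.mp hdP
  have hslP' : Filter.Tendsto (slope P 0) (nhdsWithin 0 (Ioi 0)) (nhds (deriv P 0)) :=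
    hslP.mono_left (nhdsWithin_mono _ (fun y hy => ne_of_gt hy))
  have hd0 : 0 < deriv P 0 := by
    have hge : 0 ≤ deriv P 0 := by
      refine ge_of_tendsto hslP' ?_
      filter_upwards [self_mem_nhdsWithin] with y hy
      have h1 := hPpos y hy
      rw [slope_def_field, hP0, sub_zero, sub_zero]
      exact div_nonneg h1.le (le_of_lt (mem_Ioi.mp hy))
    exact lt_of_le_of_ne hge (Ne.symm hP'0)
  -- lower bound c₁ for P
  obtain ⟨c₁, hc₁pos, hPlow⟩ :
      ∃ c₁ > (0:ℝ), ∀ x ∈ Ioc (0:ℝ) x₀, c₁ * x ≤ P x := by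
    have hFev : {y | deriv P 0 / 2 < slope P 0 y} ∈ nhdsWithin (0:ℝ) (Ioi 0) :=
      hslP' (eventually_gt_nhds (by linarith))
    rw [mem_nhdsGT_iff_exists_Ioc_subset] at hFev
    obtain ⟨δ, hδ, hδsub⟩ := hFev
    have hδpos : (0:ℝ) < δ := hδ
    have hsmall : ∀ x ∈ Ioc (0:ℝ) δ, deriv P 0 / 2 * x ≤ P x := by
      intro x hx
      have h1 := hδsub hx
      simp only [mem_setOf_eq, slope_def_field, hP0, sub_zero] at h1
      have hxpos := hx.1
      have := (lt_div_iff₀ hxpos).mp h1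
      linarith
    have hδ'pos : 0 < min δ x₀ := lt_min hδpos hx₀
    have hδ'le : min δ x₀ ≤ x₀ := min_le_right _ _
    obtain ⟨z, hz, hzmin⟩ := isCompact_Icc.exists_isMinOn
      (⟨min δ x₀, le_refl _, hδ'le⟩ : (Icc (min δ x₀) x₀).Nonempty)
      (hP.continuous.continuousOn)
    have hPz : 0 < P z := hPpos z (lt_of_lt_of_le hδ'pos hz.1)
    refine ⟨min (deriv P 0 / 2) (P z / x₀), lt_min (by linarith) (by positivity), ?_⟩
    intro x hx
    by_cases hcase : x ≤ min δ x₀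
    · have h1 := hsmall x ⟨hx.1, le_trans hcase (min_le_left _ _)⟩
      have h2 : min (deriv P 0 / 2) (P z / x₀) * x ≤ deriv P 0 / 2 * x :=
        mul_le_mul_of_nonneg_right (min_le_left _ _) hx.1.le
      linarith
    · push_neg at hcase
      have h1 : P z ≤ P x := hzmin ⟨hcase.le, hx.2⟩
      have h2 : min (deriv P 0 / 2) (P z / x₀) * x ≤ (P z / x₀) * x :=
        mul_le_mul_of_nonneg_right (min_le_right _ _) hx.1.le
      have h3 : (P z / x₀) * x ≤ P z := by
        rw [div_mul_eq_mul_div, div_le_iff₀ hx₀]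
        exact mul_le_mul_of_nonneg_left hx.2 hPz.le
      linarith
  -- upper bound c' for γ2p
  obtain ⟨c', hc'pos, hγ2ple⟩ :
      ∃ c' > (0:ℝ), ∀ x ∈ Ioc (0:ℝ) x₀, γ2p x ≤ c' * x := by
    refine ⟨|deriv P 0| + (∑ n ∈ Finset.Icc 2 p, |a n| * x₀ ^ (n-1)) + 1, ?_, ?_⟩
    · have h2 : (0:ℝ) ≤ ∑ n ∈ Finset.Icc 2 p, |a n| * x₀ ^ (n-1) :=
        Finset.sum_nonneg fun n _ => by positivity
      have := abs_nonneg (deriv P 0)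
      linarith
    intro x hx
    have hxpos := hx.1
    have hsum : ∑ n ∈ Finset.Icc 2 p, a n * x ^ n
        ≤ ∑ n ∈ Finset.Icc 2 p, |a n| * x₀ ^ (n-1) * x := by
      apply Finset.sum_le_sum
      intro n hn
      have hn1 : 1 ≤ n := le_trans (by norm_num) (Finset.mem_Icc.mp hn).1
      have hxn : x ^ n = x ^ (n-1) * x := by
        rw [← pow_succ]; congr 1; omega
      have hpow : x ^ (n-1) ≤ x₀ ^ (n-1) := pow_le_pow_left₀ hxpos.le hx.2 _
      calc a n * x ^ n ≤ |a n| * x ^ n :=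
            mul_le_mul_of_nonneg_right (le_abs_self _) (by positivity)
        _ ≤ |a n| * (x₀ ^ (n-1) * x) := by
            rw [hxn]
            exact mul_le_mul_of_nonneg_left
              (mul_le_mul_of_nonneg_right hpow hxpos.le) (abs_nonneg _)
        _ = |a n| * x₀ ^ (n-1) * x := by ring
    rw [hγ2p]
    simp only
    rw [← Finset.sum_mul] at hsum
    have hdx : deriv P 0 * x ≤ |deriv P 0| * x :=
      mul_le_mul_of_nonneg_right (le_abs_self _) hxpos.le
    nlinarith
  -- differentiability of γ2p
  have hγ2pdiff : ∀ x : ℝ, HasDerivAt γ2p (deriv γ2p x) x := by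
    have hD : Differentiable ℝ γ2p := by
      rw [hγ2p]
      apply Differentiable.add
      · exact differentiable_id.const_mul _
      · apply Differentiable.fun_sum
        intro n _
        exact (differentiable_pow n).const_mul _
    exact fun x => (hD x).hasDerivAt
  -- u, A, R
  set u : ℝ → ℝ := fun x => γ₁ x - γ2p x with hu
  set A : ℝ → ℝ := fun x => (γ₁ x * γ2p x + P x) / (s * x * (γ₁ x * γ2p x)) with hA
  set R : ℝ → ℝ := fun x => deriv γ2p x - (γ2p x + γ2p x ^ 2 - P x) / (s * x * γ2p x) with hRdef
  have hude : ∀ x ∈ Ioc (0:ℝ) x₀, HasDerivAt u (A x * u x - R x) x := by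
    intro x hx
    have h := (hode x hx).sub (hγ2pdiff x)
    convert h using 1 <;> try rfl
    have hxne : x ≠ 0 := ne_of_gt hx.1
    have hsne : s ≠ 0 := ne_of_gt hspos
    have hγ1ne : γ₁ x ≠ 0 := ne_of_gt (hpos x hx)
    have hγ2ne : γ2p x ≠ 0 := ne_of_gt (hγ2ppos x hx)
    simp only [hA, hu, hRdef]
    field_simp
    ring
  -- lower bound on A
  obtain ⟨m, hmpos, hAlow⟩ :
      ∃ m > (0:ℝ), ∀ x ∈ Ioc (0:ℝ) x₀, m / x^2 ≤ A x := by
    refine ⟨c₁ / (s * c * c'), by positivity, ?_⟩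
    intro x hx
    have hxpos := hx.1
    have hγ1pos := hpos x hx
    have hγ2pos := hγ2ppos x hx
    have hG : 0 < γ₁ x * γ2p x := mul_pos hγ1pos hγ2pos
    have hsplit : A x = 1 / (s * x) + P x / (s * x * (γ₁ x * γ2p x)) := by
      simp only [hA]
      field_simp
    have h1 : (0:ℝ) ≤ 1 / (s * x) := by positivity
    have h2 : c₁ / (s * c * c') / x^2 ≤ P x / (s * x * (γ₁ x * γ2p x)) := by
      have heq : c₁ / (s * c * c') / x^2 = (c₁ * x) / (s * x * (c * x * (c' * x))) := by
        field_simp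
      rw [heq]
      refine div_le_div₀ (hPpos x hxpos).le (hPlow x hx) (by positivity) ?_
      have hmul : γ₁ x * γ2p x ≤ c * x * (c' * x) :=
        mul_le_mul (hγ1le x hx) (hγ2ple x hx) hγ2pos.le (by positivity)
      exact mul_le_mul_of_nonneg_left hmul (by positivity)
    rw [hsplit]
    linarith
  -- bound B
  obtain ⟨B, hBpos, hub⟩ :
      ∃ B > (0:ℝ), ∀ x ∈ Ioc (0:ℝ) x₀, u x ≤ B ∧ -u x ≤ B := by
    refine ⟨c * x₀ + c' * x₀, by positivity, ?_⟩
    intro x hx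
    have h1 := hγ1le x hx
    have h2 := hγ2ple x hx
    have h3 := hpos x hx
    have h4 := hγ2ppos x hx
    have hcx : c * x ≤ c * x₀ := mul_le_mul_of_nonneg_left hx.2 hc.le
    have hc'x : c' * x ≤ c' * x₀ := mul_le_mul_of_nonneg_left hx.2 hc'pos.le
    constructor
    · simp only [hu]; nlinarith
    · simp only [hu]; nlinarith
  -- choose x₁
  obtain ⟨x₁, hx₁pos, hx₁half, hx₁m⟩ :
      ∃ x₁ : ℝ, 0 < x₁ ∧ x₁ ≤ x₀/2 ∧ 2*(p+1)*x₁ ≤ m := by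
    refine ⟨min (x₀/2) (m / (2*(p+1))), lt_min (by linarith) (by positivity),
      min_le_left _ _, ?_⟩
    have h2 : min (x₀/2) (m / (2*(p+1))) ≤ m / (2*(p+1)) := min_le_right _ _
    have hden : (0:ℝ) < 2*(p+1) := by positivity
    rw [le_div_iff₀ hden] at h2
    linarith
  have hx₁x₀ : x₁ ≤ x₀ := by linarith
  -- choose K
  obtain ⟨K, hKpos, hCK, hKB⟩ :
      ∃ K : ℝ, 0 < K ∧ C < K ∧ B < K * x₁ ^ p := by
    refine ⟨max C (B / x₁ ^ p) + 1, ?_, ?_, ?_⟩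
    · have := le_max_left C (B / x₁ ^ p); linarith
    · have := le_max_left C (B / x₁ ^ p); linarith
    · have h1 : B / x₁ ^ p < max C (B / x₁ ^ p) + 1 :=
        lt_of_le_of_lt (le_max_right C _) (by linarith)
      have hx₁p : (0:ℝ) < x₁ ^ p := by positivity
      calc B = (B / x₁ ^ p) * x₁ ^ p := by field_simp
        _ < (max C (B / x₁ ^ p) + 1) * x₁ ^ p := mul_lt_mul_of_pos_right h1 hx₁p
  have hKm : (C + p * K) * x₁ < m * K := by
    have hp0 : (0:ℝ) ≤ p := Nat.cast_nonneg p
    have h3 : (C + p * K) * x₁ < (1 + p) * K * x₁ := by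
      apply mul_lt_mul_of_pos_right _ hx₁pos
      linarith
    have h4' := mul_le_mul_of_nonneg_right hx₁m hKpos.le
    have hmK : 0 < m * K := mul_pos hmpos hKpos
    nlinarith
  -- restrict hypotheses to Ioc 0 x₁
  have hsub : Ioc (0:ℝ) x₁ ⊆ Ioc 0 x₀ := Ioc_subset_Ioc (le_refl _) hx₁x₀
  have hbound1 : ∀ x ∈ Ioc (0:ℝ) x₁, u x ≤ K * x ^ p :=
    qed_key_compare x₁ hx₁pos p hp A R u m C B K hC hKpos
      (fun x hx => hude x (hsub hx)) (fun x hx => hAlow x (hsub hx))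
      (fun x hx => hR x (hsub hx)) (fun x hx => (hub x (hsub hx)).1) hKB hKm
  have hbound2 : ∀ x ∈ Ioc (0:ℝ) x₁, -u x ≤ K * x ^ p := by
    apply qed_key_compare x₁ hx₁pos p hp A (fun x => -R x) (fun x => -u x) m C B K hC hKpos
      ?_ (fun x hx => hAlow x (hsub hx))
      (fun x hx => by rw [abs_neg]; exact hR x (hsub hx))
      (fun x hx => (hub x (hsub hx)).2) hKB hKm
    intro x hx
    have h := (hude x (hsub hx)).neg
    convert h using 1 <;> try rfl
    ring
  -- conclude
  refine ⟨K, hKpos, ?_⟩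
  intro x hx
  have hxpos := hx.1
  have hxx₀ : x ∈ Ioc (0:ℝ) x₀ := ⟨hxpos, by linarith [hx.2]⟩
  have hgoal : |u x| ≤ K * x ^ p := by
    by_cases hcase : x ≤ x₁
    · have h1 := hbound1 x ⟨hxpos, hcase⟩
      have h2 := hbound2 x ⟨hxpos, hcase⟩
      rw [abs_le]
      exact ⟨by linarith, h1⟩
    · push_neg at hcase
      have hBu := hub x hxx₀
      have hKx : K * x₁ ^ p ≤ K * x ^ p := by
        apply mul_le_mul_of_nonneg_left _ hKpos.le
        exact pow_le_pow_left₀ hx₁pos.le hcase.le p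
      rw [abs_le]
      exact ⟨by linarith [hBu.2], by linarith [hBu.1]⟩
  exact hgoal
end

section
/- Let γ₁ be a solution of γ' = (γ+γ²−P)/(xγ) on (0,x*] with γ₁ < 0, lim_{x→0⁺}γ₁(x) = −1, P(0)=0, P'(0)<0 and P twice differentiable with bounded P'' near 0 (so P(x) = P'(0)x + O(x²)). If γ₁ is bounded between min(−1,γ₁(x₀)) and γ_c⁺(x₀) < 0 on (0,x₀], then γ₁(x) = −1 + O(x·(1+|ln x|)) as x → 0⁺, using the integral representation γ₁(x) = x(1+γ₁(x₀))/x₀ − 1 − x∫_{x₀}^x P(z)/(z²γ₁(z)) dz. -/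
open Set Filter

set_option maxHeartbeats 1600000 in
/-- a negative solution on `(0,x₀]` tending to `−1` at `0⁺`,
bounded between `min(−1, γ₁(x₀))` and `γ_c⁺(x₀) < 0`, approaches `−1` at the
rate `γ₁ x = −1 + O(x·(1+|ln x|))` as `x → 0⁺`, given
`P x = P'(0)x + O(x²)` near `0` (P twice differentiable, `P(0)=0`, `P'(0)<0`,
bounded second derivative near 0). -/
theorem qcd_minus_one_rate
    (P : ℝ → ℝ) (xstar x₀ : ℝ) (hx₀ : 0 < x₀) (hx₀star : x₀ ≤ xstar)
    (hP0 : P 0 = 0) (hP'0 : deriv P 0 < 0)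
    (hPquad : ∃ C > (0 : ℝ), ∃ ε > (0 : ℝ), ∀ x ∈ Icc (0 : ℝ) ε,
      |P x - deriv P 0 * x| ≤ C * x ^ 2)
    (γ₁ : ℝ → ℝ)
    (hode : ∀ x ∈ Ioc (0 : ℝ) x₀,
      HasDerivAt γ₁ ((γ₁ x + γ₁ x ^ 2 - P x) / (x * γ₁ x)) x)
    (hneg : ∀ x ∈ Ioc (0 : ℝ) x₀, γ₁ x < 0)
    (hgcneg : (Real.sqrt (1 + 4 * P x₀) - 1) / 2 < 0)
    (hbound : ∀ x ∈ Ioc (0 : ℝ) x₀,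
      min (-1) (γ₁ x₀) ≤ γ₁ x ∧ γ₁ x ≤ (Real.sqrt (1 + 4 * P x₀) - 1) / 2)
    (hlim : Tendsto γ₁ (nhdsWithin 0 (Ioi 0)) (nhds (-1))) :
    ∃ C > (0 : ℝ), ∃ δ > (0 : ℝ), ∀ x ∈ Ioc (0 : ℝ) (min δ x₀),
      |γ₁ x - (-1)| ≤ C * x * (1 + |Real.log x|) := by
  classical
  obtain ⟨C₀, hC₀, ε, hε, hPq⟩ := hPquad
  set gc : ℝ := (Real.sqrt (1 + 4 * P x₀) - 1) / 2 with hgcdef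
  set m : ℝ := -gc with hmdef
  have hmpos : 0 < m := by simp only [hmdef]; linarith
  set K : ℝ := |deriv P 0| + C₀ * ε with hKdef
  have hKpos : 0 < K := by positivity
  set A : ℝ := K / m with hAdef
  have hApos : 0 < A := by positivity
  set δ : ℝ := min ε 1 with hδdef
  have hδpos : 0 < δ := by positivity
  set δ' : ℝ := min δ x₀ with hδ'def
  have hδ'pos : 0 < δ' := lt_min hδpos hx₀
  have hδ'ε : δ' ≤ ε := le_trans (min_le_left _ _) (min_le_left _ _)
  have hδ'1 : δ' ≤ 1 := le_trans (min_le_left _ _) (min_le_right _ _)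
  have hδ'x₀ : δ' ≤ x₀ := min_le_right _ _
  -- bound on P
  have hPb : ∀ z ∈ Ioc (0:ℝ) δ', |P z| ≤ K * z := by
    intro z hz
    have hz0 : 0 < z := hz.1
    have hzε : z ≤ ε := hz.2.trans hδ'ε
    have h1 := hPq z ⟨hz0.le, hzε⟩
    have h2 : |P z| ≤ |P z - deriv P 0 * z| + |deriv P 0 * z| := by
      calc |P z| = |(P z - deriv P 0 * z) + deriv P 0 * z| := by ring_nf
        _ ≤ _ := abs_add_le _ _
    have h3 : |deriv P 0 * z| = |deriv P 0| * z := by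
      rw [abs_mul, abs_of_pos hz0]
    have h4 : C₀ * z ^ 2 ≤ C₀ * ε * z := by
      have hzz : z * z ≤ ε * z := mul_le_mul_of_nonneg_right hzε hz0.le
      nlinarith
    rw [hKdef]; nlinarith [h1, h2, h3]
  -- γ₁ bounded away from 0
  have hγm : ∀ z ∈ Ioc (0:ℝ) x₀, γ₁ z ≤ -m := by
    intro z hz
    have := (hbound z hz).2
    simp only [hmdef, neg_neg]
    exact this
  have hγne : ∀ z ∈ Ioc (0:ℝ) x₀, γ₁ z ≠ 0 := fun z hz => (hneg z hz).ne
  -- derivative of f = (γ₁ + 1)/t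
  have hf : ∀ z ∈ Ioc (0:ℝ) x₀,
      HasDerivAt (fun t => (γ₁ t + 1) / t) (-(P z) / (z ^ 2 * γ₁ z)) z := by
    intro z hz
    have hz0 : z ≠ 0 := hz.1.ne'
    have hγ0 : γ₁ z ≠ 0 := hγne z hz
    have h1 : HasDerivAt (fun t => γ₁ t + 1)
        ((γ₁ z + γ₁ z ^ 2 - P z) / (z * γ₁ z)) z := (hode z hz).add_const 1
    have h2 : HasDerivAt (fun t : ℝ => t) 1 z := hasDerivAt_id z
    have h3 : HasDerivAt (fun t => (γ₁ t + 1) / t) _ z := h1.div h2 hz0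
    convert h3 using 1
    field_simp
    ring
  -- ratio bound
  have hratio : ∀ z ∈ Ioc (0:ℝ) δ', |P z / (z * γ₁ z)| ≤ A := by
    intro z hz
    have hz0 : 0 < z := hz.1
    have hzx : z ∈ Ioc (0:ℝ) x₀ := ⟨hz0, hz.2.trans hδ'x₀⟩
    have hγ : γ₁ z ≤ -m := hγm z hzx
    have habsγ : m ≤ |γ₁ z| := by
      rw [abs_of_neg (hneg z hzx)]; linarith
    have hP : |P z| ≤ K * z := hPb z hz
    have hden : 0 < z * m := by positivity
    have heq : |P z / (z * γ₁ z)| = |P z| / (z * |γ₁ z|) := by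
      rw [abs_div, abs_mul, abs_of_pos hz0]
    rw [heq]
    calc |P z| / (z * |γ₁ z|) ≤ (K * z) / (z * m) := by
          apply div_le_div₀ (by positivity) hP hden
          exact mul_le_mul_of_nonneg_left habsγ hz0.le
      _ = A := by rw [hAdef]; field_simp
  clear hgcdef hmdef hKdef hAdef hδdef hPq
  clear_value gc m K A δ δ'
  -- main bound on |f x| for x ∈ Ioc 0 δ'
  have key : ∀ x ∈ Ioc (0:ℝ) δ',
      |(γ₁ x + 1) / x| ≤ |(γ₁ δ' + 1) / δ'| + A * |Real.log x| := by
    intro x hx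
    have hx0 : 0 < x := hx.1
    have hxδ' : x ≤ δ' := hx.2
    have hsub : Icc x δ' ⊆ Ioc (0:ℝ) δ' := fun z hz => ⟨lt_of_lt_of_le hx0 hz.1, hz.2⟩
    have hsubx₀ : Icc x δ' ⊆ Ioc (0:ℝ) x₀ := fun z hz =>
      ⟨lt_of_lt_of_le hx0 hz.1, hz.2.trans hδ'x₀⟩
    -- g = f + A log increasing
    have hg : ∀ z ∈ Icc x δ',
        HasDerivAt (fun t => (γ₁ t + 1) / t + A * Real.log t)
        (-(P z) / (z ^ 2 * γ₁ z) + A * z⁻¹) z := by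
      intro z hz
      exact (hf z (hsubx₀ hz)).add ((Real.hasDerivAt_log (hsub hz).1.ne').const_mul A)
    have hgmono : MonotoneOn (fun t => (γ₁ t + 1) / t + A * Real.log t) (Icc x δ') := by
      apply monotoneOn_of_deriv_nonneg (convex_Icc x δ')
      · exact fun z hz => (hg z hz).continuousAt.continuousWithinAt
      · intro z hz
        rw [interior_Icc] at hz
        exact (hg z (Ioo_subset_Icc_self hz)).differentiableAt.differentiableWithinAt
      · intro z hz
        rw [interior_Icc] at hz
        rw [(hg z (Ioo_subset_Icc_self hz)).deriv]
        have hz' := Ioo_subset_Icc_self hz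
        have hz0 : 0 < z := (hsub hz').1
        have hr : P z / (z * γ₁ z) ≤ A := le_of_abs_le (hratio z (hsub hz'))
        have heq : -(P z) / (z ^ 2 * γ₁ z) + A * z⁻¹
            = (A - P z / (z * γ₁ z)) / z := by
          have hγ0 : γ₁ z ≠ 0 := hγne z (hsubx₀ hz')
          field_simp
          ring
        rw [heq]
        exact div_nonneg (by linarith) hz0.le
    -- h = f - A log decreasing
    have hh : ∀ z ∈ Icc x δ',
        HasDerivAt (fun t => (γ₁ t + 1) / t - A * Real.log t)
        (-(P z) / (z ^ 2 * γ₁ z) - A * z⁻¹) z := by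
      intro z hz
      exact (hf z (hsubx₀ hz)).sub ((Real.hasDerivAt_log (hsub hz).1.ne').const_mul A)
    have hhanti : AntitoneOn (fun t => (γ₁ t + 1) / t - A * Real.log t) (Icc x δ') := by
      apply antitoneOn_of_deriv_nonpos (convex_Icc x δ')
      · exact fun z hz => (hh z hz).continuousAt.continuousWithinAt
      · intro z hz
        rw [interior_Icc] at hz
        exact (hh z (Ioo_subset_Icc_self hz)).differentiableAt.differentiableWithinAt
      · intro z hz
        rw [interior_Icc] at hz
        rw [(hh z (Ioo_subset_Icc_self hz)).deriv]
        have hz' := Ioo_subset_Icc_self hz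
        have hz0 : 0 < z := (hsub hz').1
        have hr : -A ≤ P z / (z * γ₁ z) := neg_le_of_abs_le (hratio z (hsub hz'))
        have heq : -(P z) / (z ^ 2 * γ₁ z) - A * z⁻¹
            = -((A + P z / (z * γ₁ z)) / z) := by
          have hγ0 : γ₁ z ≠ 0 := hγne z (hsubx₀ hz')
          field_simp
          ring
        rw [heq]
        exact neg_nonpos_of_nonneg (div_nonneg (by linarith) hz0.le)
    have hxmem : x ∈ Icc x δ' := ⟨le_refl x, hxδ'⟩
    have hδ'mem : δ' ∈ Icc x δ' := ⟨hxδ', le_refl δ'⟩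
    have h1 : (γ₁ x + 1) / x + A * Real.log x ≤ (γ₁ δ' + 1) / δ' + A * Real.log δ' :=
      hgmono hxmem hδ'mem hxδ'
    have h2 : (γ₁ δ' + 1) / δ' - A * Real.log δ' ≤ (γ₁ x + 1) / x - A * Real.log x :=
      hhanti hxmem hδ'mem hxδ'
    have hlogx : Real.log x ≤ 0 := Real.log_nonpos hx0.le (hxδ'.trans hδ'1)
    have hlogδ' : Real.log δ' ≤ 0 := Real.log_nonpos hδ'pos.le hδ'1
    have habslogx : |Real.log x| = -Real.log x := abs_of_nonpos hlogx
    rw [abs_le]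
    constructor
    · have hfδ' : -|(γ₁ δ' + 1) / δ'| ≤ (γ₁ δ' + 1) / δ' := neg_abs_le _
      nlinarith [abs_nonneg ((γ₁ δ' + 1) / δ'), mul_nonpos_of_nonneg_of_nonpos hApos.le hlogδ']
    · have hfδ' : (γ₁ δ' + 1) / δ' ≤ |(γ₁ δ' + 1) / δ'| := le_abs_self _
      nlinarith [mul_nonpos_of_nonneg_of_nonpos hApos.le hlogδ']
  -- conclude
  obtain ⟨B, hB, hBdef⟩ : ∃ B, 0 ≤ B ∧ B = |(γ₁ δ' + 1) / δ'| :=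
    ⟨_, abs_nonneg _, rfl⟩
  rw [← hBdef] at key
  refine ⟨B + A + 1, by positivity, δ, hδpos, ?_⟩
  intro x hx
  rw [← hδ'def] at hx
  have hx0 : 0 < x := hx.1
  have hkey := key x hx
  have heq : |(γ₁ x + 1) / x| = |γ₁ x + 1| / x := by
    rw [abs_div, abs_of_pos hx0]
  rw [heq, div_le_iff₀ hx0] at hkey
  have hL : 0 ≤ |Real.log x| := abs_nonneg _
  have : |γ₁ x - (-1)| = |γ₁ x + 1| := by ring_nf
  rw [this]
  calc |γ₁ x + 1| ≤ (B + A * |Real.log x|) * x := hkey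
    _ ≤ (B + A + 1) * x * (1 + |Real.log x|) := by
        have h5 : B + A * |Real.log x| ≤ (B + A + 1) * (1 + |Real.log x|) := by nlinarith
        calc (B + A * |Real.log x|) * x ≤ ((B + A + 1) * (1 + |Real.log x|)) * x :=
              mul_le_mul_of_nonneg_right h5 hx0.le
          _ = (B + A + 1) * x * (1 + |Real.log x|) := by ring
end
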